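/- arXiv:0912.0506 — 7 statements merged into one kernel-verified Lean document; each statement's English description precedes it below -/
import Mathlib

section
/- Let M be a non-zero bi-nilpotent Dieudonné module over k which is generated by an element z ∈ M, with d = dim_k(M/FM) and c = dim_k(M/VM). Then there exist elements a_0, …, a_c and b_1, …, b_d of W such that a_0 and b_d are units in W, a_i ∈ pW for 1 ≤ i ≤ c, b_i ∈ pW for 1 ≤ i ≤ d−1, and Σ_{i=0}^{c} a_i·F^{c−i}z + Σ_{i=1}^{d} b_i·V^i z = 0 in M. -/
noncomputable section

namespace DieudonneStmt

theorem sum_Icc_one {A : Type*} [AddCommMonoid A] (f : ℕ → A) (n : ℕ) :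
    ∑ i ∈ Finset.Icc 1 n, f i = ∑ j ∈ Finset.range n, f (j + 1) := by
  induction n with
  | zero => simp
  | succ n ih =>
      rw [Finset.sum_range_succ, ← ih, Finset.sum_Icc_succ_top (by omega)]

section Helpers

variable (p : ℕ) [Fact p.Prime] (k : Type*) [Field k] [CharP k p] [PerfectRing k p]

local notation "W" => WittVector p k

instance : IsDiscreteValuationRing W := WittVector.isDiscreteValuationRing

theorem span_p_eq_maximalIdeal :
    Ideal.span {(p : W)} = IsLocalRing.maximalIdeal W :=
  ((IsDiscreteValuationRing.irreducible_iff_uniformizer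
    ((p : W))).mp (WittVector.irreducible p)).symm

variable {p k}
variable {M : Type*} [AddCommGroup M] [Module (WittVector p k) M]

theorem aux
    [Module.Free W M] [Module.Finite W M] [Nontrivial M]
    (e : W ≃+* W)
    (F V : M → M)
    (hFadd : ∀ x y, F (x + y) = F x + F y)
    (hVadd : ∀ x y, V (x + y) = V x + V y)
    (hFsmul : ∀ (a : W) (x : M), F (a • x) = e a • F x)
    (hVsmul : ∀ (a : W) (x : M), V (a • x) = e.symm a • V x)
    (hFV : ∀ x, F (V x) = (p : W) • x)
    (hVF : ∀ x, V (F x) = (p : W) • x)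
    (hVnil : ∃ n : ℕ, ∀ x : M, ∃ y : M, V^[n] x = (p : W) • y)
    (z : M)
    (hz : ∀ P : Submodule W M,
      z ∈ P → (∀ x ∈ P, F x ∈ P) → (∀ x ∈ P, V x ∈ P) → P = ⊤)
    (c : ℕ)
    (hc : IsLeast {n : ℕ | ∃ x : Fin n → M,
      Submodule.span W (Set.range V) ⊔ Submodule.span W (Set.range x) = ⊤} c)
    (hex : ∃ n, F^[n] z ∈ Submodule.span W (Set.range V)) :
    1 ≤ c ∧ F^[c] z ∈ Submodule.span W (Set.range V) ∧
    (∀ i < c, F^[i] z ∉ Submodule.span W (Set.range V)) ∧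
    (Submodule.span W (Set.range V) ⊔
      Submodule.span W (Set.range fun i : Fin c => F^[i] z) = ⊤) ∧
    (∀ a : ℕ → W, (∑ i ∈ Finset.range c, a i • F^[i] z) ∈ Submodule.span W (Set.range V) →
      ∀ i < c, a i ∈ Ideal.span {(p : W)}) := by
  classical
  set I : Ideal W := Ideal.span {(p : W)} with hIdef
  have hImax : I = IsLocalRing.maximalIdeal W := span_p_eq_maximalIdeal p k
  have hmemI_of_not_unit : ∀ w : W, ¬IsUnit w → w ∈ I := by
    intro w hw
    have h5 : w ∈ IsLocalRing.maximalIdeal W :=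
      (IsLocalRing.mem_maximalIdeal _).mpr (mem_nonunits_iff.mpr hw)
    rwa [← hImax] at h5
  have hunit_of_not_memI : ∀ w : W, w ∉ I → IsUnit w := by
    intro w hw
    by_contra hbad
    exact hw (hmemI_of_not_unit w hbad)
  haveI : RingHomSurjective (e.toRingHom) := ⟨e.surjective⟩
  haveI : RingHomSurjective (e.symm.toRingHom) := ⟨e.symm.surjective⟩
  set Fl : M →ₛₗ[e.toRingHom] M :=
    { toFun := F, map_add' := hFadd, map_smul' := hFsmul } with hFldef
  set Vl : M →ₛₗ[e.symm.toRingHom] M :=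
    { toFun := V, map_add' := hVadd, map_smul' := hVsmul } with hVldef
  set VM : Submodule W M := Submodule.span W (Set.range V) with hVMdef
  have hVM_range : VM = LinearMap.range Vl := by
    apply le_antisymm
    · rw [hVMdef, Submodule.span_le]; rintro _ ⟨x, rfl⟩; exact ⟨x, rfl⟩
    · rintro x ⟨y, rfl⟩; exact Submodule.subset_span ⟨y, rfl⟩
  -- basic membership facts
  have hpVM : ∀ y : M, (p : W) • y ∈ VM := fun y =>
    Submodule.subset_span ⟨F y, hVF y⟩
  have hIsmul : ∀ a : W, a ∈ I → ∀ x : M, a • x ∈ VM := by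
    intro a ha x
    obtain ⟨y, rfl⟩ := Ideal.mem_span_singleton'.mp ha
    rw [mul_smul]
    exact VM.smul_mem y (hpVM x)
  have hFVM : ∀ x ∈ VM, F x ∈ VM := by
    have : ∀ x ∈ LinearMap.range Vl, F x ∈ VM := by
      rintro _ ⟨y, rfl⟩
      show F (V y) ∈ VM
      rw [hFV]; exact hpVM y
    intro x hx
    exact this x (hVM_range ▸ hx)
  have hVVM : ∀ x : M, V x ∈ VM := fun x => Submodule.subset_span ⟨x, rfl⟩
  -- iteration facts
  have hstep : ∀ n, F^[n] z ∈ VM → F^[n + 1] z ∈ VM := by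
    intro n hn
    rw [Function.iterate_succ_apply']
    exact hFVM _ hn
  have hmono : ∀ m n, m ≤ n → F^[m] z ∈ VM → F^[n] z ∈ VM := by
    intro m n hmn h
    induction hmn with
    | refl => exact h
    | step _ ih => exact hstep _ ih
  -- the filtration T t
  let T : ℕ → Submodule W M := fun t =>
    VM ⊔ Submodule.span W {x | ∃ j, t ≤ j ∧ x = F^[j] z}
  have hTeq : ∀ t, T t = VM ⊔ Submodule.span W {x | ∃ j, t ≤ j ∧ x = F^[j] z} :=
    fun _ => rfl
  have hVMleT : ∀ t, VM ≤ T t := fun t => le_sup_left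
  have hTgen : ∀ t j, t ≤ j → F^[j] z ∈ T t := by
    intro t j htj
    exact Submodule.mem_sup_right (Submodule.subset_span ⟨j, htj, rfl⟩)
  have hmapF : ∀ t, Submodule.map Fl (T t) ≤ T (t + 1) := by
    intro t
    rw [hTeq t, Submodule.map_sup]
    apply sup_le
    · rintro _ ⟨x, hx, rfl⟩
      exact hVMleT (t + 1) (hFVM x hx)
    · rw [Submodule.map_span]
      refine Submodule.span_le.mpr ?_
      rintro x hx
      obtain ⟨y, ⟨j, hj, rfl⟩, rfl⟩ := hx
      have hxe : Fl (F^[j] z) = F^[j + 1] z := (Function.iterate_succ_apply' F j z).symm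
      rw [hxe]
      exact hTgen (t + 1) (j + 1) (by omega)
  have hTsucc_le : ∀ t, T (t + 1) ≤ VM ⊔ Submodule.map Fl (T t) := by
    intro t
    rw [hTeq (t + 1)]
    apply sup_le le_sup_left
    refine Submodule.span_le.mpr ?_
    rintro x hx
    obtain ⟨j, hj, rfl⟩ := hx
    obtain ⟨j', rfl⟩ : ∃ j', j = j' + 1 := ⟨j - 1, by omega⟩
    have hxe : F^[j' + 1] z = Fl (F^[j'] z) := Function.iterate_succ_apply' F j' z
    rw [hxe]
    exact Submodule.mem_sup_right ⟨F^[j'] z, hTgen t j' (by omega), rfl⟩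
  have hladder : ∀ t, T t ≤ T (t + 1) → T (t + 1) ≤ T (t + 2) := by
    intro t h
    have h1 : Submodule.map Fl (T t) ≤ Submodule.map Fl (T (t + 1)) := Submodule.map_mono h
    have h2 : T (t + 1) ≤ VM ⊔ Submodule.map Fl (T t) := hTsucc_le t
    have h3 : Submodule.map Fl (T (t + 1)) ≤ T (t + 2) := hmapF (t + 1)
    have h4 : VM ⊔ Submodule.map Fl (T t) ≤ T (t + 2) := sup_le (hVMleT (t + 2)) (h1.trans h3)
    exact h2.trans h4
  have hstab : ∀ t, F^[t] z ∈ T (t + 1) → F^[t] z ∈ VM := by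
    intro t ht
    have h01 : T t ≤ T (t + 1) := by
      rw [hTeq t]
      refine sup_le (hVMleT _) (Submodule.span_le.mpr ?_)
      rintro _ ⟨j, hj, rfl⟩
      rcases eq_or_lt_of_le hj with rfl | hlt
      · exact ht
      · exact hTgen (t + 1) j hlt
    have hchain : ∀ s, T (t + s) ≤ T (t + s + 1) := by
      intro s
      induction s with
      | zero => exact h01
      | succ s ih => exact hladder _ ih
    have hle : ∀ s, T t ≤ T (t + s) := by
      intro s
      induction s with
      | zero => exact le_rfl
      | succ s ih => exact ih.trans (hchain s)
    have hm := Nat.find_spec hex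
    have hTm : T (t + Nat.find hex) ≤ VM := by
      refine sup_le le_rfl (Submodule.span_le.mpr ?_)
      rintro _ ⟨j, hj, rfl⟩
      exact hmono _ j (le_trans (Nat.le_add_left _ t) hj) hm
    exact hTm (hle (Nat.find hex) (hTgen t t le_rfl))
  -- independence modulo VM
  have hind : ∀ n, n ≤ Nat.find hex → ∀ a : ℕ → W,
      (∑ i ∈ Finset.range n, a i • F^[i] z) ∈ VM → ∀ i < n, a i ∈ I := by
    intro n hn a hsum
    by_contra hcon
    push_neg at hcon
    obtain ⟨i1, hi1n, hi1⟩ := hcon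
    have hexi : ∃ i, i < n ∧ a i ∉ I := ⟨i1, hi1n, hi1⟩
    set i0 := Nat.find hexi with hi0def
    obtain ⟨hi0n, hi0notI⟩ := Nat.find_spec hexi
    have hterms : ∀ i ∈ (Finset.range n).erase i0, a i • F^[i] z ∈ T (i0 + 1) := by
      intro i hi
      obtain ⟨hne, hir⟩ := Finset.mem_erase.mp hi
      rw [Finset.mem_range] at hir
      rcases lt_or_gt_of_ne hne with hlt | hgt
      · have haiI : a i ∈ I := by
          by_contra hbad
          exact (Nat.find_min hexi hlt) ⟨hir, hbad⟩
        exact hVMleT _ (hIsmul _ haiI _)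
      · exact Submodule.smul_mem _ _ (hTgen (i0 + 1) i hgt)
    have hsum' : a i0 • F^[i0] z ∈ T (i0 + 1) := by
      have h1 : (∑ i ∈ (Finset.range n).erase i0, a i • F^[i] z) ∈ T (i0 + 1) :=
        Submodule.sum_mem _ hterms
      have h2 : a i0 • F^[i0] z
          = (∑ i ∈ Finset.range n, a i • F^[i] z)
            - ∑ i ∈ (Finset.range n).erase i0, a i • F^[i] z := by
        rw [← Finset.add_sum_erase _ _ (Finset.mem_range.mpr hi0n)]
        abel
      rw [h2]
      exact Submodule.sub_mem _ (hVMleT _ hsum) h1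
    have hu : IsUnit (a i0) := hunit_of_not_memI _ hi0notI
    obtain ⟨u, hu⟩ := hu
    have hmem : F^[i0] z ∈ T (i0 + 1) := by
      have h3 := Submodule.smul_mem (T (i0 + 1)) ((u⁻¹ : Wˣ) : W) hsum'
      rw [← mul_smul, ← hu, ← Units.val_mul, inv_mul_cancel, Units.val_one, one_smul] at h3
      exact h3
    have hVMmem : F^[i0] z ∈ VM := hstab _ hmem
    have : Nat.find hex ≤ i0 := Nat.find_le hVMmem
    omega
  -- M is generated by VM and the iterates of F on z
  set P : Submodule W M := VM ⊔ Submodule.span W {x | ∃ j, x = F^[j] z} with hPdef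
  have hPz : z ∈ P := Submodule.mem_sup_right
    (Submodule.subset_span ⟨0, (Function.iterate_zero_apply F z).symm⟩)
  have hPF : ∀ x ∈ P, F x ∈ P := by
    have hmp : Submodule.map Fl P ≤ P := by
      rw [hPdef, Submodule.map_sup]
      apply sup_le
      · rintro _ ⟨x, hx, rfl⟩
        exact Submodule.mem_sup_left (hFVM x hx)
      · rw [Submodule.map_span]
        refine le_trans (Submodule.span_mono ?_) le_sup_right
        rintro x hx
        obtain ⟨y, ⟨j, rfl⟩, rfl⟩ := hx
        exact ⟨j + 1, (Function.iterate_succ_apply' F j z).symm⟩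
    intro x hx
    exact hmp ⟨x, hx, rfl⟩
  have hPV : ∀ x ∈ P, V x ∈ P := by
    have hmp : Submodule.map Vl P ≤ P := by
      rw [hPdef, Submodule.map_sup]
      apply sup_le
      · rintro _ ⟨x, hx, rfl⟩
        exact Submodule.mem_sup_left (hVVM _)
      · rw [Submodule.map_span]
        refine Submodule.span_le.mpr ?_
        rintro x hx
        obtain ⟨y, ⟨j, rfl⟩, rfl⟩ := hx
        cases j with
        | zero =>
            exact Submodule.mem_sup_left (hVVM _)
        | succ j =>
            have : Vl (F^[j + 1] z) = (p : W) • F^[j] z := by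
              show V (F^[j + 1] z) = _
              rw [Function.iterate_succ_apply']
              exact hVF _
            rw [this]
            exact Submodule.mem_sup_left (hpVM _)
    intro x hx
    exact hmp ⟨x, hx, rfl⟩
  have hPtop : P = ⊤ := hz P hPz hPF hPV
  -- the span with only finitely many iterates
  have hspanFin : VM ⊔
      Submodule.span W (Set.range fun i : Fin (Nat.find hex) => F^[i] z) = ⊤ := by
    rw [← top_le_iff, ← hPtop, hPdef]
    apply sup_le le_sup_left
    refine Submodule.span_le.mpr ?_
    rintro x ⟨j, rfl⟩
    by_cases hj : j < Nat.find hex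
    · exact Submodule.mem_sup_right
        (Submodule.subset_span ⟨⟨j, hj⟩, rfl⟩)
    · exact Submodule.mem_sup_left
        (hmono _ j (by omega) (Nat.find_spec hex))
  -- Nat.find hex is at least 1
  have hm1 : 1 ≤ Nat.find hex := by
    by_contra hlt
    push_neg at hlt
    interval_cases h : Nat.find hex
    · -- z ∈ VM, hence VM = ⊤, hence M = pM, contradiction with Nakayama
      have hz0 : z ∈ VM := by
        have := Nat.find_spec hex
        rwa [h, Function.iterate_zero_apply] at this
      have hVMtop : VM = ⊤ := by
        rw [← top_le_iff, ← hPtop, hPdef]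
        apply sup_le le_rfl
        refine Submodule.span_le.mpr ?_
        rintro x ⟨j, rfl⟩
        exact hmono 0 j (Nat.zero_le j) (by rwa [Function.iterate_zero_apply])
      have hVsurj : Function.Surjective V := by
        intro x
        have hx : x ∈ VM := hVMtop ▸ Submodule.mem_top
        rw [hVM_range] at hx
        obtain ⟨y, hy⟩ := hx
        exact ⟨y, hy⟩
      obtain ⟨n, hn⟩ := hVnil
      have hsub : (⊤ : Submodule W M) ≤ I • ⊤ := by
        rintro x -
        obtain ⟨x', rfl⟩ := (hVsurj.iterate n) x
        obtain ⟨y, hy⟩ := hn x'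
        rw [hy]
        exact Submodule.smul_mem_smul (Ideal.mem_span_singleton_self _) Submodule.mem_top
      have hbot := Submodule.eq_bot_of_le_smul_of_le_jacobson_bot I ⊤
        (Module.finite_def.mp inferInstance) hsub
        (by rw [hImax, ← IsLocalRing.jacobson_eq_maximalIdeal (⊥ : Ideal W) bot_ne_top])
      obtain ⟨x, y, hxy⟩ := exists_pair_ne M
      apply hxy
      have hx : x ∈ (⊥ : Submodule W M) := hbot ▸ Submodule.mem_top
      have hy : y ∈ (⊥ : Submodule W M) := hbot ▸ Submodule.mem_top
      rw [Submodule.mem_bot] at hx hy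
      rw [hx, hy]
  -- Nat.find hex is the least number of generators of M over VM
  have hleast : IsLeast {n : ℕ | ∃ x : Fin n → M,
      VM ⊔ Submodule.span W (Set.range x) = ⊤} (Nat.find hex) := by
    constructor
    · exact ⟨fun i : Fin (Nat.find hex) => F^[i] z, hspanFin⟩
    · rintro n ⟨x, hx⟩
      -- pass to the quotient Q = M / VM, a vector space over W/I
      have tor : Module.IsTorsionBySet W (M ⧸ VM) (I : Set W) :=
        (Module.isTorsionBySet_quotient_iff VM (I : Set W)).mpr
          (fun x r hr => hIsmul r hr x)
      letI : Module (W ⧸ I) (M ⧸ VM) := tor.module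
      haveI : IsScalarTower W (W ⧸ I) (M ⧸ VM) := tor.isScalarTower
      haveI : I.IsMaximal := hImax ▸ IsLocalRing.maximalIdeal.isMaximal W
      letI : Field (W ⧸ I) := Ideal.Quotient.field I
      have key : ∀ (b : W) (x : M ⧸ VM), Ideal.Quotient.mk I b • x = b • x :=
        tor.mk_smul
      -- linear independence of the images of F^[i] z, i < Nat.find hex
      have hli : LinearIndependent (W ⧸ I)
          (fun i : Fin (Nat.find hex) => VM.mkQ (F^[(i : ℕ)] z)) := by
        rw [Fintype.linearIndependent_iff]
        intro g hg
        choose ga hga using fun i => Ideal.Quotient.mk_surjective (I := I) (g i)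
        set A : ℕ → W := fun j => if h : j < Nat.find hex then ga ⟨j, h⟩ else 0 with hA
        set gq : ℕ → W ⧸ I := fun j => if h : j < Nat.find hex then g ⟨j, h⟩ else 0 with hgq
        have hAq : ∀ j, Ideal.Quotient.mk I (A j) = gq j := by
          intro j
          by_cases h : j < Nat.find hex
          · simp only [hA, hgq, dif_pos h]; exact hga _
          · simp only [hA, hgq, dif_neg h, map_zero]
        have hsumA : (∑ i ∈ Finset.range (Nat.find hex), A i • F^[i] z) ∈ VM := by
          rw [← Submodule.Quotient.mk_eq_zero]
          show VM.mkQ _ = 0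
          rw [map_sum]
          have h1 : ∀ i ∈ Finset.range (Nat.find hex),
              VM.mkQ (A i • F^[i] z) = gq i • VM.mkQ (F^[i] z) := by
            intro i hi
            rw [map_smul, ← key, hAq]
          rw [Finset.sum_congr rfl h1,
            ← Fin.sum_univ_eq_sum_range (fun j => gq j • VM.mkQ (F^[j] z)) (Nat.find hex),
            ← hg]
          apply Finset.sum_congr rfl
          intro i _
          congr 1
          simp only [hgq, i.isLt, dif_pos, Fin.eta]
        have hAI := hind (Nat.find hex) le_rfl A hsumA
        intro i
        have hAga : A (i : ℕ) = ga i := by simp only [hA, i.isLt, dif_pos, Fin.eta]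
        rw [← hga i, Ideal.Quotient.eq_zero_iff_mem, ← hAga]
        exact hAI _ i.isLt
      -- the images of x generate the quotient over W ⧸ I
      have hsp : Submodule.span (W ⧸ I)
          (Set.range (fun i : Fin n => VM.mkQ (x i))) = ⊤ := by
        rw [eq_top_iff]
        rintro q -
        obtain ⟨y, rfl⟩ := VM.mkQ_surjective q
        have hy : y ∈ VM ⊔ Submodule.span W (Set.range x) := hx ▸ Submodule.mem_top
        obtain ⟨v1, hv1, v2, hv2, rfl⟩ := Submodule.mem_sup.mp hy
        rw [map_add]
        have h1 : VM.mkQ v1 = 0 := (Submodule.Quotient.mk_eq_zero VM).mpr hv1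
        rw [h1, zero_add]
        have h2 : VM.mkQ v2 ∈ Submodule.map VM.mkQ (Submodule.span W (Set.range x)) :=
          Submodule.mem_map_of_mem hv2
        rw [Submodule.map_span] at h2
        have h3 := Submodule.span_le_restrictScalars W (W ⧸ I) (VM.mkQ '' Set.range x)
        have h4 := h3 h2
        rw [Submodule.restrictScalars_mem] at h4
        have h5 : VM.mkQ '' Set.range x = Set.range (fun i : Fin n => VM.mkQ (x i)) := by
          rw [← Set.range_comp]; rfl
        rwa [h5] at h4
      -- compare cardinalities via ranks
      have hr1 : Module.rank (W ⧸ I) (M ⧸ VM) ≤ n := by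
        have hle := rank_span_le (R := W ⧸ I) (M := M ⧸ VM)
          (Set.range (fun i : Fin n => VM.mkQ (x i)))
        rw [hsp] at hle
        have htop : Module.rank (W ⧸ I) (⊤ : Submodule (W ⧸ I) (M ⧸ VM))
            = Module.rank (W ⧸ I) (M ⧸ VM) := rank_top _ _
        rw [htop] at hle
        refine hle.trans ?_
        have h6 := Cardinal.mk_range_le_lift (f := fun i : Fin n => VM.mkQ (x i))
        simpa using h6
      have hr2 : (Nat.find hex : Cardinal) ≤ Module.rank (W ⧸ I) (M ⧸ VM) := by
        have := hli.cardinal_lift_le_rank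
        simpa using this
      exact_mod_cast hr2.trans hr1
  obtain rfl : c = Nat.find hex := hc.unique hleast
  refine ⟨hm1, Nat.find_spec hex, ?_, hspanFin, ?_⟩
  · intro i hi hmem
    have := Nat.find_min' hex hmem
    omega
  · intro a ha i hi
    exact hind _ le_rfl a ha i hi

end Helpers


variable (p : ℕ) [Fact p.Prime] (k : Type*) [Field k] [IsAlgClosed k] [CharP k p]
variable (M : Type*) [AddCommGroup M] [Module (WittVector p k) M]

/-- Let `M` be a non-zero bi-nilpotent Dieudonné module over `k` generated by
`z ∈ M`, with `d = dim_k (M/FM)` and `c = dim_k (M/VM)`.  Then there exist `a_0, …, a_c` and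
`b_1, …, b_d` in `W(k)` with `a_0, b_d` units, `a_i ∈ pW` for `1 ≤ i ≤ c`, `b_i ∈ pW` for
`1 ≤ i ≤ d-1`, and `Σ_{i=0}^{c} a_i F^{c-i} z + Σ_{i=1}^{d} b_i V^i z = 0`. -/
theorem presentation_of_cyclic_dieudonne_module
    -- `M` is a free `W(k)`-module of finite rank, non-zero
    [Module.Free (WittVector p k) M] [Module.Finite (WittVector p k) M] [Nontrivial M]
    -- `F` is `σ`-semilinear, `V` is `σ⁻¹`-semilinear, and `F ∘ V = V ∘ F = p·id`
    (F V : M → M)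
    (hFadd : ∀ x y, F (x + y) = F x + F y)
    (hVadd : ∀ x y, V (x + y) = V x + V y)
    (hFsmul : ∀ (a : WittVector p k) (x : M), F (a • x) = WittVector.frobeniusEquiv p k a • F x)
    (hVsmul : ∀ (a : WittVector p k) (x : M),
      V (a • x) = (WittVector.frobeniusEquiv p k).symm a • V x)
    (hFV : ∀ x, F (V x) = (p : WittVector p k) • x)
    (hVF : ∀ x, V (F x) = (p : WittVector p k) • x)
    -- `M` is bi-nilpotent: `F` and `V` are nilpotent on `M/pM`
    (hFnil : ∃ n : ℕ, ∀ x : M, ∃ y : M, F^[n] x = (p : WittVector p k) • y)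
    (hVnil : ∃ n : ℕ, ∀ x : M, ∃ y : M, V^[n] x = (p : WittVector p k) • y)
    -- `z` generates `M`: the only `W(k)`-submodule containing `z` stable under `F` and `V` is `M`
    (z : M)
    (hz : ∀ P : Submodule (WittVector p k) M,
      z ∈ P → (∀ x ∈ P, F x ∈ P) → (∀ x ∈ P, V x ∈ P) → P = ⊤)
    -- `d = dim_k (M/FM)`: `d` is the least number of elements generating `M` over `FM`
    (c d : ℕ)
    (hd : IsLeast {n : ℕ | ∃ x : Fin n → M,
      Submodule.span (WittVector p k) (Set.range F) ⊔
        Submodule.span (WittVector p k) (Set.range x) = ⊤} d)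
    -- `c = dim_k (M/VM)`
    (hc : IsLeast {n : ℕ | ∃ x : Fin n → M,
      Submodule.span (WittVector p k) (Set.range V) ⊔
        Submodule.span (WittVector p k) (Set.range x) = ⊤} c) :
    ∃ (a b : ℕ → WittVector p k),
      IsUnit (a 0) ∧ IsUnit (b d) ∧
      (∀ i ∈ Finset.Icc 1 c, ∃ y : WittVector p k, a i = (p : WittVector p k) * y) ∧
      (∀ i ∈ Finset.Icc 1 (d - 1), ∃ y : WittVector p k, b i = (p : WittVector p k) * y) ∧
      (∑ i ∈ Finset.range (c + 1), a i • F^[c - i] z) +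
        (∑ i ∈ Finset.Icc 1 d, b i • V^[i] z) = 0 := by
  classical
  have hex : ∃ n, F^[n] z ∈ Submodule.span (WittVector p k) (Set.range V) := by
    obtain ⟨n, hn⟩ := hFnil
    obtain ⟨y, hy⟩ := hn z
    exact ⟨n, hy ▸ (hVF y ▸ Submodule.subset_span ⟨F y, rfl⟩)⟩
  have hex' : ∃ n, V^[n] z ∈ Submodule.span (WittVector p k) (Set.range F) := by
    obtain ⟨n, hn⟩ := hVnil
    obtain ⟨y, hy⟩ := hn z
    exact ⟨n, hy ▸ (hFV y ▸ Submodule.subset_span ⟨V y, rfl⟩)⟩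
  obtain ⟨hc1, hFcVM, hFnotVM, hspanF, hindF⟩ :=
    aux (WittVector.frobeniusEquiv p k) F V hFadd hVadd hFsmul hVsmul hFV hVF hVnil z hz c hc hex
  obtain ⟨hd1, hVdFM, hVnotFM, hspanV, hindV⟩ :=
    aux (WittVector.frobeniusEquiv p k).symm V F hVadd hFadd hVsmul
      (fun a x => by rw [RingEquiv.symm_symm]; exact hFsmul a x) hVF hFV hFnil z
      (fun P hzP hV hF => hz P hzP hF hV) d hd hex'
  -- abbreviations
  set I : Ideal (WittVector p k) := Ideal.span {(p : WittVector p k)} with hIdef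
  have hImax : I = IsLocalRing.maximalIdeal (WittVector p k) := span_p_eq_maximalIdeal p k
  haveI : RingHomSurjective ((WittVector.frobeniusEquiv p k).symm.toRingHom) :=
    ⟨(WittVector.frobeniusEquiv p k).symm.surjective⟩
  set Vl : M →ₛₗ[(WittVector.frobeniusEquiv p k).symm.toRingHom] M :=
    { toFun := V, map_add' := hVadd, map_smul' := hVsmul } with hVldef
  set FM := Submodule.span (WittVector p k) (Set.range F) with hFMdef
  set VM := Submodule.span (WittVector p k) (Set.range V) with hVMdef
  -- the submodule L generated by F^[i] z (i < c) and V^[j+1] z (j < d)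
  set L := Submodule.span (WittVector p k) (Set.range fun i : Fin c => F^[(i : ℕ)] z) ⊔
    Submodule.span (WittVector p k) (Set.range fun j : Fin d => V^[(j : ℕ) + 1] z) with hLdef
  -- L together with pM is everything
  have hVFM : ∀ w ∈ FM, V w ∈ I • (⊤ : Submodule (WittVector p k) M) := by
    intro w hw
    have h1 : Vl w ∈ Submodule.map Vl FM := Submodule.mem_map_of_mem hw
    rw [hFMdef, Submodule.map_span] at h1
    have h2 : Submodule.span (WittVector p k) (Vl '' Set.range F)
        ≤ I • (⊤ : Submodule (WittVector p k) M) := by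
      refine Submodule.span_le.mpr ?_
      rintro x hx
      obtain ⟨y, ⟨w', rfl⟩, rfl⟩ := hx
      have : Vl (F w') = (p : WittVector p k) • w' := hVF w'
      rw [this]
      exact Submodule.smul_mem_smul (Ideal.mem_span_singleton_self _) Submodule.mem_top
    exact h2 h1
  have hVgen : ∀ w ∈ Submodule.span (WittVector p k)
      (Set.range fun j : Fin d => V^[(j : ℕ)] z), V w ∈ L := by
    intro w hw
    have h1 : Vl w ∈ Submodule.map Vl (Submodule.span (WittVector p k)
      (Set.range fun j : Fin d => V^[(j : ℕ)] z)) := Submodule.mem_map_of_mem hw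
    rw [Submodule.map_span] at h1
    have h2 : Submodule.span (WittVector p k)
        (Vl '' Set.range fun j : Fin d => V^[(j : ℕ)] z) ≤ L := by
      refine Submodule.span_le.mpr ?_
      rintro x hx
      obtain ⟨y, ⟨j, rfl⟩, rfl⟩ := hx
      have : Vl (V^[(j : ℕ)] z) = V^[(j : ℕ) + 1] z :=
        (Function.iterate_succ_apply' V (j : ℕ) z).symm
      rw [this, hLdef]
      exact Submodule.mem_sup_right (Submodule.subset_span ⟨j, rfl⟩)
    exact h2 h1
  have hsub : (⊤ : Submodule (WittVector p k) M) ≤ L ⊔ I • ⊤ := by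
    have h1 : VM ≤ L ⊔ I • ⊤ := by
      rw [hVMdef]
      refine Submodule.span_le.mpr ?_
      rintro x ⟨y, rfl⟩
      have hy : y ∈ FM ⊔ Submodule.span (WittVector p k)
          (Set.range fun j : Fin d => V^[(j : ℕ)] z) := hspanV ▸ Submodule.mem_top
      obtain ⟨v1, hv1, v2, hv2, rfl⟩ := Submodule.mem_sup.mp hy
      rw [hVadd]
      exact Submodule.add_mem _
        (Submodule.mem_sup_right (hVFM v1 hv1))
        (Submodule.mem_sup_left (hVgen v2 hv2))
    have h2 : Submodule.span (WittVector p k)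
        (Set.range fun i : Fin c => F^[(i : ℕ)] z) ≤ L ⊔ I • ⊤ :=
      le_trans (by rw [hLdef]; exact le_sup_left) le_sup_left
    calc (⊤ : Submodule (WittVector p k) M)
        = VM ⊔ Submodule.span (WittVector p k)
            (Set.range fun i : Fin c => F^[(i : ℕ)] z) := hspanF.symm
      _ ≤ L ⊔ I • ⊤ := sup_le h1 h2
  -- Nakayama: L = ⊤
  have hLtop : L = ⊤ := by
    have hfg : (⊤ : Submodule (WittVector p k) (M ⧸ L)).FG :=
      Module.finite_def.mp inferInstance
    have hIjac : I ≤ (⊥ : Ideal (WittVector p k)).jacobson :=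
      le_of_eq (hImax.trans (IsLocalRing.jacobson_eq_maximalIdeal
        (⊥ : Ideal (WittVector p k)) bot_ne_top).symm)
    have hle : (⊤ : Submodule (WittVector p k) (M ⧸ L)) ≤ I • ⊤ := by
      rintro q -
      obtain ⟨y, rfl⟩ := L.mkQ_surjective q
      have hmem : y ∈ L ⊔ I • ⊤ := hsub Submodule.mem_top
      obtain ⟨l, hl, w, hw, rfl⟩ := Submodule.mem_sup.mp hmem
      have hl0 : L.mkQ l = 0 := (Submodule.Quotient.mk_eq_zero L).mpr hl
      rw [map_add, hl0, zero_add]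
      have h7 : L.mkQ w ∈ Submodule.map L.mkQ (I • ⊤) := Submodule.mem_map_of_mem hw
      rw [Submodule.map_smul''] at h7
      exact SetLike.le_def.mp (smul_mono_right I le_top) h7
    have hbot := Submodule.eq_bot_of_le_smul_of_le_jacobson_bot I ⊤ hfg hle hIjac
    rw [← Submodule.Quotient.subsingleton_iff]
    refine subsingleton_of_forall_eq 0 fun q => ?_
    have hq : q ∈ (⊥ : Submodule (WittVector p k) (M ⧸ L)) := hbot ▸ Submodule.mem_top
    rwa [Submodule.mem_bot] at hq
  -- decompose F^[c] z in terms of the generators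
  have hFcL : F^[c] z ∈ L := hLtop.symm ▸ Submodule.mem_top
  rw [hLdef] at hFcL
  obtain ⟨u1, hu1, u2, hu2, hdec⟩ := Submodule.mem_sup.mp hFcL
  obtain ⟨α, hα⟩ := (Submodule.mem_span_range_iff_exists_fun (WittVector p k)).mp hu1
  obtain ⟨β, hβ⟩ := (Submodule.mem_span_range_iff_exists_fun (WittVector p k)).mp hu2
  set A : ℕ → WittVector p k := fun j => if h : j < c then α ⟨j, h⟩ else 0 with hA
  set B : ℕ → WittVector p k := fun j => if h : j < d then β ⟨j, h⟩ else 0 with hB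
  have hmain : F^[c] z = (∑ i ∈ Finset.range c, A i • F^[i] z)
      + ∑ j ∈ Finset.range d, B j • V^[j + 1] z := by
    have e1 : (∑ i ∈ Finset.range c, A i • F^[i] z) = u1 := by
      rw [← hα, ← Fin.sum_univ_eq_sum_range (fun j => A j • F^[j] z) c]
      apply Finset.sum_congr rfl
      intro i _
      simp only [hA, i.isLt, dif_pos, Fin.eta]
    have e2 : (∑ j ∈ Finset.range d, B j • V^[j + 1] z) = u2 := by
      rw [← hβ, ← Fin.sum_univ_eq_sum_range (fun j => B j • V^[j + 1] z) d]
      apply Finset.sum_congr rfl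
      intro j _
      simp only [hB, j.isLt, dif_pos, Fin.eta]
    rw [e1, e2, hdec]
  -- the V-iterates lie in VM, the F-iterates in FM
  have hVj : ∀ j : ℕ, V^[j + 1] z ∈ VM := by
    intro j
    rw [Function.iterate_succ_apply']
    exact Submodule.subset_span ⟨V^[j] z, rfl⟩
  have hFi : ∀ i : ℕ, F^[i + 1] z ∈ FM := by
    intro i
    rw [Function.iterate_succ_apply']
    exact Submodule.subset_span ⟨F^[i] z, rfl⟩
  -- the A-coefficients are all divisible by p
  have hAI : ∀ i < c, A i ∈ I := by
    apply hindF
    have hAe : (∑ i ∈ Finset.range c, A i • F^[i] z)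
        = F^[c] z - ∑ j ∈ Finset.range d, B j • V^[j + 1] z := by
      rw [hmain]; abel
    rw [hAe]
    exact Submodule.sub_mem _ hFcVM
      (Submodule.sum_mem _ fun j _ => Submodule.smul_mem _ _ (hVj j))
  -- the B-sum lies in FM
  have hpFM : ∀ x : M, (p : WittVector p k) • x ∈ FM := by
    intro x
    rw [← hFV x]
    exact Submodule.subset_span ⟨V x, rfl⟩
  have hIFM : ∀ a : WittVector p k, a ∈ I → ∀ x : M, a • x ∈ FM := by
    intro a ha x
    obtain ⟨y, rfl⟩ := Ideal.mem_span_singleton'.mp ha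
    rw [mul_comm y p, mul_smul]
    exact hpFM (y • x)
  have hFcFM : F^[c] z ∈ FM := by
    have : F^[c] z = F^[(c - 1) + 1] z := by congr 1; omega
    rw [this]
    exact hFi (c - 1)
  have hSFM : (∑ j ∈ Finset.range d, B j • V^[j + 1] z) ∈ FM := by
    have hBe : (∑ j ∈ Finset.range d, B j • V^[j + 1] z)
        = F^[c] z - ∑ i ∈ Finset.range c, A i • F^[i] z := by
      rw [hmain]; abel
    rw [hBe]
    refine Submodule.sub_mem _ hFcFM (Submodule.sum_mem _ fun i hi => ?_)
    rw [Finset.mem_range] at hi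
    cases i with
    | zero =>
        rw [Function.iterate_zero_apply]
        exact hIFM _ (hAI 0 hi) z
    | succ i' => exact Submodule.smul_mem _ _ (hFi i')
  -- B-coefficients below d-1 are divisible by p
  have hd' : d - 1 + 1 = d := by omega
  have hS' : (∑ j ∈ Finset.range (d - 1), B j • V^[j + 1] z) ∈ FM := by
    have hsplit : (∑ j ∈ Finset.range d, B j • V^[j + 1] z)
        = (∑ j ∈ Finset.range (d - 1), B j • V^[j + 1] z)
          + B (d - 1) • V^[(d - 1) + 1] z := by
      rw [← hd']
      rw [Finset.sum_range_succ]
      simp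
    have hBd_mem : B (d - 1) • V^[(d - 1) + 1] z ∈ FM := by
      rw [hd']
      exact Submodule.smul_mem _ _ hVdFM
    have := Submodule.sub_mem _ hSFM hBd_mem
    rw [hsplit] at this
    simpa using this
  have hBI : ∀ j < d - 1, B j ∈ I := by
    intro j hj
    set γ : ℕ → WittVector p k := fun i => if i = 0 then 0 else B (i - 1) with hγ
    have hγsum : (∑ i ∈ Finset.range d, γ i • V^[i] z) ∈ FM := by
      rw [← hd', Finset.sum_range_succ']
      have hγ0 : γ 0 • V^[0] z = 0 := by
        simp [hγ]
      rw [hγ0, add_zero]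
      have : ∀ i ∈ Finset.range (d - 1), γ (i + 1) • V^[i + 1] z = B i • V^[i + 1] z := by
        intro i _
        simp [hγ]
      rw [Finset.sum_congr rfl this]
      exact hS'
    have := hindV γ hγsum (j + 1) (by omega)
    simpa [hγ] using this
  -- B (d-1) is a unit
  have hBdUnit : IsUnit (B (d - 1)) := by
    by_contra hnu
    have hBdI : B (d - 1) ∈ I := by
      have h5 : B (d - 1) ∈ IsLocalRing.maximalIdeal (WittVector p k) :=
        (IsLocalRing.mem_maximalIdeal _).mpr (mem_nonunits_iff.mpr hnu)
      rwa [← hImax] at h5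
    -- then F^[c] z ∈ pM
    have hFcp : F^[c] z ∈ I • (⊤ : Submodule (WittVector p k) M) := by
      rw [hmain]
      refine Submodule.add_mem _ (Submodule.sum_mem _ fun i hi => ?_)
        (Submodule.sum_mem _ fun j hj => ?_)
      · exact Submodule.smul_mem_smul (hAI i (Finset.mem_range.mp hi)) Submodule.mem_top
      · rw [Finset.mem_range] at hj
        by_cases hj1 : j < d - 1
        · exact Submodule.smul_mem_smul (hBI j hj1) Submodule.mem_top
        · have : j = d - 1 := by omega
          rw [this]
          exact Submodule.smul_mem_smul hBdI Submodule.mem_top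
    obtain ⟨y, hy⟩ : ∃ y, F^[c] z = (p : WittVector p k) • y := by
      refine Submodule.smul_induction_on hFcp ?_ ?_
      · rintro r hr m -
        obtain ⟨w, rfl⟩ := Ideal.mem_span_singleton'.mp hr
        exact ⟨w • m, by rw [mul_comm w p, mul_smul]⟩
      · rintro x y ⟨x', hx'⟩ ⟨y', hy'⟩
        exact ⟨x' + y', by rw [hx', hy', smul_add]⟩
    have h8 : V (F^[c] z) = (p : WittVector p k) • F^[c - 1] z := by
      have h81 : F^[c] z = F (F^[c - 1] z) := by
        have : F^[c] z = F^[(c - 1) + 1] z := by congr 1; omega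
        rw [this, Function.iterate_succ_apply']
      rw [h81]
      exact hVF _
    have h9 : V (F^[c] z) = (p : WittVector p k) • V y := by
      rw [hy, hVsmul]
      congr 1
      exact map_natCast ((WittVector.frobeniusEquiv p k).symm : WittVector p k →+* WittVector p k) p
    have h10 : F^[c - 1] z = V y := by
      have hpne : (p : WittVector p k) ≠ 0 := WittVector.p_nonzero p k
      exact smul_right_injective M hpne (h8.symm.trans h9)
    exact hFnotVM (c - 1) (by omega) (h10 ▸ Submodule.subset_span ⟨y, rfl⟩)
  -- assemble the final relation
  set a : ℕ → WittVector p k := fun i => if i = 0 then 1 else -A (c - i) with ha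
  set b : ℕ → WittVector p k := fun i => -B (i - 1) with hb
  refine ⟨a, b, ?_, ?_, ?_, ?_, ?_⟩
  · simp [ha]
  · simpa [hb] using hBdUnit.neg
  · intro i hi
    rw [Finset.mem_Icc] at hi
    have hne : i ≠ 0 := by omega
    have hai : a i = -A (c - i) := by simp [ha, hne]
    rw [hai]
    obtain ⟨w, hw⟩ := Ideal.mem_span_singleton'.mp (hAI (c - i) (by omega))
    exact ⟨-w, by rw [← hw]; ring⟩
  · intro i hi
    rw [Finset.mem_Icc] at hi
    have hbi : b i = -B (i - 1) := by simp [hb]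
    rw [hbi]
    obtain ⟨w, hw⟩ := Ideal.mem_span_singleton'.mp (hBI (i - 1) (by omega))
    exact ⟨-w, by rw [← hw]; ring⟩
  · have e1 : (∑ i ∈ Finset.range (c + 1), a i • F^[c - i] z)
        = F^[c] z - ∑ i ∈ Finset.range c, A i • F^[i] z := by
      rw [Finset.sum_range_succ']
      have hf0 : a 0 • F^[c - 0] z = F^[c] z := by simp [ha]
      have hfi : ∀ i ∈ Finset.range c,
          a (i + 1) • F^[c - (i + 1)] z = -(A (c - 1 - i) • F^[c - 1 - i] z) := by
        intro i hi
        have hne : a (i + 1) = -A (c - (i + 1)) := by simp [ha]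
        have he : c - (i + 1) = c - 1 - i := by omega
        rw [hne, he, neg_smul]
      rw [hf0, Finset.sum_congr rfl hfi, Finset.sum_neg_distrib,
        Finset.sum_range_reflect (fun j => A j • F^[j] z) c]
      abel
    have e2 : (∑ i ∈ Finset.Icc 1 d, b i • V^[i] z)
        = -∑ j ∈ Finset.range d, B j • V^[j + 1] z := by
      rw [sum_Icc_one (fun i => b i • V^[i] z) d, ← Finset.sum_neg_distrib]
      apply Finset.sum_congr rfl
      intro j _
      have hbj : b (j + 1) = -B j := by simp [hb]
      rw [hbj, neg_smul]
    rw [e1, e2, hmain]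
    abel


end DieudonneStmt
end
end

section
/- Let N be a non-zero finite-dimensional B(k)-vector space equipped with a σ-semilinear bijection F : N → N which is simple, in the sense that the only B(k)-subspaces of N stable under both F and F⁻¹ are 0 and N, and assume N is isoclinic of slope λ ∈ ℝ. Then any two non-trivial F-valuations of slope λ on N differ by the addition of a real constant: if w₁ and w₂ are non-trivial F-valuations of slope λ on N, then there is α ∈ ℝ with w₂(x) = w₁(x) + α for all x ∈ N. -/
noncomputable section

namespace DieudonneStmt

variable (p : ℕ) [Fact p.Prime] (k : Type*) [Field k] [IsAlgClosed k] [CharP k p]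

/-- The Frobenius automorphism `σ` of `B(k) = FractionRing (WittVector p k)`, extending the
Witt vector Frobenius. -/
def σB : FractionRing (WittVector p k) ≃+* FractionRing (WittVector p k) :=
  WittVector.FractionRing.frobenius p k

/-- `v` is the `p`-adic valuation on `B(k)`, normalized by `v p = 1`: it is multiplicative,
ultrametric, `⊤` exactly at `0`, nonnegative on `W(k)`, integer valued, and `v p = 1`. -/
def IsPadicVal (v : FractionRing (WittVector p k) → WithTop ℝ) : Prop :=
  (∀ x y, v (x * y) = v x + v y) ∧
  (∀ x y, min (v x) (v y) ≤ v (x + y)) ∧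
  (∀ x, v x = ⊤ ↔ x = 0) ∧
  v ((p : ℕ) : FractionRing (WittVector p k)) = (1 : ℝ) ∧
  (∀ w : WittVector p k,
    (0 : WithTop ℝ) ≤ v (algebraMap (WittVector p k) (FractionRing (WittVector p k)) w)) ∧
  (∀ x, x ≠ 0 → ∃ n : ℤ, v x = ((n : ℝ) : WithTop ℝ))

variable (N : Type*) [AddCommGroup N] [Module (FractionRing (WittVector p k)) N]

/-- A valuation on a `B(k)`-vector space `N`. -/
def IsValuation (v : FractionRing (WittVector p k) → WithTop ℝ) (w : N → WithTop ℝ) : Prop :=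
  (∀ (a : FractionRing (WittVector p k)) (x : N), w (a • x) = v a + w x) ∧
  (∀ x y : N, min (w x) (w y) ≤ w (x + y))

/-- An `F`-valuation of slope `lam` on `N`. -/
def IsFValuation (v : FractionRing (WittVector p k) → WithTop ℝ) (F : N → N) (lam : ℝ)
    (w : N → WithTop ℝ) : Prop :=
  IsValuation p k N v w ∧ ∀ x : N, w (F x) = w x + ((lam : ℝ) : WithTop ℝ)

/-- `N` with the `σ`-semilinear bijection `F` is isoclinic of slope `lam`. -/
def IsIsoclinic (F : N → N) (lam : ℝ) : Prop :=
  ∃ (ι : Type) (b : Module.Basis ι (FractionRing (WittVector p k)) N), ∀ i : ι,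
    ∃ (s : ℕ) (r : ℤ), 0 < s ∧
      F^[s] (b i) = (((p : ℕ) : FractionRing (WittVector p k)) ^ r) • b i ∧
      (r : ℝ) = lam * (s : ℝ)

/-! ### Auxiliary lemmas -/

set_option linter.unusedSectionVars false

/-- Abbreviation for `B(k)`. -/
abbrev Bk := FractionRing (WittVector p k)

lemma frob_teich (u : k) :
    WittVector.frobenius (WittVector.teichmuller p u) = WittVector.teichmuller p (u ^ p) := by
  have hp : p ≠ 0 := (Fact.out (p := p.Prime)).ne_zero
  ext n
  rw [WittVector.coeff_frobenius_charP]
  cases n with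
  | zero => simp only [WittVector.teichmuller_coeff_zero]
  | succ n =>
      rw [WittVector.teichmuller_coeff_pos p _ _ n.succ_pos,
        WittVector.teichmuller_coeff_pos p _ _ n.succ_pos, zero_pow hp]

lemma sigmaB_algebraMap (x : WittVector p k) :
    σB p k (algebraMap (WittVector p k) (Bk p k) x)
      = algebraMap (WittVector p k) (Bk p k) (WittVector.frobenius x) := by
  have : σB p k (algebraMap (WittVector p k) (Bk p k) x)
      = algebraMap (WittVector p k) (Bk p k) (WittVector.frobeniusEquiv p k x) :=
    IsFractionRing.ringEquivOfRingEquiv_algebraMap _ _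
  simpa using this

/-- Teichmüller lift in `B(k)`. -/
def cB (u : k) : Bk p k := algebraMap (WittVector p k) (Bk p k) (WittVector.teichmuller p u)

lemma sigmaB_cB (u : k) : σB p k (cB p k u) = cB p k (u ^ p) := by
  rw [cB, sigmaB_algebraMap, frob_teich]; rfl

lemma cB_injective : Function.Injective (cB p k) := by
  intro a b h
  have h2 := IsFractionRing.injective (WittVector p k) (Bk p k) h
  have := congrArg (fun x => WittVector.coeff x 0) h2
  simpa [WittVector.teichmuller_coeff_zero] using this

/-- Teichmüller lift as a monoid hom. -/
def cBHom : k →* Bk p k :=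
  ((algebraMap (WittVector p k) (Bk p k)).toMonoidHom).comp (WittVector.teichmuller p)

lemma sigmaB_iter_cB (j : ℕ) (u : k) : (⇑(σB p k))^[j] (cB p k u) = cB p k (u ^ p ^ j) := by
  induction j generalizing u with
  | zero => simp
  | succ j ih =>
      rw [Function.iterate_succ_apply, sigmaB_cB, ih, ← pow_mul, pow_succ']

lemma sigmaB_iter_ppow (m : ℕ) (t : ℤ) :
    (⇑(σB p k))^[m] (((p : ℕ) : Bk p k) ^ t) = ((p : ℕ) : Bk p k) ^ t := by
  induction m with
  | zero => rfl
  | succ m ih => rw [Function.iterate_succ_apply', ih, map_zpow₀, map_natCast]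

lemma val_sum_eq {N' : Type*} [AddCommGroup N'] (w : N' → WithTop ℝ)
    (hadd : ∀ x y, min (w x) (w y) ≤ w (x + y)) (hneg : ∀ x, w (-x) = w x)
    (h0 : w 0 = ⊤) {n : ℕ} (t : Fin n → N') (i₀ : Fin n) (hfin : w (t i₀) ≠ ⊤)
    (hmin : ∀ j, j ≠ i₀ → w (t i₀) < w (t j)) : w (∑ i, t i) = w (t i₀) := by
  have hsub : ∀ T : Finset (Fin n), i₀ ∉ T → w (t i₀) < w (∑ i ∈ T, t i) := by
    intro T
    induction T using Finset.induction with
    | empty => intro _; rw [Finset.sum_empty, h0]; exact lt_top_iff_ne_top.mpr hfin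
    | insert _ _ ha ih =>
        rename_i a T'
        intro hmem
        rw [Finset.sum_insert ha]
        have h1 : w (t i₀) < w (t a) := hmin a (fun h => hmem (h ▸ Finset.mem_insert_self a T'))
        have h2 : w (t i₀) < w (∑ i ∈ T', t i) := ih (fun h => hmem (Finset.mem_insert_of_mem h))
        exact lt_of_lt_of_le (lt_min h1 h2) (hadd _ _)
  have hS : w (t i₀) < w (∑ i ∈ Finset.univ.erase i₀, t i) :=
    hsub _ (Finset.notMem_erase i₀ _)
  have hsum : ∑ i, t i = t i₀ + ∑ i ∈ Finset.univ.erase i₀, t i :=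
    (Finset.add_sum_erase _ t (Finset.mem_univ i₀)).symm
  set S := ∑ i ∈ Finset.univ.erase i₀, t i
  have hge : w (t i₀) ≤ w (∑ i, t i) := by
    rw [hsum]
    exact le_trans (le_min le_rfl hS.le) (hadd _ _)
  have hle : w (∑ i, t i) ≤ w (t i₀) := by
    have : w (t i₀) = w ((∑ i, t i) + -S) := by rw [hsum, add_neg_cancel_right]
    have h3 : min (w (∑ i, t i)) (w (-S)) ≤ w (t i₀) := this ▸ hadd _ _
    rw [hneg] at h3
    rcases min_le_iff.mp h3 with h | h
    · exact h
    · exact absurd (lt_of_lt_of_le hS h) (lt_irrefl _)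
  exact le_antisymm hle hge

set_option maxHeartbeats 2000000

/-- if `N` is a non-zero simple isoclinic `F`-space of slope `lam`, then any two
non-trivial `F`-valuations of slope `lam` on `N` differ by the addition of a real constant. -/
theorem FValuations_differ_by_constant_of_simple
    (v : FractionRing (WittVector p k) → WithTop ℝ) (hv : IsPadicVal p k v)
    [FiniteDimensional (FractionRing (WittVector p k)) N] [Nontrivial N]
    (F : N → N)
    (hFadd : ∀ x y, F (x + y) = F x + F y)
    (hFsmul : ∀ (a : FractionRing (WittVector p k)) (x : N), F (a • x) = σB p k a • F x)
    (hFbij : Function.Bijective F)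
    -- `N` is simple: the only subspaces stable under `F` and `F⁻¹` are `0` and `N`
    (hsimple : ∀ P : Submodule (FractionRing (WittVector p k)) N,
      (∀ x ∈ P, F x ∈ P) → (∀ x : N, F x ∈ P → x ∈ P) → P = ⊥ ∨ P = ⊤)
    (lam : ℝ)
    (hiso : IsIsoclinic p k N F lam)
    (w₁ w₂ : N → WithTop ℝ)
    (h₁ : IsFValuation p k N v F lam w₁) (h₂ : IsFValuation p k N v F lam w₂)
    (hnt₁ : ∃ x : N, w₁ x ≠ ⊤) (hnt₂ : ∃ x : N, w₂ x ≠ ⊤) :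
    ∃ α : ℝ, ∀ x : N, w₂ x = w₁ x + ((α : ℝ) : WithTop ℝ) := by
  classical
  obtain ⟨hvmul, hvadd, hvtop, hvp, hvW, hvint⟩ := hv
  have hv0 : v 0 = ⊤ := (hvtop 0).mpr rfl
  have hBp0 : ((p : ℕ) : Bk p k) ≠ 0 := by
    intro h
    rw [h, hv0] at hvp
    exact (WithTop.coe_ne_top (a := (1:ℝ))) hvp.symm
  have hv1 : v 1 = 0 := by
    have h := hvmul 1 1
    rw [mul_one] at h
    rcases eq_or_ne (v 1) ⊤ with ht | ht
    · exact absurd ((hvtop 1).mp ht) one_ne_zero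
    · obtain ⟨x, hx⟩ := WithTop.ne_top_iff_exists.mp ht
      rw [← hx, ← WithTop.coe_add] at h
      have hxx : x = x + x := WithTop.coe_inj.mp h
      have hx0 : x = 0 := by linarith
      rw [← hx, hx0]
      rfl
  have hvneg1 : v (-1) = 0 := by
    have h := hvmul (-1) (-1)
    rw [neg_mul_neg, one_mul, hv1] at h
    rcases eq_or_ne (v (-1)) ⊤ with ht | ht
    · rw [ht, top_add] at h; exact absurd h.symm (by simp)
    · obtain ⟨x, hx⟩ := WithTop.ne_top_iff_exists.mp ht
      rw [← hx, ← WithTop.coe_add] at h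
      have hxx : (0:ℝ) = x + x := by exact_mod_cast h
      have hx0 : x = 0 := by linarith
      rw [← hx, hx0]
      rfl
  -- basic facts for an F-valuation
  have wfacts : ∀ w : N → WithTop ℝ, IsFValuation p k N v F lam w → (∃ x : N, w x ≠ ⊤) →
      (w 0 = ⊤) ∧ (∀ x : N, w (-x) = w x) ∧ (∀ x : N, w x = ⊤ ↔ x = 0) := by
    intro w hw hnt
    obtain ⟨⟨hws, hwa⟩, hwF⟩ := hw
    have hw0 : w 0 = ⊤ := by
      have h := hws 0 0
      rw [zero_smul, hv0, top_add] at h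
      exact h
    have hwneg : ∀ x : N, w (-x) = w x := by
      intro x
      rw [← neg_one_smul (Bk p k) x, hws, hvneg1, zero_add]
    refine ⟨hw0, hwneg, ?_⟩
    let P : Submodule (Bk p k) N :=
      { carrier := {x | w x = ⊤}
        add_mem' := by
          intro a b ha hb
          simp only [Set.mem_setOf_eq] at *
          have h := hwa a b
          rw [ha, hb, min_self] at h
          exact top_le_iff.mp h
        zero_mem' := hw0
        smul_mem' := by
          intro c x hx
          simp only [Set.mem_setOf_eq] at *
          rw [hws, hx, add_top] }
    have hmem : ∀ x : N, x ∈ P ↔ w x = ⊤ := fun _ => Iff.rfl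
    have hstep : ∀ x ∈ P, F x ∈ P := by
      intro x hx
      rw [hmem] at *
      rw [hwF, hx, top_add]
    have hstep' : ∀ x : N, F x ∈ P → x ∈ P := by
      intro x hx
      rw [hmem] at *
      rw [hwF] at hx
      rcases WithTop.add_eq_top.mp hx with h | h
      · exact h
      · exact absurd h WithTop.coe_ne_top
    rcases hsimple P hstep hstep' with hbot | htop
    · intro x
      constructor
      · intro hx
        have hxP : x ∈ P := hx
        rw [hbot] at hxP
        simpa using hxP
      · intro hx; rw [hx]; exact hw0
    · obtain ⟨x, hx⟩ := hnt
      have hxP : x ∈ P := by rw [htop]; trivial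
      exact absurd (hmem x |>.mp hxP) hx
  have hk₁ := wfacts w₁ h₁ hnt₁
  have hk₂ := wfacts w₂ h₂ hnt₂
  -- a basis vector with its isoclinic data
  obtain ⟨ι, b, hb⟩ := hiso
  have : Nonempty ι := b.index_nonempty
  obtain ⟨i0⟩ := this
  set x₀ : N := b i0 with hx₀def
  obtain ⟨s, r, hspos, hFs, hrs⟩ := hb i0
  have hx₀ : x₀ ≠ 0 := b.ne_zero i0
  -- reduce lam = r/s to lowest terms r₀/s₀
  set g : ℕ := Int.gcd r (s : ℤ) with hgdef
  have hgpos : 0 < g := Int.gcd_pos_iff.mpr (Or.inr (by exact_mod_cast hspos.ne'))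
  have hgr : (g : ℤ) ∣ r := Int.gcd_dvd_left _ _
  have hgs : (g : ℤ) ∣ (s : ℤ) := Int.gcd_dvd_right _ _
  set r₀ : ℤ := r / (g : ℤ) with hr₀def
  set s₀ : ℕ := s / g with hs₀def
  have hs₀int : (s₀ : ℤ) = (s : ℤ) / (g : ℤ) := Int.natCast_ediv s g
  have hcop : Int.gcd r₀ (s₀ : ℤ) = 1 := by
    rw [hr₀def, hs₀int]
    exact Int.gcd_div_gcd_div_gcd (by exact_mod_cast hgpos)
  have hrg : r₀ * (g : ℤ) = r := Int.ediv_mul_cancel hgr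
  have hsgnat : s₀ * g = s := Nat.div_mul_cancel (Int.ofNat_dvd.mp hgs)
  have hs₀pos : 0 < s₀ :=
    Nat.div_pos (Nat.le_of_dvd hspos (Int.ofNat_dvd.mp hgs)) hgpos
  have hgR : (g : ℝ) ≠ 0 := Nat.cast_ne_zero.mpr hgpos.ne'
  have hlam₀ : (r₀ : ℝ) = lam * (s₀ : ℝ) := by
    refine mul_right_cancel₀ hgR ?_
    have h1 : ((r₀ * (g:ℤ) : ℤ) : ℝ) = lam * ((s₀ * g : ℕ) : ℝ) := by
      rw [hrg, hsgnat]; exact_mod_cast hrs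
    push_cast at h1
    rw [h1]; ring
  -- the Frobenius-periodic vector z
  set q : ℕ := p ^ (g * s₀) with hqdef
  have hp2 : 2 ≤ p := (Fact.out (p := p.Prime)).two_le
  have hgs₀ : g * s₀ ≠ 0 := Nat.mul_ne_zero hgpos.ne' hs₀pos.ne'
  have hq2 : 2 ≤ q := le_trans hp2 (Nat.le_self_pow hgs₀ p)
  have hF0 : F 0 = 0 := by
    have h := hFadd 0 0
    rw [add_zero] at h
    exact (left_eq_add.mp h)
  have hFit0 : ∀ m : ℕ, F^[m] 0 = 0 := fun m => Function.iterate_fixed hF0 m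
  have hFit_add : ∀ (m : ℕ) (x y : N), F^[m] (x + y) = F^[m] x + F^[m] y := by
    intro m
    induction m with
    | zero => intro x y; rfl
    | succ m ih =>
        intro x y
        rw [Function.iterate_succ_apply', Function.iterate_succ_apply',
          Function.iterate_succ_apply', ih, hFadd]
  have hFit_smul : ∀ (m : ℕ) (a : Bk p k) (x : N),
      F^[m] (a • x) = ((⇑(σB p k))^[m] a) • F^[m] x := by
    intro m
    induction m with
    | zero => intro a x; rfl
    | succ m ih =>
        intro a x
        rw [Function.iterate_succ_apply', ih, hFsmul, Function.iterate_succ_apply',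
          Function.iterate_succ_apply']
  have hFit_sum : ∀ (m : ℕ) (tt : ℕ → N) (T' : Finset ℕ),
      F^[m] (∑ j ∈ T', tt j) = ∑ j ∈ T', F^[m] (tt j) := by
    intro m tt T'
    induction T' using Finset.induction with
    | empty => simpa using hFit0 m
    | insert _ _ ha ih =>
        rename_i a T''
        rw [Finset.sum_insert ha, Finset.sum_insert ha, hFit_add, ih]
  set T : k → ℕ → N := fun u j =>
    cB p k (u ^ p ^ (j * s₀)) • (((p:ℕ) : Bk p k) ^ (-(j:ℤ) * r₀) • F^[j * s₀] x₀) with hT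
  set zfun : k → N := fun u => ∑ j ∈ Finset.range g, T u j with hzfun
  have hTshift : ∀ (u : k) (j : ℕ),
      F^[s₀] (T u j) = ((p:ℕ) : Bk p k) ^ (r₀ : ℤ) • T u (j+1) := by
    intro u j
    have e1 : s₀ + j * s₀ = (j+1) * s₀ := by ring
    have e2 : (u ^ p ^ (j * s₀)) ^ p ^ s₀ = u ^ p ^ ((j+1) * s₀) := by
      rw [← pow_mul, ← pow_add]
      congr 1
      congr 1
      omega
    simp only [hT]
    rw [hFit_smul, hFit_smul, sigmaB_iter_cB, sigmaB_iter_ppow,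
      ← Function.iterate_add_apply, e1, e2]
    simp only [smul_smul]
    congr 1
    push_cast
    rw [mul_comm (((p:ℕ) : Bk p k) ^ (r₀ : ℤ)), mul_assoc, ← zpow_add₀ hBp0]
    congr 1
    congr 1
    ring
  have hTwrap : ∀ u : k, u ^ q = u → T u g = T u 0 := by
    intro u hu
    simp only [hT]
    have e3 : g * s₀ = s := by rw [mul_comm]; exact hsgnat
    rw [e3]
    have e4 : u ^ p ^ s = u := by rw [← e3]; exact hu
    rw [e4, hFs]
    simp only [smul_smul, zero_mul, pow_zero, pow_one, Function.iterate_zero_apply,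
      Nat.cast_zero, neg_zero, zpow_zero, mul_one, one_smul]
    congr 1
    rw [← zpow_add₀ hBp0, ← hrg]
    rw [show (-(g:ℤ) * (r₀:ℤ) + r₀ * (g:ℤ)) = 0 by ring, zpow_zero, mul_one]
  have hzF : ∀ u : k, u ^ q = u → F^[s₀] (zfun u) = ((p:ℕ) : Bk p k) ^ (r₀ : ℤ) • zfun u := by
    intro u hu
    simp only [hzfun]
    rw [hFit_sum]
    rw [Finset.sum_congr rfl (fun j _ => hTshift u j), ← Finset.smul_sum]
    congr 1
    have h2 := Finset.sum_range_succ' (T u) g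
    have h3 := Finset.sum_range_succ (T u) g
    rw [h3, hTwrap u hu] at h2
    exact (add_right_cancel h2).symm
  -- find u with zfun u ≠ 0, via linear independence of characters
  have hexu : ∃ u : k, u ^ q = u ∧ zfun u ≠ 0 := by
    by_contra hall
    push_neg at hall
    let M : Submonoid k :=
      { carrier := {u : k | u ^ q = u}
        mul_mem' := by
          intro a b ha hb
          simp only [Set.mem_setOf_eq] at *
          rw [mul_pow, ha, hb]
        one_mem' := by simp }
    let f : Fin g → (M →* Bk p k) := fun j =>
      (cBHom p k).comp ((powMonoidHom (p ^ ((j : ℕ) * s₀))).comp M.subtype)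
    have hflt : ∀ i j : Fin g, i < j → f i ≠ f j := by
      intro i j hij hfeq
      have hjg := j.isLt
      have hq1 : q - 1 ≠ 0 := by omega
      haveI : NeZero ((q - 1 : ℕ) : k) := by
        constructor
        intro hc
        have hdvd : p ∣ q - 1 := (CharP.cast_eq_zero_iff k p _).mp hc
        have hdvdq : p ∣ q := dvd_pow_self p hgs₀
        have h1 : p ∣ 1 := by
          have := Nat.dvd_sub hdvdq hdvd
          rwa [Nat.sub_sub_self (by omega)] at this
        exact Nat.Prime.one_lt (Fact.out (p := p.Prime)) |>.ne' (Nat.dvd_one.mp h1)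
      obtain ⟨ζ, hζ⟩ := HasEnoughRootsOfUnity.exists_primitiveRoot k (q - 1)
      have hζq : ζ ^ q = ζ := by
        calc ζ ^ q = ζ ^ (q - 1) * ζ := by rw [← pow_succ]; congr 1; omega
        _ = ζ := by rw [hζ.pow_eq_one, one_mul]
      have happ : f i ⟨ζ, hζq⟩ = f j ⟨ζ, hζq⟩ := by rw [hfeq]
      have h2 : ζ ^ p ^ ((i : ℕ) * s₀) = ζ ^ p ^ ((j : ℕ) * s₀) := cB_injective p k happ
      have hζne : ζ ≠ 0 := hζ.ne_zero hq1
      have hab : p ^ ((i : ℕ) * s₀) < p ^ ((j : ℕ) * s₀) :=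
        Nat.pow_lt_pow_right (by omega) ((Nat.mul_lt_mul_right hs₀pos).mpr hij)
      have h3 : ζ ^ (p ^ ((j : ℕ) * s₀) - p ^ ((i : ℕ) * s₀)) = 1 := by
        have h4 : ζ ^ p ^ ((i : ℕ) * s₀) * ζ ^ (p ^ ((j : ℕ) * s₀) - p ^ ((i : ℕ) * s₀))
            = ζ ^ p ^ ((i : ℕ) * s₀) * 1 := by
          rw [mul_one, ← pow_add, h2]
          congr 1
          omega
        exact mul_left_cancel₀ (pow_ne_zero _ hζne) h4
      have h5 : (q - 1) ∣ (p ^ ((j : ℕ) * s₀) - p ^ ((i : ℕ) * s₀)) :=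
        (hζ.pow_eq_one_iff_dvd _).mp h3
      have hble : 2 * p ^ ((j : ℕ) * s₀) ≤ q := by
        have h6 : (j : ℕ) * s₀ ≤ g * s₀ - 1 := by
          have h7 : ((j : ℕ) + 1) * s₀ ≤ g * s₀ := Nat.mul_le_mul_right _ (by omega)
          rw [add_mul, one_mul] at h7
          omega
        calc 2 * p ^ ((j : ℕ) * s₀) ≤ p * p ^ (g * s₀ - 1) :=
              Nat.mul_le_mul hp2 (Nat.pow_le_pow_right (by omega) h6)
        _ = p ^ (g * s₀ - 1 + 1) := (pow_succ' p _).symm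
        _ = q := by rw [hqdef]; congr 1; omega
      have h9 : q - 1 ≤ p ^ ((j : ℕ) * s₀) - p ^ ((i : ℕ) * s₀) :=
        Nat.le_of_dvd (by omega) h5
      have h10 : 0 < p ^ ((i : ℕ) * s₀) := Nat.pow_pos (by omega)
      omega
    have hfinj : Function.Injective f := by
      intro i j hij
      by_contra hne
      rcases lt_or_gt_of_ne hne with h | h
      · exact hflt i j h hij
      · exact hflt j i h hij.symm
    have hLI : LinearIndependent (Bk p k) (fun j : Fin g => ((f j : M → Bk p k))) :=
      (linearIndependent_monoidHom M (Bk p k)).comp f hfinj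
    let e := Module.finBasis (Bk p k) N
    have hx₀r : e.repr x₀ ≠ 0 := fun hc => hx₀ (e.repr.map_eq_zero_iff.mp hc)
    obtain ⟨t₀, ht₀⟩ := Finsupp.ne_iff.mp hx₀r
    have ht₀' : e.repr x₀ t₀ ≠ 0 := by simpa using ht₀
    have hfapp : ∀ (j : Fin g) (u : M), f j u = cB p k ((u : k) ^ p ^ ((j : ℕ) * s₀)) :=
      fun j u => rfl
    have hcomb : ∑ j : Fin g,
        ((((p:ℕ) : Bk p k) ^ (-((j:ℕ):ℤ) * r₀)) * e.repr (F^[(j:ℕ) * s₀] x₀) t₀)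
          • ((f j : M → Bk p k)) = 0 := by
      funext u
      simp only [Finset.sum_apply, Pi.smul_apply, smul_eq_mul, Pi.zero_apply]
      have h0 : zfun (u : k) = 0 := hall (u : k) u.2
      have h1 : e.repr (zfun (u : k)) t₀ = 0 := by rw [h0]; simp
      rw [← h1]
      simp only [hzfun]
      rw [map_sum, Finset.sum_apply']
      rw [← Fin.sum_univ_eq_sum_range (fun j => (e.repr (T (u : k) j)) t₀) g]
      apply Finset.sum_congr rfl
      intro j _
      rw [hfapp]
      simp only [hT, map_smul, Finsupp.smul_apply, smul_eq_mul]
      ring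
    haveI : NeZero g := ⟨hgpos.ne'⟩
    have h00 := Fintype.linearIndependent_iff.mp hLI _ hcomb 0
    simp only [Fin.val_zero, Nat.cast_zero, neg_zero, zero_mul, zpow_zero, one_mul,
      Function.iterate_zero_apply] at h00
    exact ht₀' h00
  obtain ⟨u, huq, hz0⟩ := hexu
  set z : N := zfun u with hzdef
  have hzrel : F^[s₀] z = ((p:ℕ) : Bk p k) ^ (r₀ : ℤ) • z := hzF u huq
  -- the span of the F-iterates of z is everything
  set P : Submodule (Bk p k) N :=
    Submodule.span (Bk p k) (Set.range (fun i : Fin s₀ => F^[(i : ℕ)] z)) with hPdef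
  have hzP : z ∈ P := Submodule.subset_span ⟨⟨0, hs₀pos⟩, rfl⟩
  have hgenP : ∀ m : ℕ, m < s₀ → F^[m] z ∈ P := fun m hm => Submodule.subset_span ⟨⟨m, hm⟩, rfl⟩
  have hPF : ∀ x ∈ P, F x ∈ P := by
    intro x hx
    induction hx using Submodule.span_induction with
    | mem y hy =>
        obtain ⟨i, rfl⟩ := hy
        by_cases hi : (i : ℕ) + 1 < s₀
        · have : F (F^[(i : ℕ)] z) = F^[(i : ℕ) + 1] z :=
            (Function.iterate_succ_apply' F _ z).symm
          rw [this]
          exact hgenP _ hi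
        · have hieq : (i : ℕ) + 1 = s₀ := by have := i.isLt; omega
          have h2 : F (F^[(i : ℕ)] z) = F^[(i : ℕ) + 1] z :=
            (Function.iterate_succ_apply' F _ z).symm
          rw [h2, hieq, hzrel]
          exact Submodule.smul_mem _ _ hzP
    | zero => rw [hF0]; exact P.zero_mem
    | add a c ha hc iha ihc => rw [hFadd]; exact P.add_mem iha ihc
    | smul c a ha iha => rw [hFsmul]; exact P.smul_mem _ iha
  have hQex : ∀ x ∈ P, ∃ y ∈ P, F y = x := by
    intro x hx
    let Q : Submodule (Bk p k) N :=
      { carrier := {x | ∃ y ∈ P, F y = x}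
        zero_mem' := ⟨0, P.zero_mem, hF0⟩
        add_mem' := by
          rintro a c ⟨ya, hya, rfl⟩ ⟨yc, hyc, rfl⟩
          exact ⟨ya + yc, P.add_mem hya hyc, hFadd _ _⟩
        smul_mem' := by
          rintro c x ⟨y, hy, rfl⟩
          refine ⟨(σB p k).symm c • y, P.smul_mem _ hy, ?_⟩
          rw [hFsmul, RingEquiv.apply_symm_apply] }
    suffices hPQ : P ≤ Q from hPQ hx
    rw [hPdef, Submodule.span_le]
    rintro _ ⟨i, rfl⟩
    rcases Nat.eq_zero_or_pos (i : ℕ) with h0 | hpos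
    · show ∃ y ∈ P, F y = F^[(i : ℕ)] z
      rw [h0]
      refine ⟨((p:ℕ) : Bk p k) ^ (-r₀ : ℤ) • F^[s₀ - 1] z,
        P.smul_mem _ (hgenP _ (by omega)), ?_⟩
      rw [hFsmul]
      have hfix : σB p k (((p:ℕ) : Bk p k) ^ (-r₀ : ℤ)) = ((p:ℕ) : Bk p k) ^ (-r₀ : ℤ) := by
        rw [map_zpow₀, map_natCast]
      rw [hfix]
      have h1 : F (F^[s₀ - 1] z) = F^[s₀] z := by
        conv_rhs => rw [show s₀ = (s₀ - 1) + 1 from by omega]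
        exact (Function.iterate_succ_apply' F _ z).symm
      rw [h1, hzrel, smul_smul, ← zpow_add₀ hBp0, neg_add_cancel, zpow_zero, one_smul]
      rfl
    · refine ⟨F^[(i : ℕ) - 1] z, hgenP _ (by have := i.isLt; omega), ?_⟩
      show F (F^[(i : ℕ) - 1] z) = F^[(i : ℕ)] z
      conv_rhs => rw [show (i : ℕ) = ((i : ℕ) - 1) + 1 from by omega]
      exact (Function.iterate_succ_apply' F _ z).symm
  have hPF' : ∀ x : N, F x ∈ P → x ∈ P := by
    intro x hx
    obtain ⟨y, hy, hxy⟩ := hQex _ hx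
    rwa [← hFbij.injective hxy]
  have hPtop : P = ⊤ := by
    rcases hsimple P hPF hPF' with h | h
    · exfalso
      rw [h] at hzP
      exact hz0 (by simpa using hzP)
    · exact h
  -- values of z
  have hwz₁ : w₁ z ≠ ⊤ := fun h => hz0 ((hk₁.2.2 z).mp h)
  have hwz₂ : w₂ z ≠ ⊤ := fun h => hz0 ((hk₂.2.2 z).mp h)
  obtain ⟨W₁, hW₁⟩ := WithTop.ne_top_iff_exists.mp hwz₁
  obtain ⟨W₂, hW₂⟩ := WithTop.ne_top_iff_exists.mp hwz₂
  refine ⟨W₂ - W₁, ?_⟩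
  intro y
  by_cases hy : y = 0
  · rw [hy, hk₁.1, hk₂.1, top_add]
  -- a representation of y
  have hyP : y ∈ P := by rw [hPtop]; trivial
  rw [hPdef] at hyP
  rw [Submodule.mem_span_range_iff_exists_fun] at hyP
  obtain ⟨a, ha⟩ := hyP
  have hch : ∀ i : Fin s₀, ∃ m : ℤ, a i ≠ 0 → v (a i) = ((m : ℝ) : WithTop ℝ) := by
    intro i
    by_cases h : a i = 0
    · exact ⟨0, fun hc => absurd h (by exact hc)⟩
    · obtain ⟨m, hm⟩ := hvint _ h
      exact ⟨m, fun _ => hm⟩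
  choose n hn using hch
  set T' : Finset (Fin s₀) := Finset.univ.filter (fun i => a i ≠ 0) with hT'
  have hTne : T'.Nonempty := by
    by_contra hc
    rw [Finset.not_nonempty_iff_eq_empty] at hc
    apply hy
    rw [← ha]
    apply Finset.sum_eq_zero
    intro i _
    by_cases h : a i = 0
    · rw [h, zero_smul]
    · exfalso
      have hiT : i ∈ T' := by
        rw [hT']
        exact Finset.mem_filter.mpr ⟨Finset.mem_univ i, h⟩
      rw [hc] at hiT
      simp at hiT
  obtain ⟨i₀, hi₀T, hi₀min⟩ :=
    T'.exists_min_image (fun i => (n i : ℝ) + (i : ℕ) * lam) hTne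
  have hi₀ne : a i₀ ≠ 0 := (Finset.mem_filter.mp hi₀T).2
  -- distinctness of the values
  have hdist : ∀ i j : Fin s₀,
      (n i : ℝ) + (i : ℕ) * lam = (n j : ℝ) + (j : ℕ) * lam → i = j := by
    intro i j hij
    have h2 : ((n i * (s₀ : ℤ) + (i : ℕ) * r₀ : ℤ) : ℝ)
        = ((n j * (s₀ : ℤ) + (j : ℕ) * r₀ : ℤ) : ℝ) := by
      push_cast
      rw [hlam₀]
      linear_combination (s₀ : ℝ) * hij
    have h3 : n i * (s₀ : ℤ) + (i : ℕ) * r₀ = n j * (s₀ : ℤ) + (j : ℕ) * r₀ := by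
      exact_mod_cast h2
    have h4 : (s₀ : ℤ) ∣ (((i : ℕ) : ℤ) - ((j : ℕ) : ℤ)) * r₀ :=
      ⟨n j - n i, by linear_combination h3⟩
    have h5 : (s₀ : ℤ) ∣ (((i : ℕ) : ℤ) - ((j : ℕ) : ℤ)) :=
      Int.dvd_of_dvd_mul_left_of_gcd_one h4 (by rw [Int.gcd_comm]; exact hcop)
    have h6 : (((i : ℕ) : ℤ) - ((j : ℕ) : ℤ)) = 0 := by
      refine Int.eq_zero_of_abs_lt_dvd h5 ?_
      have hi := i.isLt
      have hj := j.isLt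
      rw [abs_lt]
      omega
    exact Fin.ext (by omega)
  -- the valuation computation
  have wval : ∀ w : N → WithTop ℝ, IsFValuation p k N v F lam w →
      (∀ x : N, w x = ⊤ ↔ x = 0) → (∀ x : N, w (-x) = w x) → w 0 = ⊤ →
      w y = ((n i₀ : ℝ) : WithTop ℝ) + (w z + ((((i₀ : ℕ) : ℝ) * lam : ℝ) : WithTop ℝ)) := by
    intro w hw hker hwneg hw0
    obtain ⟨⟨hws, hwa⟩, hwF⟩ := hw
    have hwz : w z ≠ ⊤ := fun h => hz0 ((hker z).mp h)
    obtain ⟨Wz, hWz⟩ := WithTop.ne_top_iff_exists.mp hwz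
    have hwiter : ∀ (m : ℕ) (x : N),
        w (F^[m] x) = w x + ((((m : ℕ) : ℝ) * lam : ℝ) : WithTop ℝ) := by
      intro m
      induction m with
      | zero => intro x; simp
      | succ m ih =>
          intro x
          rw [Function.iterate_succ_apply', hwF, ih, add_assoc, ← WithTop.coe_add]
          congr 2
          push_cast
          ring
    have hterm : ∀ i : Fin s₀, a i ≠ 0 →
        w (a i • F^[(i : ℕ)] z) = (((n i : ℝ) + Wz + ((i : ℕ) : ℝ) * lam : ℝ) : WithTop ℝ) := by
      intro i hi
      rw [hws, hwiter, hn i hi, ← hWz, ← WithTop.coe_add, ← WithTop.coe_add]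
      congr 1
      ring
    have hfin : w (a i₀ • F^[(i₀ : ℕ)] z) ≠ ⊤ := by
      rw [hterm i₀ hi₀ne]
      exact WithTop.coe_ne_top
    have hminlt : ∀ j : Fin s₀, j ≠ i₀ →
        w (a i₀ • F^[(i₀ : ℕ)] z) < w (a j • F^[(j : ℕ)] z) := by
      intro j hj
      by_cases hja : a j = 0
      · rw [hterm i₀ hi₀ne, hja, zero_smul, hw0]
        exact WithTop.coe_lt_top _
      · rw [hterm i₀ hi₀ne, hterm j hja, WithTop.coe_lt_coe]
        have hle := hi₀min j (Finset.mem_filter.mpr ⟨Finset.mem_univ j, hja⟩)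
        have hne : (n i₀ : ℝ) + (i₀ : ℕ) * lam ≠ (n j : ℝ) + (j : ℕ) * lam :=
          fun hc => hj (hdist i₀ j hc).symm
        have : (n i₀ : ℝ) + (i₀ : ℕ) * lam < (n j : ℝ) + (j : ℕ) * lam :=
          lt_of_le_of_ne hle hne
        linarith
    have happly := val_sum_eq w hwa hwneg hw0 (fun i : Fin s₀ => a i • F^[(i : ℕ)] z)
      i₀ hfin hminlt
    rw [← ha, happly, hterm i₀ hi₀ne, ← hWz, ← WithTop.coe_add, ← WithTop.coe_add]
    congr 1
    ring
  rw [wval w₁ h₁ hk₁.2.2 hk₁.2.1 hk₁.1, wval w₂ h₂ hk₂.2.2 hk₂.2.1 hk₂.1,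
    ← hW₁, ← hW₂, ← WithTop.coe_add, ← WithTop.coe_add, ← WithTop.coe_add,
    ← WithTop.coe_add, ← WithTop.coe_add, WithTop.coe_eq_coe]
  ring

end DieudonneStmt
end
end

section
/- Let M be a non-zero free W-module of finite rank with an injective σ-semilinear map F : M → M, and set N = M ⊗_W B(k). Fix q ∈ ℕ, let α_q be the maximal integer with F^qM ⊆ p^{α_q}M, and let β_q be the minimal integer with p^{β_q}M ⊆ F^qM (both exist, and β_q ≥ α_q). Then δ_q = β_q − α_q is the minimal non-negative integer δ with the following property: for every W-linear endomorphism φ of M, the induced B(k)-linear endomorphism of N maps F^qM into p^{−δ}·F^qM (equivalently, p^δ·φ maps F^qM into F^qM). -/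
noncomputable section

namespace DieudonneStmt

variable (p : ℕ) [Fact p.Prime] (k : Type*) [Field k] [IsAlgClosed k] [CharP k p]
variable (M : Type*) [AddCommGroup M] [Module (WittVector p k) M]

/-- for a non-zero free `W(k)`-module `M` of finite rank with an injective
`σ`-semilinear `F : M → M` and `q ∈ ℕ`, the maximal `α` with `F^qM ⊆ p^αM` and the minimal
`β` with `p^βM ⊆ F^qM` exist, `α ≤ β`, and `δ = β - α` is the minimal non-negative integer
such that `p^δ·φ` maps `F^qM` into `F^qM` for every `W(k)`-linear endomorphism `φ` of `M`. -/
theorem delta_q_eq_beta_sub_alpha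
    [Module.Free (WittVector p k) M] [Module.Finite (WittVector p k) M] [Nontrivial M]
    (F : M → M)
    (hFadd : ∀ x y, F (x + y) = F x + F y)
    (hFsmul : ∀ (a : WittVector p k) (x : M), F (a • x) = WittVector.frobeniusEquiv p k a • F x)
    (hFinj : Function.Injective F)
    (q : ℕ) :
    ∃ α β : ℕ,
      IsGreatest {a : ℕ | ∀ x ∈ Submodule.span (WittVector p k) (Set.range (F^[q])),
        ∃ y : M, x = ((p : WittVector p k) ^ a) • y} α ∧
      IsLeast {b : ℕ | ∀ x : M,
        ((p : WittVector p k) ^ b) • x ∈ Submodule.span (WittVector p k) (Set.range (F^[q]))} β ∧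
      α ≤ β ∧
      IsLeast {δ : ℕ | ∀ φ : M →ₗ[WittVector p k] M,
        ∀ x ∈ Submodule.span (WittVector p k) (Set.range (F^[q])),
          ((p : WittVector p k) ^ δ) • φ x ∈
            Submodule.span (WittVector p k) (Set.range (F^[q]))} (β - α) := by
  classical
  haveI : IsDiscreteValuationRing (WittVector p k) := WittVector.isDiscreteValuationRing
  have hirr : Irreducible (p : WittVector p k) := WittVector.irreducible p
  have hp0 : (p : WittVector p k) ≠ 0 := hirr.ne_zero
  have hpu : ¬ IsUnit (p : WittVector p k) := hirr.not_isUnit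
  set W := WittVector p k
  set S : Submodule W M := Submodule.span W (Set.range (F^[q])) with hSdef
  -- basic properties of g := F^[q]
  have hF0 : F 0 = 0 := by
    have h := hFadd 0 0
    rw [add_zero] at h
    exact left_eq_add.mp h
  have hg0 : ∀ n : ℕ, F^[n] 0 = 0 := by
    intro n; induction n with
    | zero => rfl
    | succ n ih => rw [Function.iterate_succ_apply', ih, hF0]
  have hgadd : ∀ (n : ℕ) (x y : M), F^[n] (x + y) = F^[n] x + F^[n] y := by
    intro n; induction n with
    | zero => intro x y; rfl
    | succ n ih =>
        intro x y
        rw [Function.iterate_succ_apply', Function.iterate_succ_apply',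
          Function.iterate_succ_apply', ih, hFadd]
  have hgsmul : ∀ (n : ℕ) (a : W) (x : M),
      F^[n] (a • x) = ((⇑(WittVector.frobeniusEquiv p k))^[n] a) • F^[n] x := by
    intro n; induction n with
    | zero => intro a x; rfl
    | succ n ih =>
        intro a x
        rw [Function.iterate_succ_apply', Function.iterate_succ_apply',
          Function.iterate_succ_apply', ih, hFsmul]
  have hgsum : ∀ (s : Finset (Module.Free.ChooseBasisIndex W M))
      (f : Module.Free.ChooseBasisIndex W M → M),
      F^[q] (∑ j ∈ s, f j) = ∑ j ∈ s, F^[q] (f j) := by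
    intro s f
    induction s using Finset.induction with
    | empty => simpa using hg0 q
    | insert _ _ hx ih => rw [Finset.sum_insert hx, Finset.sum_insert hx, hgadd, ih]
  have hginj : Function.Injective (F^[q]) := hFinj.iterate q
  have hσ0 : ∀ n : ℕ, (⇑(WittVector.frobeniusEquiv p k))^[n] (0 : W) = 0 := by
    intro n; induction n with
    | zero => rfl
    | succ n ih => rw [Function.iterate_succ_apply', ih, map_zero]
  have hσsurj : ∀ c : W, ∃ d : W, (⇑(WittVector.frobeniusEquiv p k))^[q] d = c := fun c =>
    ⟨(⇑(WittVector.frobeniusEquiv p k).symm)^[q] c,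
      Function.LeftInverse.iterate (WittVector.frobeniusEquiv p k).apply_symm_apply q c⟩
  set ι := Module.Free.ChooseBasisIndex W M with hι
  set b : Module.Basis ι W M := Module.Free.chooseBasis W M with hb
  haveI : Nonempty ι := b.index_nonempty
  obtain ⟨i₀⟩ := (inferInstance : Nonempty ι)
  have gmem : ∀ x : M, F^[q] x ∈ S := fun x => Submodule.subset_span ⟨x, rfl⟩
  -- linear independence of the images of the basis
  have hli : ∀ v : ι → W, (∑ i, v i • F^[q] (b i)) = 0 → ∀ i, v i = 0 := by
    intro v hv i
    choose d hd using fun j => hσsurj (v j)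
    have h1 : F^[q] (∑ j, d j • b j) = 0 := by
      rw [hgsum, ]
      simp_rw [hgsmul, hd]
      exact hv
    have h2 : (∑ j, d j • b j) = 0 := by
      apply hginj; rw [h1, hg0]
    have h3 : d i = 0 := by
      have := Fintype.linearIndependent_iff.mp b.linearIndependent d h2
      exact this i
    rw [← hd i, h3, hσ0]
  -- the coefficient matrix
  set A : Matrix ι ι W := Matrix.of fun j i => b.repr (F^[q] (b i)) j with hA
  have hArep : ∀ i, F^[q] (b i) = ∑ j, A j i • b j := fun i => (b.sum_repr _).symm
  have hswap : ∀ v : ι → W, (∑ i, v i • F^[q] (b i)) = ∑ j, (∑ i, A j i * v i) • b j := by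
    intro v
    calc (∑ i, v i • F^[q] (b i)) = ∑ i, ∑ j, (A j i * v i) • b j := by
          simp_rw [hArep, Finset.smul_sum, smul_smul, mul_comm]
      _ = ∑ j, (∑ i, A j i * v i) • b j := by
          rw [Finset.sum_comm]; simp_rw [Finset.sum_smul]
  have hdet : A.det ≠ 0 := by
    intro h
    obtain ⟨v, hv0, hv⟩ := (Matrix.exists_mulVec_eq_zero_iff).mpr h
    apply hv0
    funext i
    refine hli v ?_ i
    rw [hswap]
    have : ∀ j, (∑ i, A j i * v i) = 0 := by
      intro j
      have := congrFun hv j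
      simpa [Matrix.mulVec, dotProduct] using this
    simp [this]
  -- det A • (b l) ∈ S via adjugate
  have hdetS : ∀ l, A.det • b l ∈ S := by
    intro l
    have h1 : (∑ i, (A.adjugate i l) • F^[q] (b i)) = A.det • b l := by
      rw [hswap]
      have h2 : ∀ j, (∑ i, A j i * A.adjugate i l) = (A * A.adjugate) j l := by
        intro j; rw [Matrix.mul_apply]
      simp_rw [h2, Matrix.mul_adjugate, Matrix.smul_apply, Matrix.one_apply, smul_ite,
        smul_eq_mul, mul_one, mul_zero]
      simp [Finset.sum_ite_eq]
    rw [← h1]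
    exact Submodule.sum_mem _ fun i _ => Submodule.smul_mem _ _ (gmem (b i))
  -- a power of p multiplies M into S
  obtain ⟨nb, u, hu⟩ := IsDiscreteValuationRing.eq_unit_mul_pow_irreducible hdet hirr
  have hpnS : ∀ l, ((p : W) ^ nb) • b l ∈ S := by
    intro l
    have h1 : ((u⁻¹ : Wˣ) : W) • (A.det • b l) ∈ S := Submodule.smul_mem _ _ (hdetS l)
    have h2 : ((u⁻¹ : Wˣ) : W) • (A.det • b l) = ((p : W) ^ nb) • b l := by
      rw [smul_smul, hu, ← mul_assoc, Units.inv_mul, one_mul]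
    rwa [h2] at h1
  have hBne : ∃ bnd : ℕ, ∀ x : M, ((p : W) ^ bnd) • x ∈ S := by
    refine ⟨nb, fun x => ?_⟩
    have hx : x = ∑ j, b.repr x j • b j := (b.sum_repr x).symm
    rw [hx, Finset.smul_sum]
    refine Submodule.sum_mem _ fun j _ => ?_
    rw [smul_comm]
    exact Submodule.smul_mem _ _ (hpnS j)
  -- the α set
  set Aset : Set ℕ := {a : ℕ | ∀ x ∈ S, ∃ y : M, x = ((p : W) ^ a) • y} with hAset
  have h0A : (0 : ℕ) ∈ Aset := by
    intro x _hx
    exact ⟨x, by rw [pow_zero, one_smul]⟩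
  -- a nonzero element of S with a distinguished nonzero coordinate
  have hs0 : F^[q] (b i₀) ≠ 0 := by
    intro h
    have : b i₀ = 0 := hginj (by rw [h, hg0])
    exact b.ne_zero i₀ this
  obtain ⟨j₀, hj₀⟩ : ∃ j, b.repr (F^[q] (b i₀)) j ≠ 0 := by
    by_contra h
    push_neg at h
    apply hs0
    have := b.sum_repr (F^[q] (b i₀))
    rw [← this]
    simp [h]
  obtain ⟨m₀, u₀, hu₀⟩ := IsDiscreteValuationRing.eq_unit_mul_pow_irreducible hj₀ hirr
  have hAbdd : BddAbove Aset := by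
    refine ⟨m₀, fun a ha => ?_⟩
    obtain ⟨y, hy⟩ := ha (F^[q] (b i₀)) (gmem _)
    have h1 : b.repr (F^[q] (b i₀)) j₀ = ((p : W) ^ a) * b.repr y j₀ := by
      rw [hy, map_smul]; rfl
    have h2 : ((p : W) ^ a) ∣ ((p : W) ^ m₀) := by
      rw [← Units.dvd_mul_left (u := u₀), ← hu₀, h1]
      exact Dvd.intro _ rfl
    exact (pow_dvd_pow_iff hp0 hpu).mp h2
  set α : ℕ := sSup Aset with hα
  have hαmem : α ∈ Aset := Nat.sSup_mem ⟨0, h0A⟩ hAbdd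
  have hαgreat : IsGreatest Aset α := ⟨hαmem, fun a ha => le_csSup hAbdd ha⟩
  -- β
  set β : ℕ := Nat.find hBne with hβ
  have hβmem : ∀ x : M, ((p : W) ^ β) • x ∈ S := Nat.find_spec hBne
  have hβleast : IsLeast {b : ℕ | ∀ x : M, ((p : W) ^ b) • x ∈ S} β :=
    ⟨hβmem, fun m hm => Nat.find_min' hBne hm⟩
  -- α ≤ β
  have hαβ : α ≤ β := by
    obtain ⟨y, hy⟩ := hαmem (((p : W) ^ β) • b i₀) (hβmem (b i₀))
    have h1 : ((p : W) ^ β) * b.repr (b i₀) i₀ = ((p : W) ^ α) * b.repr y i₀ := by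
      have := congrArg (fun z => b.repr z i₀) hy
      simpa [map_smul] using this
    rw [Module.Basis.repr_self, Finsupp.single_eq_same, mul_one] at h1
    exact (pow_dvd_pow_iff hp0 hpu).mp ⟨b.repr y i₀, h1⟩
  refine ⟨α, β, hαgreat, hβleast, hαβ, ?_, ?_⟩
  · -- β - α works
    intro φ x hx
    obtain ⟨y, hy⟩ := hαmem x hx
    have h1 : φ x = ((p : W) ^ α) • φ y := by rw [hy, map_smul]
    rw [h1, smul_smul, ← pow_add, Nat.sub_add_cancel hαβ]
    exact hβmem (φ y)
  · -- minimality
    intro δ hδ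
    have key : ∀ x : M, ((p : W) ^ (δ + α)) • x ∈ S := by
      -- α + 1 fails, giving an element of S exactly divisible by p^α
      have hnot : (α + 1) ∉ Aset := fun h => by
        have := le_csSup hAbdd h
        omega
      simp only [hAset, Set.mem_setOf_eq] at hnot
      push_neg at hnot
      obtain ⟨s₀, hs₀S, hs₀⟩ := hnot
      obtain ⟨y₀, hy₀⟩ := hαmem s₀ hs₀S
      -- y₀ has a unit coordinate
      obtain ⟨j₁, hj₁⟩ : ∃ j, IsUnit (b.repr y₀ j) := by
        by_contra h
        push_neg at h
        have hdvd : ∀ j, (p : W) ∣ b.repr y₀ j := by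
          intro j
          have h1 : b.repr y₀ j ∈ IsLocalRing.maximalIdeal W :=
            (IsLocalRing.mem_maximalIdeal _).mpr (mem_nonunits_iff.mpr (h j))
          rw [(IsDiscreteValuationRing.irreducible_iff_uniformizer ((p : W))).mp hirr] at h1
          exact Ideal.mem_span_singleton.mp h1
        choose z hz using hdvd
        have hy : y₀ = (p : W) • (∑ j, z j • b j) := by
          conv_lhs => rw [← b.sum_repr y₀]
          rw [Finset.smul_sum]
          refine Finset.sum_congr rfl fun j _ => ?_
          rw [smul_smul, ← hz j]
        exact hs₀ (∑ j, z j • b j) (by rw [hy₀, hy, smul_smul, ← pow_succ])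
      intro x
      -- build φ sending y₀ to x
      set c : W := b.repr y₀ j₁ with hc
      set φ : M →ₗ[W] M :=
        (LinearMap.toSpanSingleton W M x).comp ((((hj₁.unit⁻¹ : Wˣ) : W)) • (b.coord j₁)) with hφ
      have hφy₀ : φ y₀ = x := by
        have : φ y₀ = ((((hj₁.unit⁻¹ : Wˣ) : W)) * c) • x := by
          simp [hφ, LinearMap.toSpanSingleton_apply, Module.Basis.coord_apply, mul_comm]
        rw [this, hj₁.val_inv_mul, one_smul]
      have h1 : ((p : W) ^ δ) • φ s₀ ∈ S := hδ φ s₀ hs₀S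
      have h2 : φ s₀ = ((p : W) ^ α) • x := by
        rw [hy₀, map_smul, hφy₀]
      rw [h2, smul_smul, ← pow_add] at h1
      exact h1
    have : β ≤ δ + α := Nat.find_min' hBne key
    omega

end DieudonneStmt
end
end

section
/- Let M be a non-zero bi-nilpotent Dieudonné module over k which is generated by an element z ∈ M, with d = dim_k(M/FM) and c = dim_k(M/VM). Then: (i) for every integer q with 0 ≤ q ≤ c, the maximal integer α such that F^qM ⊆ p^αM equals 0 (i.e., F^qM ⊆ M but F^qM ⊄ pM); (ii) for every integer q with 0 ≤ q ≤ d, the minimal integer β such that p^βM ⊆ F^qM equals q (i.e., p^qM ⊆ F^qM but p^qM ⊄ pF^qM). -/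
noncomputable section

namespace DieudonneStmt

variable (p : ℕ) [Fact p.Prime] (k : Type*) [Field k] [IsAlgClosed k] [CharP k p]
variable (M : Type*) [AddCommGroup M] [Module (WittVector p k) M]

/-- The key lemma: if `z` generates `M` and `c` is a lower bound for the number of
generators of `M` over `VM`, then `F^[q] z ∉ pM` for `q ≤ c`. -/
theorem key [Module.Free (WittVector p k) M] [Module.Finite (WittVector p k) M] [Nontrivial M]
    (φ : WittVector p k ≃+* WittVector p k) (F V : M → M)
    (hFadd : ∀ x y, F (x + y) = F x + F y)
    (hFsmul : ∀ (a : WittVector p k) (x : M), F (a • x) = φ a • F x)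
    (hVsmul : ∀ (a : WittVector p k) (x : M), V (a • x) = φ.symm a • V x)
    (hFV : ∀ x, F (V x) = (p : WittVector p k) • x)
    (hVF : ∀ x, V (F x) = (p : WittVector p k) • x)
    (z : M)
    (hz : ∀ P : Submodule (WittVector p k) M,
      z ∈ P → (∀ x ∈ P, F x ∈ P) → (∀ x ∈ P, V x ∈ P) → P = ⊤)
    (c : ℕ)
    (hc2 : ∀ n : ℕ, (∃ x : Fin n → M,
      Submodule.span (WittVector p k) (Set.range V) ⊔
        Submodule.span (WittVector p k) (Set.range x) = ⊤) → c ≤ n)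
    (q : ℕ) (hq : q ≤ c) (w : M) (hw : F^[q] z = (p : WittVector p k) • w) : False := by
  have hp0 : (p : WittVector p k) ≠ 0 := WittVector.p_nonzero p k
  have hpu : ¬ IsUnit (p : WittVector p k) := (WittVector.irreducible p).not_isUnit
  have hFp : ∀ x : M, F ((p : WittVector p k) • x) = (p : WittVector p k) • F x := by
    intro x; rw [hFsmul, map_natCast]
  have hVp : ∀ x : M, V ((p : WittVector p k) • x) = (p : WittVector p k) • V x := by
    intro x; rw [hVsmul, map_natCast]
  have hFiterp : ∀ (n : ℕ) (x : M),
      F^[n] ((p : WittVector p k) • x) = (p : WittVector p k) • F^[n] x := by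
    intro n
    induction n with
    | zero => intro x; simp
    | succ n ih =>
      intro x
      rw [Function.iterate_succ_apply, Function.iterate_succ_apply, hFp, ih]
  have hFinj : Function.Injective F := by
    intro a b hab
    have h1 : (p : WittVector p k) • a = (p : WittVector p k) • b := by
      rw [← hVF a, ← hVF b, hab]
    exact smul_right_injective M hp0 h1
  rcases Nat.eq_zero_or_pos c with hc0 | hcpos
  · -- c = 0, hence q = 0 and z = p • w; then M = pM, contradiction via a basis.
    have hq0 : q = 0 := by omega
    have hz' : z = (p : WittVector p k) • w := by rw [← hw, hq0]; rfl
    let Pm : Submodule (WittVector p k) M :=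
      { carrier := {m | ∃ y, m = (p : WittVector p k) • y}
        add_mem' := by
          rintro _ _ ⟨y1, rfl⟩ ⟨y2, rfl⟩
          exact ⟨y1 + y2, (smul_add _ _ _).symm⟩
        zero_mem' := ⟨0, (smul_zero _).symm⟩
        smul_mem' := by
          rintro a _ ⟨y, rfl⟩
          exact ⟨a • y, by rw [smul_smul, smul_smul, mul_comm]⟩ }
    have htop : Pm = ⊤ := by
      refine hz Pm ⟨w, hz'⟩ ?_ ?_
      · rintro x ⟨y, rfl⟩; exact ⟨F y, hFp y⟩
      · rintro x ⟨y, rfl⟩; exact ⟨V y, hVp y⟩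
    let b := Module.Free.chooseBasis (WittVector p k) M
    obtain ⟨i⟩ : Nonempty (Module.Free.ChooseBasisIndex (WittVector p k) M) :=
      b.index_nonempty
    have hbi : b i ∈ Pm := htop ▸ Submodule.mem_top
    obtain ⟨y, hy⟩ := hbi
    have h1 : (1 : WittVector p k) = p * (b.repr y i) := by
      have := congrArg (fun m => (b.repr m) i) hy
      simpa [Module.Basis.repr_self, Finsupp.single_eq_same, map_smul, Finsupp.smul_apply,
        smul_eq_mul] using this
    exact hpu (IsUnit.of_mul_eq_one _ h1.symm)
  · obtain ⟨c', rfl⟩ : ∃ c', c = c' + 1 := ⟨c - 1, by omega⟩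
    -- F^[c'+1] z ∈ pM
    obtain ⟨w', hw'⟩ : ∃ w', F^[c' + 1] z = (p : WittVector p k) • w' := by
      refine ⟨F^[c' + 1 - q] w, ?_⟩
      have h : F^[c' + 1] z = F^[c' + 1 - q] (F^[q] z) := by
        rw [← Function.iterate_add_apply]
        congr 1
        omega
      rw [h, hw, hFiterp]
    have hlast : F^[c'] z ∈ Set.range V := by
      refine ⟨w', hFinj ?_⟩
      rw [hFV, ← hw']
      exact Function.iterate_succ_apply' F c' z
    set x : Fin c' → M := fun i => F^[(i : ℕ)] z with hx
    set T : Set M := Set.range V ∪ Set.range x with hT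
    have hF0 : F 0 = 0 := by
      have h := hFsmul 0 0
      simpa using h
    have hzT : z ∈ Submodule.span (WittVector p k) T := by
      rcases Nat.eq_zero_or_pos c' with h0 | hpos'
      · refine Submodule.subset_span (Or.inl ?_)
        have := hlast
        rwa [h0, Function.iterate_zero_apply] at this
      · exact Submodule.subset_span (Or.inr ⟨⟨0, hpos'⟩, rfl⟩)
    have hFT : ∀ m ∈ Submodule.span (WittVector p k) T, F m ∈ Submodule.span (WittVector p k) T := by
      intro m hm
      induction hm using Submodule.span_induction with
      | mem u hu =>
        rcases hu with ⟨m', rfl⟩ | ⟨i, rfl⟩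
        · refine Submodule.subset_span (Or.inl ⟨F m', ?_⟩)
          rw [hVF, hFV]
        · have hstep : F (x i) = F^[(i : ℕ) + 1] z :=
            (Function.iterate_succ_apply' F (i : ℕ) z).symm
          by_cases hlt : (i : ℕ) + 1 < c'
          · rw [hstep]
            exact Submodule.subset_span (Or.inr ⟨⟨(i : ℕ) + 1, hlt⟩, rfl⟩)
          · have hieq : (i : ℕ) + 1 = c' := by have := i.isLt; omega
            rw [hstep, hieq]
            exact Submodule.subset_span (Or.inl hlast)
      | zero => rw [hF0]; exact Submodule.zero_mem _
      | add u v hu hv ihu ihv => rw [hFadd]; exact Submodule.add_mem _ ihu ihv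
      | smul a u hu ihu => rw [hFsmul]; exact Submodule.smul_mem _ _ ihu
    have hVT : ∀ m ∈ Submodule.span (WittVector p k) T,
        V m ∈ Submodule.span (WittVector p k) T :=
      fun m _ => Submodule.subset_span (Or.inl ⟨m, rfl⟩)
    have htop := hz _ hzT hFT hVT
    have hmem : Submodule.span (WittVector p k) (Set.range V) ⊔
        Submodule.span (WittVector p k) (Set.range x) = ⊤ := by
      rw [← Submodule.span_union]
      exact htop
    have := hc2 c' ⟨x, hmem⟩
    omega

theorem iter_pow_smul (φ : WittVector p k ≃+* WittVector p k) (F : M → M)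
    (hFsmul : ∀ (a : WittVector p k) (x : M), F (a • x) = φ a • F x) :
    ∀ (n b : ℕ) (x : M),
      F^[n] (((p : WittVector p k) ^ b) • x) = ((p : WittVector p k) ^ b) • F^[n] x := by
  intro n b
  have h1 : ∀ x : M, F (((p : WittVector p k) ^ b) • x) = ((p : WittVector p k) ^ b) • F x := by
    intro x; rw [hFsmul, map_pow, map_natCast]
  induction n with
  | zero => intro x; simp
  | succ n ih =>
    intro x
    rw [Function.iterate_succ_apply, Function.iterate_succ_apply, h1, ih]

theorem iter_zero (φ : WittVector p k ≃+* WittVector p k) (F : M → M)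
    (hFsmul : ∀ (a : WittVector p k) (x : M), F (a • x) = φ a • F x) (n : ℕ) :
    F^[n] (0 : M) = 0 := by
  have hF0 : F 0 = 0 := by have h := hFsmul 0 0; simpa using h
  exact Function.iterate_fixed hF0 n

theorem mem_span_range_iter (φ : WittVector p k ≃+* WittVector p k) (F : M → M)
    (hFadd : ∀ x y, F (x + y) = F x + F y)
    (hFsmul : ∀ (a : WittVector p k) (x : M), F (a • x) = φ a • F x)
    (q : ℕ) (m : M) (hm : m ∈ Submodule.span (WittVector p k) (Set.range (F^[q]))) :
    ∃ y, m = F^[q] y := by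
  have hiter_add : ∀ (n : ℕ) (x y : M), F^[n] (x + y) = F^[n] x + F^[n] y := by
    intro n
    induction n with
    | zero => intro x y; simp
    | succ n ih =>
      intro x y
      rw [Function.iterate_succ_apply, Function.iterate_succ_apply,
        Function.iterate_succ_apply, hFadd, ih]
  have hiter_smul : ∀ (n : ℕ) (a : WittVector p k) (x : M),
      F^[n] (a • x) = (⇑φ)^[n] a • F^[n] x := by
    intro n
    induction n with
    | zero => intro a x; simp
    | succ n ih =>
      intro a x
      rw [Function.iterate_succ_apply, Function.iterate_succ_apply,
        Function.iterate_succ_apply, hFsmul, ih]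
  induction hm using Submodule.span_induction with
  | mem u hu => obtain ⟨y, hy⟩ := hu; exact ⟨y, hy.symm⟩
  | zero => exact ⟨0, (iter_zero p k M φ F hFsmul q).symm⟩
  | add u v hu hv ihu ihv =>
    obtain ⟨y1, rfl⟩ := ihu
    obtain ⟨y2, rfl⟩ := ihv
    exact ⟨y1 + y2, (hiter_add q y1 y2).symm⟩
  | smul a u hu ihu =>
    obtain ⟨y, rfl⟩ := ihu
    refine ⟨(⇑φ.symm)^[q] a • y, ?_⟩
    rw [hiter_smul]
    congr 1
    exact (Function.LeftInverse.iterate φ.apply_symm_apply q a).symm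


/-- Let `M` be a non-zero bi-nilpotent Dieudonné module over `k` generated by
`z ∈ M`, with `d = dim_k (M/FM)` and `c = dim_k (M/VM)`.  Then (i) for `0 ≤ q ≤ c` the maximal
integer `α` with `F^qM ⊆ p^αM` equals `0`, and (ii) for `0 ≤ q ≤ d` the minimal integer `β`
with `p^βM ⊆ F^qM` equals `q`. -/
theorem alpha_beta_of_cyclic_dieudonne_module
    -- `M` is a free `W(k)`-module of finite rank, non-zero
    [Module.Free (WittVector p k) M] [Module.Finite (WittVector p k) M] [Nontrivial M]
    -- `F` is `σ`-semilinear, `V` is `σ⁻¹`-semilinear, and `F ∘ V = V ∘ F = p·id`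
    (F V : M → M)
    (hFadd : ∀ x y, F (x + y) = F x + F y)
    (hVadd : ∀ x y, V (x + y) = V x + V y)
    (hFsmul : ∀ (a : WittVector p k) (x : M), F (a • x) = WittVector.frobeniusEquiv p k a • F x)
    (hVsmul : ∀ (a : WittVector p k) (x : M),
      V (a • x) = (WittVector.frobeniusEquiv p k).symm a • V x)
    (hFV : ∀ x, F (V x) = (p : WittVector p k) • x)
    (hVF : ∀ x, V (F x) = (p : WittVector p k) • x)
    -- `M` is bi-nilpotent: `F` and `V` are nilpotent on `M/pM`
    (hFnil : ∃ n : ℕ, ∀ x : M, ∃ y : M, F^[n] x = (p : WittVector p k) • y)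
    (hVnil : ∃ n : ℕ, ∀ x : M, ∃ y : M, V^[n] x = (p : WittVector p k) • y)
    -- `z` generates `M`: the only `W(k)`-submodule containing `z` stable under `F` and `V` is `M`
    (z : M)
    (hz : ∀ P : Submodule (WittVector p k) M,
      z ∈ P → (∀ x ∈ P, F x ∈ P) → (∀ x ∈ P, V x ∈ P) → P = ⊤)
    -- `d = dim_k (M/FM)`: `d` is the least number of elements generating `M` over `FM`
    (c d : ℕ)
    (hd : IsLeast {n : ℕ | ∃ x : Fin n → M,
      Submodule.span (WittVector p k) (Set.range F) ⊔
        Submodule.span (WittVector p k) (Set.range x) = ⊤} d)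
    -- `c = dim_k (M/VM)`
    (hc : IsLeast {n : ℕ | ∃ x : Fin n → M,
      Submodule.span (WittVector p k) (Set.range V) ⊔
        Submodule.span (WittVector p k) (Set.range x) = ⊤} c) :
    (∀ q : ℕ, q ≤ c →
      IsGreatest {a : ℕ | ∀ x ∈ Submodule.span (WittVector p k) (Set.range (F^[q])),
        ∃ y : M, x = ((p : WittVector p k) ^ a) • y} 0) ∧
    (∀ q : ℕ, q ≤ d →
      IsLeast {b : ℕ | ∀ x : M,
        ((p : WittVector p k) ^ b) • x ∈
          Submodule.span (WittVector p k) (Set.range (F^[q]))} q) := by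
  have hp0 : (p : WittVector p k) ≠ 0 := WittVector.p_nonzero p k
  have keyF : ∀ q : ℕ, q ≤ c → ∀ w : M, F^[q] z = (p : WittVector p k) • w → False :=
    fun q hq w hw =>
      key p k M (WittVector.frobeniusEquiv p k) F V hFadd hFsmul hVsmul hFV hVF z hz c
        (fun n hn => hc.2 hn) q hq w hw
  have keyV : ∀ q : ℕ, q ≤ d → ∀ w : M, V^[q] z = (p : WittVector p k) • w → False := by
    intro q hq w hw
    refine key p k M (WittVector.frobeniusEquiv p k).symm V F hVadd hVsmul ?_ hVF hFV z
      (fun P hzP hV hF => hz P hzP hF hV) d (fun n hn => hd.2 hn) q hq w hw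
    intro a x
    rw [RingEquiv.symm_symm]
    exact hFsmul a x
  have hFVq : ∀ (n : ℕ) (x : M), F^[n] (V^[n] x) = ((p : WittVector p k) ^ n) • x := by
    intro n
    induction n with
    | zero => intro x; simp
    | succ n ih =>
      intro x
      rw [Function.iterate_succ_apply F, Function.iterate_succ_apply' V, hFV,
        show ((p : WittVector p k) • V^[n] x) = ((p : WittVector p k) ^ 1) • V^[n] x by
          rw [pow_one],
        iter_pow_smul p k M (WittVector.frobeniusEquiv p k) F hFsmul n 1, ih,
        pow_one, smul_smul, ← pow_succ']
  have hVFq : ∀ (n : ℕ) (x : M), V^[n] (F^[n] x) = ((p : WittVector p k) ^ n) • x := by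
    intro n
    induction n with
    | zero => intro x; simp
    | succ n ih =>
      intro x
      rw [Function.iterate_succ_apply V, Function.iterate_succ_apply' F, hVF,
        show ((p : WittVector p k) • F^[n] x) = ((p : WittVector p k) ^ 1) • F^[n] x by
          rw [pow_one],
        iter_pow_smul p k M (WittVector.frobeniusEquiv p k).symm V hVsmul n 1, ih,
        pow_one, smul_smul, ← pow_succ']
  constructor
  · -- part (i)
    intro q hq
    constructor
    · intro x _
      exact ⟨x, by rw [pow_zero, one_smul]⟩
    · intro a ha
      by_contra hne
      have ha1 : 1 ≤ a := by omega
      have hmem : F^[q] z ∈ Submodule.span (WittVector p k) (Set.range (F^[q])) :=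
        Submodule.subset_span (Set.mem_range_self z)
      obtain ⟨y, hy⟩ := ha (F^[q] z) hmem
      obtain ⟨a', rfl⟩ : ∃ a', a = a' + 1 := ⟨a - 1, by omega⟩
      refine keyF q hq (((p : WittVector p k) ^ a') • y) ?_
      rw [hy, pow_succ', mul_smul]
  · -- part (ii)
    intro q hq
    constructor
    · intro x
      have h1 : ((p : WittVector p k) ^ q) • x = F^[q] (V^[q] x) := (hFVq q x).symm
      rw [h1]
      exact Submodule.subset_span (Set.mem_range_self _)
    · intro b hb
      by_contra hne
      have hbq : b < q := by omega
      obtain ⟨y, hy⟩ := mem_span_range_iter p k M (WittVector.frobeniusEquiv p k) F hFadd hFsmul q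
        _ (hb z)
      have h2 := congrArg (V^[q]) hy
      rw [iter_pow_smul p k M (WittVector.frobeniusEquiv p k).symm V hVsmul q b, hVFq] at h2
      have hpow : ((p : WittVector p k) ^ q) = ((p : WittVector p k) ^ b)
          * ((p : WittVector p k) ^ (q - b)) := by
        rw [← pow_add]
        congr 1
        omega
      rw [hpow, mul_smul] at h2
      have h3 := smul_right_injective M (pow_ne_zero b hp0) h2
      obtain ⟨e, he⟩ : ∃ e, q - b = e + 1 := ⟨q - b - 1, by omega⟩
      refine keyV q hq (((p : WittVector p k) ^ e) • y) ?_
      rw [h3, he, pow_succ', mul_smul]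

end DieudonneStmt
end
end

section
/- Let (M, F_M, V_M) and (L, F_L, V_L) be Dieudonné modules over k and let m ≥ 1 be an integer. Let ζ_m : M/p^mM → L/p^mL be a W-linear map commuting with the maps induced by F and by V (a homomorphism of truncated Dieudonné modules). Then there exist W-linear maps ζ : M → L and τ : M → L such that the reduction of ζ modulo p^m equals ζ_m and F_L∘ζ − ζ∘F_M = p^m·(τ∘F_M). -/
open Pointwise


noncomputable section

namespace DieudonneStmt

/-- Membership in `span {c} • ⊤` means divisibility by `c`. -/
lemma mem_span_smul_top_iff {R M : Type*} [CommRing R] [AddCommGroup M] [Module R M]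
    (c : R) (x : M) :
    x ∈ (Ideal.span {c} • (⊤ : Submodule R M)) ↔ ∃ z, x = c • z := by
  rw [Submodule.ideal_span_singleton_smul]
  constructor
  · intro h
    obtain ⟨z, -, hz⟩ := Set.mem_smul_set.mp h
    exact ⟨z, hz.symm⟩
  · rintro ⟨z, rfl⟩
    exact Submodule.smul_mem_pointwise_smul z c ⊤ trivial

/-- Linear independence from independence modulo a prime. -/
lemma linearIndependent_of_mod_prime {R M : Type*} [CommRing R] [IsDomain R] [WfDvdMonoid R]
    [AddCommGroup M] [Module R M] [Module.IsTorsionFree R M]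
    {ι : Type*} [Fintype ι] {q : R} (hq : Prime q) (u : ι → M)
    (H : ∀ c : ι → R, (∃ z : M, ∑ i, c i • u i = q • z) → ∀ i, q ∣ c i) :
    LinearIndependent R u := by
  rw [Fintype.linearIndependent_iff]
  intro c hc i
  by_contra hne
  obtain ⟨n, hn⟩ := FiniteMultiplicity.of_prime_left hq hne
  apply hn
  suffices h : ∀ N : ℕ, ∀ j, q ^ N ∣ c j from h (n + 1) i
  intro N
  induction N with
  | zero => simp
  | succ N ih =>
    choose d hd using ih
    have hsum : (q ^ N) • (∑ j, d j • u j) = (q ^ N) • (0 : M) := by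
      rw [smul_zero, Finset.smul_sum]
      calc ∑ j, q ^ N • d j • u j = ∑ j, c j • u j := by
            refine Finset.sum_congr rfl fun j _ => ?_
            rw [smul_smul, ← hd j]
        _ = 0 := hc
    have h0 : ∑ j, d j • u j = 0 :=
      smul_right_injective M (pow_ne_zero N hq.ne_zero) hsum
    intro j
    obtain ⟨t, ht⟩ := H d ⟨0, by rw [h0, smul_zero]⟩ j
    exact ⟨t, by rw [hd j, ht, pow_succ, mul_assoc]⟩

/-- Extend a linear map from a submodule in Smith normal form with unit coefficients. -/
lemma exists_extend_of_unit_snf {R M L : Type*} [CommRing R] [AddCommGroup M] [Module R M]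
    [AddCommGroup L] [Module R L] {ι : Type*} {n : ℕ}
    (e : Module.Basis ι R M) {U : Submodule R M} (bU : Module.Basis (Fin n) R U)
    (g : Fin n ↪ ι) (a : Fin n → R) (ha : ∀ l, IsUnit (a l))
    (hsnf : ∀ l, (bU l : M) = a l • e (g l)) (l0 : U →ₗ[R] L) :
    ∃ lam : M →ₗ[R] L, ∀ z : U, lam z = l0 z := by
  classical
  set lam : M →ₗ[R] L := e.constr ℕ
    (fun j => if h : ∃ l, g l = j then ((ha h.choose).unit⁻¹ : Rˣ) • l0 (bU h.choose) else 0)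
    with hlam
  have key : ∀ l : Fin n, lam ((bU l : M)) = l0 (bU l) := by
    intro l
    have hl : ∃ l', g l' = g l := ⟨l, rfl⟩
    have hch : hl.choose = l := g.injective hl.choose_spec
    rw [hsnf l, map_smul, hlam, Module.Basis.constr_basis, dif_pos hl, hch, Units.smul_def, smul_smul,
      (ha l).mul_val_inv, one_smul]
  refine ⟨lam, fun z => ?_⟩
  have hz : (z : M) = ∑ l, bU.repr z l • (bU l : M) := by
    conv_lhs => rw [← bU.sum_repr z]
    simp only [AddSubmonoidClass.coe_finset_sum, SetLike.val_smul]
  have hz' : z = ∑ l, bU.repr z l • bU l := (bU.sum_repr z).symm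
  rw [show lam (z : M) = lam (∑ l, bU.repr z l • (bU l : M)) by rw [← hz], map_sum]
  simp only [map_smul, key]
  rw [show l0 z = l0 (∑ l, bU.repr z l • bU l) by rw [← hz'], map_sum]
  simp only [map_smul]


variable (p : ℕ) [Fact p.Prime] (k : Type*) [Field k] [IsAlgClosed k] [CharP k p]

/-- a homomorphism `ζ_m : M/p^mM → L/p^mL` of truncated Dieudonné modules lifts
to a `W(k)`-linear map `ζ : M → L` with `F_L ∘ ζ - ζ ∘ F_M = p^m · (τ ∘ F_M)` for some
`W(k)`-linear `τ : M → L`. -/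
theorem lift_of_truncated_homomorphism
    (M : Type*) [AddCommGroup M] [Module (WittVector p k) M]
    [Module.Free (WittVector p k) M] [Module.Finite (WittVector p k) M]
    (L : Type*) [AddCommGroup L] [Module (WittVector p k) L]
    [Module.Free (WittVector p k) L] [Module.Finite (WittVector p k) L]
    (FM VM : M → M) (FL VL : L → L)
    (hFMadd : ∀ x y, FM (x + y) = FM x + FM y)
    (hVMadd : ∀ x y, VM (x + y) = VM x + VM y)
    (hFMsmul : ∀ (a : WittVector p k) (x : M), FM (a • x) = WittVector.frobeniusEquiv p k a • FM x)
    (hVMsmul : ∀ (a : WittVector p k) (x : M),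
      VM (a • x) = (WittVector.frobeniusEquiv p k).symm a • VM x)
    (hFVM : ∀ x, FM (VM x) = (p : WittVector p k) • x)
    (hVFM : ∀ x, VM (FM x) = (p : WittVector p k) • x)
    (hFLadd : ∀ x y, FL (x + y) = FL x + FL y)
    (hVLadd : ∀ x y, VL (x + y) = VL x + VL y)
    (hFLsmul : ∀ (a : WittVector p k) (x : L), FL (a • x) = WittVector.frobeniusEquiv p k a • FL x)
    (hVLsmul : ∀ (a : WittVector p k) (x : L),
      VL (a • x) = (WittVector.frobeniusEquiv p k).symm a • VL x)
    (hFVL : ∀ x, FL (VL x) = (p : WittVector p k) • x)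
    (hVFL : ∀ x, VL (FL x) = (p : WittVector p k) • x)
    (m : ℕ) (hm : 1 ≤ m)
    -- the homomorphism of truncated Dieudonné modules `ζ_m : M/p^mM → L/p^mL`
    (ζm : (M ⧸ (Ideal.span {(p : WittVector p k) ^ m} • (⊤ : Submodule (WittVector p k) M))) →ₗ[WittVector p k]
      (L ⧸ (Ideal.span {(p : WittVector p k) ^ m} • (⊤ : Submodule (WittVector p k) L))))
    -- `ζ_m` commutes with the maps induced by `F` and by `V`
    (hζF : ∀ (x : M) (y : L), ζm (Submodule.Quotient.mk x) = Submodule.Quotient.mk y →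
      ζm (Submodule.Quotient.mk (FM x)) = Submodule.Quotient.mk (FL y))
    (hζV : ∀ (x : M) (y : L), ζm (Submodule.Quotient.mk x) = Submodule.Quotient.mk y →
      ζm (Submodule.Quotient.mk (VM x)) = Submodule.Quotient.mk (VL y)) :
    ∃ ζ τ : M →ₗ[WittVector p k] L,
      (∀ x : M, ζm (Submodule.Quotient.mk x) = Submodule.Quotient.mk (ζ x)) ∧
      (∀ x : M, FL (ζ x) - ζ (FM x) = ((p : WittVector p k) ^ m) • τ (FM x)) := by
  classical
  haveI hDVR : IsDiscreteValuationRing (WittVector p k) := WittVector.isDiscreteValuationRing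
  set σ : WittVector p k ≃+* WittVector p k := WittVector.frobeniusEquiv p k with hσdef
  have hσp : σ (p : WittVector p k) = (p : WittVector p k) := map_natCast σ p
  have hσsp : σ.symm (p : WittVector p k) = (p : WittVector p k) := map_natCast σ.symm p
  have hprime : Prime (p : WittVector p k) := (UniqueFactorizationMonoid.irreducible_iff_prime.mp (WittVector.irreducible p))
  have hPne : ((p : WittVector p k) ^ m) ≠ 0 := pow_ne_zero _ hprime.ne_zero
  have hσsP : σ.symm ((p : WittVector p k) ^ m) = ((p : WittVector p k) ^ m) := by rw [map_pow, hσsp]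
  -- membership lemmas
  have memM : ∀ x : M, x ∈ (Ideal.span {((p : WittVector p k) ^ m)} • (⊤ : Submodule (WittVector p k) M)) ↔
      ∃ z, x = ((p : WittVector p k) ^ m) • z := fun x => mem_span_smul_top_iff ((p : WittVector p k) ^ m) x
  have memL : ∀ x : L, x ∈ (Ideal.span {((p : WittVector p k) ^ m)} • (⊤ : Submodule (WittVector p k) L)) ↔
      ∃ z, x = ((p : WittVector p k) ^ m) • z := fun x => mem_span_smul_top_iff ((p : WittVector p k) ^ m) x
  -- injectivity of the semilinear maps
  have hFMinj : Function.Injective FM := by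
    intro x y hxy
    have h : VM (FM x) = VM (FM y) := by rw [hxy]
    rw [hVFM, hVFM] at h
    exact smul_right_injective M hprime.ne_zero h
  -- Step 0 : a first lift ζ₀ of ζm
  set eb := Module.Free.chooseBasis (WittVector p k) M with hebdef
  have hsurj : Function.Surjective
      (Submodule.Quotient.mk (p := (Ideal.span {((p : WittVector p k) ^ m)} • (⊤ : Submodule (WittVector p k) L)))) :=
    Submodule.Quotient.mk_surjective _
  choose sec hsec using hsurj
  set ζ₀ : M →ₗ[WittVector p k] L :=
    eb.constr ℕ (fun j => sec (ζm (Submodule.Quotient.mk (eb j)))) with hζ₀def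
  have hlift₀ : ∀ x : M, ζm (Submodule.Quotient.mk x) = Submodule.Quotient.mk (ζ₀ x) := by
    have h : ζm.comp (Ideal.span {((p : WittVector p k) ^ m)} • (⊤ : Submodule (WittVector p k) M)).mkQ
        = ((Ideal.span {((p : WittVector p k) ^ m)} • (⊤ : Submodule (WittVector p k) L)).mkQ).comp ζ₀ := by
      apply Module.Basis.ext eb
      intro j
      simp only [LinearMap.comp_apply, Submodule.mkQ_apply, hζ₀def, Module.Basis.constr_basis]
      exact (hsec _).symm
    intro x
    have := LinearMap.congr_fun h x
    simpa using this
  -- the image of FM as a submodule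
  set NN : Submodule (WittVector p k) M :=
    { carrier := Set.range FM
      add_mem' := by
        rintro _ _ ⟨x, rfl⟩ ⟨y, rfl⟩
        exact ⟨x + y, hFMadd x y⟩
      zero_mem' := by
        refine ⟨0, ?_⟩
        have h := hFMadd 0 0
        rw [add_zero] at h
        exact (add_eq_left.mp h.symm)
      smul_mem' := by
        rintro c _ ⟨x, rfl⟩
        exact ⟨σ.symm c • x, by rw [hFMsmul, RingEquiv.apply_symm_apply]⟩ } with hNNdef
  have hmemNN : ∀ x : M, FM x ∈ NN := fun x => ⟨x, rfl⟩
  -- Smith normal form for NN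
  obtain ⟨n1, e, bN, f, a, hsnf⟩ := NN.smithNormalForm eb
  -- coordinates of elements of NN
  have happ : ∀ (z : NN) (j : _),
      e.repr (z : M) j = ∑ i, if f i = j then bN.repr z i * a i else 0 := by
    intro z j
    have h1 : (z : M) = ∑ i, (bN.repr z i * a i) • e (f i) := by
      conv_lhs => rw [← bN.sum_repr z]
      simp only [AddSubmonoidClass.coe_finset_sum, SetLike.val_smul]
      refine Finset.sum_congr rfl fun i _ => ?_
      rw [hsnf i, smul_smul]
    rw [show e.repr (z : M) j = e.repr (∑ i, (bN.repr z i * a i) • e (f i)) j by rw [← h1],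
      map_sum, Finset.sum_apply']
    refine Finset.sum_congr rfl fun i _ => ?_
    rw [map_smul, Finsupp.smul_apply, Module.Basis.repr_self, Finsupp.single_apply]
    split <;> simp [mul_comm]
  -- f is surjective
  have hfsurj : Function.Surjective f := by
    intro j
    by_contra hj
    push_neg at hj
    have h := happ ⟨(p : WittVector p k) • e j, ⟨VM (e j), hFVM (e j)⟩⟩ j
    simp only [map_smul, Finsupp.smul_apply, Module.Basis.repr_self, Finsupp.single_eq_same,
      smul_eq_mul, mul_one] at h
    rw [Finset.sum_eq_zero (fun i _ => by rw [if_neg (hj i)])] at h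
    exact hprime.ne_zero h
  -- each a i divides p
  have hadvd : ∀ i, a i ∣ (p : WittVector p k) := by
    intro i
    have h := happ ⟨(p : WittVector p k) • e (f i), ⟨VM (e (f i)), hFVM (e (f i))⟩⟩ (f i)
    simp only [map_smul, Finsupp.smul_apply, Module.Basis.repr_self, Finsupp.single_eq_same,
      smul_eq_mul, mul_one] at h
    rw [Finset.sum_eq_single i (fun b _ hb => by rw [if_neg (fun hfb => hb (f.injective hfb))])
      (fun hi => absurd (Finset.mem_univ i) hi), if_pos rfl] at h
    exact ⟨_, by rw [h, mul_comm]⟩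
  -- non-unit coefficients are associates of p
  have hbad : ∀ i, ¬ IsUnit (a i) → ∃ t, IsUnit t ∧ (p : WittVector p k) = a i * t := by
    intro i h
    obtain ⟨t, ht⟩ := hadvd i
    rcases (WittVector.irreducible p).isUnit_or_isUnit ht with h' | h'
    · exact absurd h' h
    · exact ⟨t, h', ht⟩
  have hpdvdbad : ∀ i, ¬ IsUnit (a i) → (p : WittVector p k) ∣ a i := by
    intro i h
    obtain ⟨t, ht, hpt⟩ := hbad i h
    exact ⟨(ht.unit⁻¹ : _), by rw [hpt, mul_assoc, ht.mul_val_inv, mul_one]⟩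
  -- the error of ζ₀ against V, divided by ((p : WittVector p k) ^ m)
  have hVdiv : ∀ x : M, ∃ zz : L, ζ₀ (VM x) - VL (ζ₀ x) = ((p : WittVector p k) ^ m) • zz := by
    intro x
    refine (memL _).mp ?_
    rw [← Submodule.Quotient.eq]
    exact ((hlift₀ (VM x)).symm.trans (hζV x (ζ₀ x) (hlift₀ x)))
  choose w₀ hw₀ using hVdiv
  -- the family to prescribe values on
  set Bad := {i : Fin n1 // ¬ IsUnit (a i)} with hBaddef
  set u : Bad → M := fun j => VM (e (f j.1)) with hudef
  -- mod-p independence of u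
  have hmodp : ∀ c : Bad → WittVector p k,
      (∃ z : M, ∑ j, c j • u j = (p : WittVector p k) • z) → ∀ j, (p : WittVector p k) ∣ c j := by
    rintro c ⟨z, hz⟩ j₀
    have lhs : FM (∑ j, c j • u j) = (p : WittVector p k) • ∑ j, (σ (c j)) • e (f j.1) := by
      rw [show FM = ⇑(AddMonoidHom.mk' FM hFMadd) from rfl, map_sum, Finset.smul_sum]
      refine Finset.sum_congr rfl fun j _ => ?_
      show FM (c j • u j) = _
      rw [hFMsmul, hudef]
      show σ (c j) • FM (VM (e (f j.1))) = _
      rw [hFVM, smul_comm]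
    have rhs : FM ((p : WittVector p k) • z) = (p : WittVector p k) • FM z := by
      rw [hFMsmul, hσp]
    have heq : ∑ j, σ (c j) • e (f j.1) = FM z := by
      apply smul_right_injective M hprime.ne_zero
      show (p : WittVector p k) • (∑ j, σ (c j) • e (f j.1)) = (p : WittVector p k) • FM z
      rw [← lhs, ← rhs, hz]
    have h := happ ⟨FM z, hmemNN z⟩ (f j₀.1)
    have hL : e.repr (∑ j, σ (c j) • e (f j.1)) (f j₀.1) = σ (c j₀) := by
      rw [map_sum, Finset.sum_apply']
      rw [Finset.sum_eq_single j₀]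
      · simp [Module.Basis.repr_self]
      · intro b _ hb
        have : f b.1 ≠ f j₀.1 := fun hfb => hb (Subtype.ext (f.injective hfb))
        simp [Module.Basis.repr_self, Finsupp.single_apply, this]
      · intro hj; exact absurd (Finset.mem_univ j₀) hj
    have hval : σ (c j₀) = bN.repr ⟨FM z, hmemNN z⟩ j₀.1 * a j₀.1 := by
      rw [Finset.sum_eq_single j₀.1 (fun b _ hb => by rw [if_neg (fun hfb => hb (f.injective hfb))])
        (fun hi => absurd (Finset.mem_univ j₀.1) hi), if_pos rfl] at h
      calc σ (c j₀) = e.repr (∑ j, σ (c j) • e (f j.1)) (f j₀.1) := hL.symm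
        _ = e.repr ((⟨FM z, hmemNN z⟩ : NN) : M) (f j₀.1) := by rw [heq]
        _ = _ := h
    have hdvd : (p : WittVector p k) ∣ σ (c j₀) := by
      rw [hval]
      exact Dvd.dvd.mul_left (hpdvdbad j₀.1 j₀.2) _
    have := map_dvd σ.symm hdvd
    rwa [hσsp, RingEquiv.symm_apply_apply] at this
  -- linear independence of u
  haveI : WfDvdMonoid (WittVector p k) := inferInstance
  have hLI : LinearIndependent (WittVector p k) u :=
    linearIndependent_of_mod_prime hprime u hmodp
  -- span of u and its Smith normal form
  set U : Submodule (WittVector p k) M := Submodule.span (WittVector p k) (Set.range u) with hUdef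
  set bu : Module.Basis Bad (WittVector p k) U := Module.Basis.span hLI with hbudef
  obtain ⟨n2, e', bU, g, a', hsnf2⟩ := U.smithNormalForm eb
  have ha' : ∀ l, IsUnit (a' l) := by
    intro l
    by_contra hl
    have hdvd : (p : WittVector p k) ∣ a' l := by
      have h1 : a' l ∈ IsLocalRing.maximalIdeal (WittVector p k) := hl
      rw [(WittVector.irreducible p).maximalIdeal_eq, Ideal.mem_span_singleton] at h1
      exact h1
    obtain ⟨q, hq⟩ := hdvd
    obtain ⟨c, hc⟩ := (Submodule.mem_span_range_iff_exists_fun (WittVector p k)).mp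
      (by rw [← hUdef]; exact (bU l).2)
    have hz : ∑ j, c j • u j = (p : WittVector p k) • (q • e' (g l)) := by
      rw [hc, hsnf2 l, hq, mul_smul]
    choose d hd using hmodp c ⟨_, hz⟩
    have hbUl : (bU l : M) = (p : WittVector p k) • ∑ j, d j • u j := by
      rw [← hc, Finset.smul_sum]
      refine Finset.sum_congr rfl fun j _ => ?_
      rw [hd j, mul_smul]
    have hmemU : ∑ j, d j • u j ∈ U := by
      refine Submodule.sum_mem _ fun j _ => Submodule.smul_mem _ _ ?_
      exact Submodule.subset_span ⟨j, rfl⟩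
    have hUeq : bU l = (p : WittVector p k) • (⟨∑ j, d j • u j, hmemU⟩ : U) :=
      Subtype.ext hbUl
    have h1 : (1 : WittVector p k) = (p : WittVector p k) * bU.repr ⟨∑ j, d j • u j, hmemU⟩ l := by
      have h2 := congrArg (fun z => bU.repr z l) hUeq
      simp only [map_smul, Finsupp.smul_apply, Module.Basis.repr_self, Finsupp.single_eq_same,
        smul_eq_mul] at h2
      exact h2
    exact hprime.not_unit (IsUnit.of_mul_eq_one _ h1.symm)
  -- construct λ
  set l0 : U →ₗ[WittVector p k] L := bu.constr ℕ (fun j => - w₀ (e (f j.1))) with hl0def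
  obtain ⟨lam, hlam⟩ := exists_extend_of_unit_snf e' bU g a' ha' hsnf2 l0
  have hlamu : ∀ j : Bad, lam (u j) = - w₀ (e (f j.1)) := by
    intro j
    have hmem : u j ∈ U := Submodule.subset_span ⟨j, rfl⟩
    have h1 := hlam ⟨u j, hmem⟩
    rw [show (⟨u j, hmem⟩ : U) = bu j from (Module.Basis.span_apply hLI j).symm] at h1
    rw [show ((bu j : U) : M) = u j from congrArg Subtype.val (Module.Basis.span_apply hLI j)] at h1
    rw [h1, hl0def, Module.Basis.constr_basis]
  -- the final ζ
  set ζ : M →ₗ[WittVector p k] L := ζ₀ + ((p : WittVector p k) ^ m) • lam with hζdef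
  have hζx : ∀ x : M, ζ x = ζ₀ x + ((p : WittVector p k) ^ m) • lam x := fun x => rfl
  have hlift : ∀ x : M, ζm (Submodule.Quotient.mk x) = Submodule.Quotient.mk (ζ x) := by
    intro x
    rw [hlift₀ x]
    rw [Submodule.Quotient.eq]
    refine (memL _).mpr ⟨- lam x, ?_⟩
    rw [hζx]
    abel_nf
    simp [smul_neg]
  -- the error of ζ against F, divided by ((p : WittVector p k) ^ m)
  have hFdiv : ∀ x : M, ∃ zz : L, FL (ζ x) - ζ (FM x) = ((p : WittVector p k) ^ m) • zz := by
    intro x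
    refine (memL _).mp ?_
    rw [← Submodule.Quotient.eq]
    exact ((hζF x (ζ x) (hlift x)).symm.trans (hlift (FM x)))
  choose η hη using hFdiv
  have hηadd : ∀ x y, η (x + y) = η x + η y := by
    intro x y
    apply smul_right_injective L hPne
    show ((p : WittVector p k) ^ m) • η (x + y) = ((p : WittVector p k) ^ m) • (η x + η y)
    rw [smul_add, ← hη x, ← hη y, ← hη (x + y), map_add, hFMadd, map_add, hFLadd]
    abel
  have hηsmul : ∀ (c : WittVector p k) x, η (c • x) = σ c • η x := by
    intro c x
    apply smul_right_injective L hPne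
    show ((p : WittVector p k) ^ m) • η (c • x) = ((p : WittVector p k) ^ m) • (σ c • η x)
    rw [← hη (c • x), map_smul, hFMsmul, map_smul, hFLsmul, smul_comm ((p : WittVector p k) ^ m),
      ← smul_sub, hη x]
  -- the key computation for bad indices
  have hηV : ∀ j : Bad, η (VM (e (f j.1))) = (p : WittVector p k) • (- lam (e (f j.1))) := by
    intro j
    set x := e (f j.1) with hxdef
    have hζVx : ζ (VM x) = VL (ζ₀ x) := by
      rw [hζx, show lam (VM x) = lam (u j) from rfl, hlamu j, ← hxdef]
      have h := hw₀ x
      have : ζ₀ (VM x) = VL (ζ₀ x) + ((p : WittVector p k) ^ m) • w₀ x := by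
        rw [← h]; abel
      rw [this, smul_neg]
      abel
    apply smul_right_injective L hPne
    show ((p : WittVector p k) ^ m) • η (VM x) = ((p : WittVector p k) ^ m) • ((p : WittVector p k) • - lam x)
    rw [← hη (VM x), hζVx, hFVL, hFVM, map_smul, hζx]
    module
  -- η as a linear map on NN
  have hpre : ∀ nn : NN, ∃ x : M, FM x = (nn : M) := fun nn => nn.2
  choose pre hpre using hpre
  set ηN : NN →ₗ[WittVector p k] L :=
    { toFun := fun nn => η (pre nn)
      map_add' := by
        intro n1' n2'
        show η (pre (n1' + n2')) = η (pre n1') + η (pre n2')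
        have h : pre (n1' + n2') = pre n1' + pre n2' := by
          apply hFMinj
          rw [hFMadd, hpre, hpre, hpre]
          rfl
        rw [h, hηadd]
      map_smul' := by
        intro c nn
        show η (pre (c • nn)) = c • η (pre nn)
        have h : pre (c • nn) = σ.symm c • pre nn := by
          apply hFMinj
          rw [hFMsmul, RingEquiv.apply_symm_apply, hpre, hpre]
          rfl
        rw [h, hηsmul, RingEquiv.apply_symm_apply] } with hηNdef
  have hηNval : ∀ (x : M) (h : FM x ∈ NN), ηN ⟨FM x, h⟩ = η x := by
    intro x h
    show η (pre ⟨FM x, h⟩) = η x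
    congr 1
    exact hFMinj (hpre ⟨FM x, h⟩)
  -- construct τ
  have hfbij : Function.Bijective f := ⟨f.injective, hfsurj⟩
  set F : Fin n1 ≃ _ := Equiv.ofBijective f hfbij with hFdef
  set e2 := e.reindex F.symm with he2def
  have he2 : ∀ i, e2 i = e (f i) := by
    intro i
    rw [he2def, Module.Basis.reindex_apply, Equiv.symm_symm]
    rfl
  have hgoodmem : ∀ i, IsUnit (a i) → e (f i) ∈ NN := by
    intro i h
    have h1 : a i • e (f i) ∈ NN := by rw [← hsnf i]; exact (bN i).2
    have h2 := Submodule.smul_mem NN ((h.unit⁻¹ : _) : WittVector p k) h1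
    rwa [smul_smul, h.val_inv_mul, one_smul] at h2
  set vτ : Fin n1 → L := fun i =>
    if h : IsUnit (a i) then ηN ⟨e (f i), hgoodmem i h⟩ else - lam (e (f i)) with hvτdef
  set τ : M →ₗ[WittVector p k] L := e2.constr ℕ vτ with hτdef
  have hτbN : ∀ i, τ ((bN i : M)) = ηN (bN i) := by
    intro i
    rw [hsnf i, map_smul, ← he2 i, hτdef, Module.Basis.constr_basis]
    by_cases h : IsUnit (a i)
    · simp only [hvτdef, dif_pos h]
      have hbni : bN i = a i • (⟨e (f i), hgoodmem i h⟩ : NN) := Subtype.ext (by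
        rw [hsnf i]; rfl)
      rw [hbni, map_smul]
    · simp only [hvτdef, dif_neg h]
      obtain ⟨t, ht, hpt⟩ := hbad i h
      have hmemV : FM (VM (e (f i))) ∈ NN := hmemNN _
      have hpa : (ht.unit⁻¹ : _) * (p : WittVector p k) = a i := by
        rw [hpt, mul_comm (a i) t, ← mul_assoc, ht.val_inv_mul, one_mul]
      have hbni : bN i = ((ht.unit⁻¹ : _) : WittVector p k) • (⟨FM (VM (e (f i))), hmemV⟩ : NN) := by
        apply Subtype.ext
        rw [hsnf i]
        rw [show ((((ht.unit⁻¹ : _) : WittVector p k) • (⟨FM (VM (e (f i))), hmemV⟩ : NN) : NN) : M)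
          = ((ht.unit⁻¹ : _) : WittVector p k) • FM (VM (e (f i))) from rfl, hFVM, smul_smul, hpa]
      rw [hbni, map_smul, hηNval, hηV ⟨i, h⟩, smul_smul, hpa]
  have hτηN : ∀ nn : NN, τ ((nn : M)) = ηN nn := by
    intro nn
    conv_lhs => rw [← bN.sum_repr nn]
    conv_rhs => rw [← bN.sum_repr nn]
    rw [map_sum]
    simp only [AddSubmonoidClass.coe_finset_sum, map_sum]
    refine Finset.sum_congr rfl fun i _ => ?_
    rw [SetLike.val_smul, map_smul, map_smul, hτbN]
  refine ⟨ζ, τ, hlift, ?_⟩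
  intro x
  rw [hη x]
  congr 1
  rw [← hηNval x (hmemNN x), ← hτηN ⟨FM x, hmemNN x⟩]


end DieudonneStmt
end
end

section
/- Let N₊, N₀, N₋ be finite-dimensional B(k)-vector spaces, each equipped with a σ-semilinear bijection F, and set N = N₊ ⊕ N₀ ⊕ N₋ with F acting diagonally. Let O₊ ⊆ N₊ be a W-lattice with F(O₊) ⊆ O₊ such that for every x ∈ O₊ the iterates F^i(x) converge to 0 p-adically (for every s ∈ ℕ, F^i(x) ∈ p^sO₊ for all sufficiently large i); let O₋ ⊆ N₋ be a W-lattice with F⁻¹(O₋) ⊆ O₋ such that for every x ∈ O₋ the iterates F^{−i}(x) converge to 0 p-adically; and let O₀ ⊆ N₀ be a W-lattice admitting a W-basis consisting of vectors fixed by F. Set O = O₊ ⊕ O₀ ⊕ O₋. Then: for every x ∈ O there exists y ∈ O with x = F(y) − y (an equation in N); any two such solutions y differ by an element y₀ ∈ O with F(y₀) = y₀; and if x ∈ p^sO for some s ∈ ℕ, then a solution y can be chosen in p^sO. -/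
noncomputable section

namespace DieudonneStmt

variable (p : ℕ) [Fact p.Prime] (k : Type*) [Field k] [IsAlgClosed k] [CharP k p]

section Aux

variable {p} {k}

local notation "W" => WittVector p k

/-! ### p-adic structure of Witt vectors -/

theorem mul_pow_p_coeff (u : W) {n i : ℕ} (hi : i < n) :
    (u * (p : W) ^ n).coeff i = 0 := by
  induction n generalizing u i with
  | zero => omega
  | succ n ih =>
    have h : u * (p : W) ^ (n + 1) = u * (p : W) ^ n * (p : W) := by ring
    rw [h]
    match i with
    | 0 => exact WittVector.mul_charP_coeff_zero _
    | (i+1) =>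
      rw [WittVector.mul_charP_coeff_succ, ih u (by omega),
        zero_pow (Fact.out : p.Prime).ne_zero]

theorem coeff_eq_zero_of_pow_dvd {n : ℕ} {x : W} (h : (p : W) ^ n ∣ x)
    {i : ℕ} (hi : i < n) : x.coeff i = 0 := by
  obtain ⟨u, rfl⟩ := h
  rw [mul_comm]
  exact mul_pow_p_coeff u hi

theorem pow_dvd_of_coeff_eq_zero {n : ℕ} {x : W} (h : ∀ i < n, x.coeff i = 0) :
    (p : W) ^ n ∣ x := by
  have hstep : ∀ w : W,
      WittVector.verschiebung (w * (p : W)) = WittVector.verschiebung w * (p : W) := by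
    intro w
    conv_lhs => rw [show ((p : W)) = WittVector.frobenius (p : W) from
      (map_natCast (WittVector.frobenius (p := p) (R := k)) p).symm]
    exact WittVector.verschiebung_mul_frobenius w (p : W)
  have hVp : ∀ (m : ℕ) (z : W),
      WittVector.verschiebung^[m] (z * (p : W)) = WittVector.verschiebung^[m] z * (p : W) := by
    intro m
    induction m with
    | zero => intro z; rfl
    | succ m ihm =>
      intro z
      rw [Function.iterate_succ_apply', Function.iterate_succ_apply', ihm z, hstep]
  have key : ∀ (n : ℕ) (u : W),
      WittVector.verschiebung^[n] (WittVector.frobenius^[n] u) = u * (p : W) ^ n := by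
    intro n
    induction n with
    | zero => intro u; simp
    | succ n ih =>
      intro u
      rw [Function.iterate_succ_apply (WittVector.verschiebung),
        Function.iterate_succ_apply' (WittVector.frobenius)]
      rw [WittVector.verschiebung_frobenius, hVp, ih, pow_succ]
      ring
  have hri : Function.RightInverse (⇑(WittVector.frobeniusEquiv p k).symm)
      (⇑(WittVector.frobenius (p := p) (R := k))) := fun y => by
    rw [← WittVector.frobeniusEquiv_apply]
    exact (WittVector.frobeniusEquiv p k).apply_symm_apply y
  set u : W := ((WittVector.frobeniusEquiv p k).symm)^[n] (x.shift n) with hu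
  have hFu : WittVector.frobenius^[n] u = x.shift n := hri.iterate n (x.shift n)
  refine ⟨u, ?_⟩
  rw [mul_comm, ← key n u, hFu]
  exact WittVector.eq_iterate_verschiebung h

theorem coeff_eq_of_pow_dvd_sub {n : ℕ} {x y : W} (h : (p : W) ^ n ∣ x - y)
    {i : ℕ} (hi : i < n) : x.coeff i = y.coeff i := by
  have h0 : WittVector.truncate n (x - y) = 0 :=
    RingHom.mem_ker.mp ((WittVector.mem_ker_truncate n (x - y)).mpr
      fun j hj => coeff_eq_zero_of_pow_dvd h hj)
  have h1 : WittVector.truncate n x = WittVector.truncate n y := by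
    rwa [map_sub, sub_eq_zero] at h0
  have h2 := congrArg (fun t => TruncatedWittVector.coeff ⟨i, hi⟩ t) h1
  simpa [WittVector.coeff_truncate] using h2

theorem eq_zero_of_forall_pow_dvd {x : W} (h : ∀ n, (p : W) ^ n ∣ x) : x = 0 := by
  apply WittVector.ext
  intro i
  rw [WittVector.zero_coeff]
  exact coeff_eq_zero_of_pow_dvd (h (i + 1)) (Nat.lt_succ_self i)

theorem exists_limit (c : ℕ → W) (hc : ∀ m n, m ≤ n → (p : W) ^ m ∣ c n - c m) :
    ∃ L : W, ∀ n, (p : W) ^ n ∣ c n - L := by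
  refine ⟨WittVector.mk p (fun i => (c (i + 1)).coeff i), fun n => ?_⟩
  apply pow_dvd_of_coeff_eq_zero
  have htr : WittVector.truncate n (c n)
      = WittVector.truncate n (WittVector.mk p fun i => (c (i + 1)).coeff i) := by
    ext j
    rw [WittVector.coeff_truncate, WittVector.coeff_truncate, WittVector.coeff_mk]
    exact coeff_eq_of_pow_dvd_sub (hc (j + 1) n j.2) (Nat.lt_succ_self _)
  have h0 : WittVector.truncate n
      (c n - WittVector.mk p fun i => (c (i + 1)).coeff i) = 0 := by
    rw [map_sub, htr, sub_self]
  exact (WittVector.mem_ker_truncate n _).mp (RingHom.mem_ker.mpr h0)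

/-! ### Hausdorff and completeness for finite free modules -/

variable {M : Type*} [AddCommGroup M] [Module (WittVector p k) M]

theorem haus_basis {ι : Type*} (b : Module.Basis ι W M) {z : M}
    (h : ∀ n, ∃ u : M, z = (p : W) ^ n • u) : z = 0 := by
  have hco : ∀ i, b.repr z i = 0 := by
    intro i
    apply eq_zero_of_forall_pow_dvd
    intro n
    obtain ⟨u, rfl⟩ := h n
    exact ⟨b.repr u i, by rw [map_smul, Finsupp.smul_apply, smul_eq_mul]⟩
  have hz : b.repr z = 0 := Finsupp.ext hco
  simpa using (LinearEquiv.map_eq_zero_iff b.repr).mp hz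

theorem precomplete_basis {ι : Type*} [Fintype ι] (b : Module.Basis ι W M) (f : ℕ → M)
    (hf : ∀ m n, m ≤ n → ∃ u : M, f n - f m = (p : W) ^ m • u) :
    ∃ L : M, ∀ n, ∃ u : M, f n - L = (p : W) ^ n • u := by
  set e := b.equivFun with he
  have key : ∀ i : ι, ∃ Li : W, ∀ n, (p : W) ^ n ∣ e (f n) i - Li := by
    intro i
    apply exists_limit (fun n => e (f n) i)
    intro m n hmn
    obtain ⟨u, hu⟩ := hf m n hmn
    refine ⟨e u i, ?_⟩
    have : e (f n) - e (f m) = (p : W) ^ m • e u := by rw [← map_sub, hu, map_smul]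
    have h2 := congrFun this i
    simpa [smul_eq_mul] using h2
  choose L hL using key
  refine ⟨e.symm L, fun n => ?_⟩
  choose u hu using fun i => hL i n
  refine ⟨e.symm u, ?_⟩
  apply e.injective
  rw [map_sub, map_smul, e.apply_symm_apply, e.apply_symm_apply]
  funext i
  simp only [Pi.sub_apply, Pi.smul_apply, smul_eq_mul]
  exact hu i

theorem solve_core {ι : Type*} [Fintype ι] (b : Module.Basis ι W M)
    (T : M → M) (hTadd : ∀ a c, T (a + c) = T a + T c)
    (hTp : ∀ z, T ((p : W) • z) = (p : W) • T z)
    (x : M) (hconv : ∀ s : ℕ, ∃ m : ℕ, ∀ i, m ≤ i → ∃ u : M, T^[i] x = (p : W) ^ s • u) :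
    ∃ y : M, T y - y = x := by
  obtain ⟨Th, hTh⟩ : ∃ Th : M →+ M, ⇑Th = T := ⟨AddMonoidHom.mk' T hTadd, rfl⟩
  have hTsub : ∀ a c : M, T (a - c) = T a - T c := by
    intro a c; rw [← hTh, map_sub]
  have hTpow : ∀ (s : ℕ) (z : M), T ((p : W) ^ s • z) = (p : W) ^ s • T z := by
    intro s
    induction s with
    | zero => intro z; simp
    | succ s ih =>
      intro z
      rw [pow_succ, mul_smul, ih, hTp, ← mul_smul, ← pow_succ]
  choose m hm using hconv
  set Mf : ℕ → ℕ := fun n => ∑ t ∈ Finset.range (n + 1), m t with hMf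
  have hMfle : ∀ n, m n ≤ Mf n := fun n =>
    Finset.single_le_sum (fun t _ => Nat.zero_le (m t)) (Finset.self_mem_range_succ n)
  have hMfmono : ∀ a c : ℕ, a ≤ c → Mf a ≤ Mf c := fun a c hac =>
    Finset.sum_le_sum_of_subset (Finset.range_subset_range.mpr (by omega))
  set S : ℕ → M := fun n => ∑ i ∈ Finset.range (Mf n), T^[i] x with hS
  set f : ℕ → M := fun n => -S n with hf
  have hcauchy : ∀ a n, a ≤ n → ∃ u : M, f n - f a = (p : W) ^ a • u := by
    intro a n han
    choose U hU using fun i (h : m a ≤ i) => hm a i h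
    have hsum : f n - f a = -∑ i ∈ Finset.Ico (Mf a) (Mf n), T^[i] x := by
      have h1 := Finset.sum_Ico_eq_sub (fun i => T^[i] x) (hMfmono a n han)
      show -S n - -S a = _
      rw [h1, hS]
      abel
    refine ⟨-∑ i ∈ Finset.Ico (Mf a) (Mf n), (if h : m a ≤ i then U i h else 0), ?_⟩
    rw [hsum, smul_neg, Finset.smul_sum]
    congr 1
    refine Finset.sum_congr rfl fun i hi => ?_
    have hma : m a ≤ i := le_trans (hMfle a) (Finset.mem_Ico.mp hi).1
    rw [dif_pos hma]
    exact hU i hma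
  obtain ⟨L, hL⟩ := precomplete_basis b f hcauchy
  refine ⟨L, ?_⟩
  have hz : ∀ n, ∃ u : M, T L - L - x = (p : W) ^ n • u := by
    intro n
    obtain ⟨u, hu⟩ := hL n
    obtain ⟨w, hw⟩ := hm n (Mf n) (hMfle n)
    have hLeq : L = f n - (p : W) ^ n • u := by rw [← hu]; abel
    have hTf : T (f n) - f n = x - T^[Mf n] x := by
      have h1 : T (S n) = ∑ i ∈ Finset.range (Mf n), T^[i + 1] x := by
        rw [hS]
        show T (∑ i ∈ Finset.range (Mf n), T^[i] x) = _
        rw [← hTh, map_sum]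
        exact Finset.sum_congr rfl fun i _ => by
          rw [hTh]; exact (Function.iterate_succ_apply' T i x).symm
      have h2 : ∑ i ∈ Finset.range (Mf n), (T^[i + 1] x - T^[i] x)
          = T^[Mf n] x - T^[0] x := Finset.sum_range_sub (fun i => T^[i] x) (Mf n)
      rw [Finset.sum_sub_distrib] at h2
      have h0 : T^[0] x = x := rfl
      rw [h0] at h2
      have h4 : ∑ i ∈ Finset.range (Mf n), T^[i + 1] x = T^[Mf n] x - x + S n :=
        eq_add_of_sub_eq h2
      have h3 : T (f n) = -T (S n) := by
        show T (-S n) = -T (S n)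
        rw [← hTh, map_neg]
      rw [h3, h1, h4]
      show -(T^[Mf n] x - x + S n) - -S n = x - T^[Mf n] x
      abel
    refine ⟨u - T u - w, ?_⟩
    rw [hLeq, hTsub, hTpow]
    have harr : T (f n) - (p : W) ^ n • T u - (f n - (p : W) ^ n • u) - x
        = T (f n) - f n - x + (p : W) ^ n • u - (p : W) ^ n • T u := by abel
    rw [harr, hTf, hw, smul_sub, smul_sub]
    abel
  exact sub_eq_zero.mp (haus_basis b hz)

/-! ### surjectivity of `σ - 1` on `W(k)` -/

theorem exists_frobenius_sub_one (a : W) :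
    ∃ b : W, WittVector.frobenius b - b = a := by
  have g0 : ∀ x : W, WittVector.ghostComponent 0 x = x.coeff 0 := fun x => by
    rw [WittVector.ghostComponent_apply, wittPolynomial_zero, MvPolynomial.aeval_X]
  have step0 : ∀ c : W, ∃ d : W, (p : W) ∣ c - (WittVector.frobenius d - d) := by
    intro c
    have hp2 : 1 < p := (Fact.out : p.Prime).one_lt
    set q : Polynomial k := Polynomial.X ^ p - (Polynomial.X + Polynomial.C (c.coeff 0))
      with hq
    have hdeg : q.degree = p := by
      rw [hq]
      have hlt : (Polynomial.X + Polynomial.C (c.coeff 0) : Polynomial k).degree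
          < (Polynomial.X ^ p : Polynomial k).degree := by
        rw [Polynomial.degree_X_pow]
        refine lt_of_le_of_lt (le_trans (Polynomial.degree_add_le _ _)
          (max_le_max Polynomial.degree_X_le Polynomial.degree_C_le)) ?_
        simp only [max_eq_left (zero_le_one' (WithBot ℕ))]
        exact_mod_cast hp2
      rw [Polynomial.degree_sub_eq_left_of_degree_lt hlt, Polynomial.degree_X_pow]
    obtain ⟨t, ht⟩ := IsAlgClosed.exists_root q
      (by rw [hdeg]; exact_mod_cast (Fact.out : p.Prime).ne_zero)
    have ht' : t ^ p - t = c.coeff 0 := by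
      have h := ht
      rw [hq] at h
      simp only [Polynomial.IsRoot, Polynomial.eval_sub, Polynomial.eval_add,
        Polynomial.eval_pow, Polynomial.eval_X, Polynomial.eval_C] at h
      linear_combination h
    set d : W := WittVector.mk p (fun i => if i = 0 then t else 0) with hd
    have hd0 : d.coeff 0 = t := by rw [hd, WittVector.coeff_mk]; simp
    refine ⟨d, ?_⟩
    have hdvd : (p : W) ^ 1 ∣ c - (WittVector.frobenius d - d) := by
      apply pow_dvd_of_coeff_eq_zero
      intro i hi
      interval_cases i
      rw [← g0, map_sub, map_sub, g0, g0, g0, WittVector.coeff_frobenius_charP,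
        hd0, ht', sub_self]
    simpa using hdvd
  have step : ∀ (b : W) (n : ℕ), (p : W) ^ n ∣ a - (WittVector.frobenius b - b) →
      ∃ b' : W, ((p : W) ^ (n + 1) ∣ a - (WittVector.frobenius b' - b')) ∧
        (p : W) ^ n ∣ b' - b := by
    intro b n hb
    obtain ⟨c, hc⟩ := hb
    obtain ⟨d, e, he⟩ := step0 c
    refine ⟨b + (p : W) ^ n * d, ⟨e, ?_⟩, ⟨d, by ring⟩⟩
    rw [map_add, map_mul, map_pow, map_natCast]
    linear_combination hc + (p : W) ^ n * he
  let seq : (n : ℕ) → {b : W // (p : W) ^ n ∣ a - (WittVector.frobenius b - b)} := fun n =>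
    Nat.rec ⟨0, by simp⟩
      (fun n ih => ⟨(step ih.1 n ih.2).choose, (step ih.1 n ih.2).choose_spec.1⟩) n
  have hstep : ∀ n, (p : W) ^ n ∣ (seq (n + 1)).1 - (seq n).1 := fun n =>
    (step (seq n).1 n (seq n).2).choose_spec.2
  have hcauchy : ∀ m n, m ≤ n → (p : W) ^ m ∣ (seq n).1 - (seq m).1 := by
    intro m n hmn
    induction n with
    | zero =>
      have : m = 0 := Nat.le_zero.mp hmn
      subst this; simp
    | succ n ih =>
      rcases Nat.lt_or_ge m (n + 1) with h | h
      · have h1 := ih (by omega)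
        have h2 : (p : W) ^ m ∣ (seq (n + 1)).1 - (seq n).1 :=
          dvd_trans (pow_dvd_pow _ (by omega)) (hstep n)
        have := dvd_add h2 h1
        simpa using this
      · have : m = n + 1 := by omega
        subst this; simp
  obtain ⟨L, hL⟩ := exists_limit (fun n => (seq n).1) hcauchy
  refine ⟨L, ?_⟩
  have hz : a - (WittVector.frobenius L - L) = 0 := by
    apply eq_zero_of_forall_pow_dvd
    intro n
    obtain ⟨u, hu⟩ := hL n
    obtain ⟨c, hc⟩ := (seq n).2
    have hsub : WittVector.frobenius (seq n).1 - WittVector.frobenius L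
        = (p : W) ^ n * WittVector.frobenius u := by
      rw [← map_sub, hu, map_mul, map_pow, map_natCast]
    refine ⟨c + WittVector.frobenius u - u, ?_⟩
    linear_combination hc + hsub - hu
  exact (sub_eq_zero.mp hz).symm

/-! ### semilinearity transfer -/

theorem σB_algebraMap (w : W) :
    σB p k (algebraMap W (FractionRing W) w)
      = algebraMap W (FractionRing W) (WittVector.frobenius w) :=
  (IsFractionRing.ringEquivOfRingEquiv_algebraMap (WittVector.frobeniusEquiv p k) w).trans
    (by rw [WittVector.frobeniusEquiv_apply])

section Semilinear

variable {N : Type*} [AddCommGroup N] [Module (FractionRing (WittVector p k)) N]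
  [Module (WittVector p k) N] [IsScalarTower (WittVector p k) (FractionRing (WittVector p k)) N]

theorem semilin {F : N → N}
    (hs : ∀ (a : FractionRing (WittVector p k)) (x : N), F (a • x) = σB p k a • F x)
    (w : W) (z : N) : F (w • z) = WittVector.frobenius w • F z := by
  rw [← IsScalarTower.algebraMap_smul (FractionRing W) w z, hs, σB_algebraMap,
    IsScalarTower.algebraMap_smul]

theorem semilin_p {F : N → N}
    (hs : ∀ (a : FractionRing (WittVector p k)) (x : N), F (a • x) = σB p k a • F x)
    (z : N) : F ((p : W) • z) = (p : W) • F z := by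
  rw [semilin hs, map_natCast]

theorem cast_pow_smul (s : ℕ) (y : N) :
    (((p : ℕ) : FractionRing (WittVector p k)) ^ s) • y = ((p : W) ^ s) • y := by
  rw [← map_natCast (algebraMap W (FractionRing W)) p, ← map_pow,
    IsScalarTower.algebraMap_smul]

theorem solve_plus (F : N → N) (hadd : ∀ a b, F (a + b) = F a + F b)
    (hFp : ∀ z, F ((p : W) • z) = (p : W) • F z)
    (O : Submodule W N) (hfree : Module.Free W O) (hfin : Module.Finite W O)
    (hFO : ∀ x ∈ O, F x ∈ O) (x : N) (hx : x ∈ O)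
    (hconv : ∀ s : ℕ, ∃ m, ∀ i, m ≤ i → ∃ y ∈ O,
      F^[i] x = (((p : ℕ) : FractionRing (WittVector p k)) ^ s) • y) :
    ∃ y ∈ O, F y - y = x := by
  haveI := hfree; haveI := hfin
  let b := Module.Free.chooseBasis W O
  set T : O → O := fun z => ⟨F z, hFO _ z.2⟩ with hT
  have hTadd : ∀ a c : O, T (a + c) = T a + T c := fun a c => Subtype.ext (hadd a c)
  have hTp : ∀ z : O, T ((p : W) • z) = (p : W) • T z := fun z => Subtype.ext (by
    show F (((p : W) • z : O) : N) = ((p : W) • T z : O)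
    rw [SetLike.val_smul, SetLike.val_smul]
    exact hFp z)
  have hiter : ∀ (i : ℕ) (z : O), ((T^[i] z : O) : N) = F^[i] (z : N) := by
    intro i
    induction i with
    | zero => intro z; rfl
    | succ i ih =>
      intro z
      rw [Function.iterate_succ_apply', Function.iterate_succ_apply']
      calc ((T (T^[i] z) : O) : N) = F ((T^[i] z : O) : N) := rfl
        _ = F (F^[i] (z : N)) := by rw [ih z]
  have hconv' : ∀ s : ℕ, ∃ m, ∀ i, m ≤ i →
      ∃ u : O, T^[i] ⟨x, hx⟩ = (p : W) ^ s • u := by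
    intro s
    obtain ⟨m, hm⟩ := hconv s
    refine ⟨m, fun i hi => ?_⟩
    obtain ⟨y, hy, hiy⟩ := hm i hi
    refine ⟨⟨y, hy⟩, Subtype.ext ?_⟩
    rw [SetLike.val_smul, hiter]
    show F^[i] x = (p : W) ^ s • y
    rw [hiy, cast_pow_smul]
  obtain ⟨y, hy⟩ := solve_core b T hTadd hTp ⟨x, hx⟩ hconv'
  refine ⟨y, y.2, ?_⟩
  have h := congrArg (Subtype.val) hy
  simpa using h

theorem solve_zero (F : N → N) (hadd : ∀ a b, F (a + b) = F a + F b)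
    (hs : ∀ (a : FractionRing (WittVector p k)) (x : N), F (a • x) = σB p k a • F x)
    (O : Submodule W N)
    (hb : ∃ (ι : Type) (bb : ι → N), (∀ i, bb i ∈ O) ∧ (∀ i, F (bb i) = bb i) ∧
      LinearIndependent W bb ∧ Submodule.span W (Set.range bb) = O)
    (x : N) (hx : x ∈ O) : ∃ y ∈ O, F y - y = x := by
  obtain ⟨ι, bb, hmem, hfix, -, hspan⟩ := hb
  rw [← hspan] at hx
  obtain ⟨c, hc⟩ := (Finsupp.mem_span_range_iff_exists_finsupp).mp hx
  choose sl hsl using fun a : W => exists_frobenius_sub_one a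
  refine ⟨∑ i ∈ c.support, sl (c i) • bb i, ?_, ?_⟩
  · exact Submodule.sum_mem _ fun i _ => Submodule.smul_mem _ _ (hmem i)
  · obtain ⟨Fh, hFh⟩ : ∃ Fh : N →+ N, ⇑Fh = F := ⟨AddMonoidHom.mk' F hadd, rfl⟩
    have hF : F (∑ i ∈ c.support, sl (c i) • bb i)
        = ∑ i ∈ c.support, WittVector.frobenius (sl (c i)) • bb i := by
      rw [← hFh, map_sum]
      refine Finset.sum_congr rfl fun i _ => ?_
      rw [hFh, semilin hs, hfix]
    rw [hF, ← Finset.sum_sub_distrib]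
    have hterm : ∀ i ∈ c.support,
        WittVector.frobenius (sl (c i)) • bb i - sl (c i) • bb i = c i • bb i :=
      fun i _ => by rw [← sub_smul, hsl]
    rw [Finset.sum_congr rfl hterm]
    simpa [Finsupp.sum] using hc

theorem solve_minus (F : N → N) (G : N → N)
    (hadd : ∀ a b, F (a + b) = F a + F b)
    (hs : ∀ (a : FractionRing (WittVector p k)) (x : N), F (a • x) = σB p k a • F x)
    (hbij : Function.Bijective F)
    (hG : ∀ x, F (G x) = x ∧ G (F x) = x)
    (O : Submodule W N) (hfree : Module.Free W O) (hfin : Module.Finite W O)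
    (hGO : ∀ x ∈ O, G x ∈ O) (x : N) (hx : x ∈ O)
    (hconv : ∀ s : ℕ, ∃ m, ∀ i, m ≤ i → ∃ y ∈ O,
      G^[i] x = (((p : ℕ) : FractionRing (WittVector p k)) ^ s) • y) :
    ∃ y ∈ O, F y - y = x := by
  have hGadd : ∀ a b, G (a + b) = G a + G b := fun a b =>
    hbij.1 (by rw [(hG _).1, hadd, (hG _).1, (hG _).1])
  have hGp : ∀ z, G ((p : W) • z) = (p : W) • G z := fun z =>
    hbij.1 (by rw [(hG _).1, semilin_p hs, (hG _).1])
  obtain ⟨Gh, hGh⟩ : ∃ Gh : N →+ N, ⇑Gh = G := ⟨AddMonoidHom.mk' G hGadd, rfl⟩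
  have hGneg : ∀ z, G (-z) = -G z := fun z => by rw [← hGh, map_neg]
  have hGiter_neg : ∀ (i : ℕ) (z : N), G^[i] (-z) = -(G^[i] z) := by
    intro i
    induction i with
    | zero => intro z; rfl
    | succ i ih =>
      intro z
      rw [Function.iterate_succ_apply, Function.iterate_succ_apply, hGneg, ih]
  have hGx : G x ∈ O := hGO x hx
  have hconv' : ∀ s : ℕ, ∃ m, ∀ i, m ≤ i → ∃ y ∈ O,
      G^[i] (-(G x)) = (((p : ℕ) : FractionRing (WittVector p k)) ^ s) • y := by
    intro s
    obtain ⟨m, hm⟩ := hconv s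
    refine ⟨m, fun i hi => ?_⟩
    obtain ⟨y, hy, hiy⟩ := hm (i + 1) (by omega)
    refine ⟨-y, O.neg_mem hy, ?_⟩
    rw [hGiter_neg, ← Function.iterate_succ_apply, hiy, smul_neg]
  obtain ⟨y, hy, hGy⟩ := solve_plus G hGadd hGp O hfree hfin hGO (-(G x))
    (O.neg_mem hGx) hconv'
  refine ⟨y, hy, ?_⟩
  have h1 : G x = y - G y := by rw [← neg_neg (G x), ← hGy, neg_sub]
  have hFsub : ∀ a b, F (a - b) = F a - F b := by
    obtain ⟨Fh, hFh⟩ : ∃ Fh : N →+ N, ⇑Fh = F := ⟨AddMonoidHom.mk' F hadd, rfl⟩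
    intro a b; rw [← hFh, map_sub]
  calc F y - y = F y - F (G y) := by rw [(hG y).1]
    _ = F (y - G y) := (hFsub _ _).symm
    _ = F (G x) := by rw [← h1]
    _ = x := (hG x).1

end Semilinear

end Aux



/-- for `O = O₊ ⊕ O₀ ⊕ O₋` as described, every `x ∈ O` can be written as
`x = F(y) - y` with `y ∈ O`; two solutions differ by a fixed point of `F` in `O`; and if
`x ∈ p^sO` then a solution can be chosen in `p^sO`. -/
theorem solve_F_minus_id
    (Np N0 Nm : Type*)
    [AddCommGroup Np] [Module (FractionRing (WittVector p k)) Np]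
    [Module (WittVector p k) Np]
    [IsScalarTower (WittVector p k) (FractionRing (WittVector p k)) Np]
    [FiniteDimensional (FractionRing (WittVector p k)) Np]
    [AddCommGroup N0] [Module (FractionRing (WittVector p k)) N0]
    [Module (WittVector p k) N0]
    [IsScalarTower (WittVector p k) (FractionRing (WittVector p k)) N0]
    [FiniteDimensional (FractionRing (WittVector p k)) N0]
    [AddCommGroup Nm] [Module (FractionRing (WittVector p k)) Nm]
    [Module (WittVector p k) Nm]
    [IsScalarTower (WittVector p k) (FractionRing (WittVector p k)) Nm]
    [FiniteDimensional (FractionRing (WittVector p k)) Nm]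
    -- the `σ`-semilinear bijections `F` on `N₊`, `N₀`, `N₋`
    (Fp : Np → Np) (F0 : N0 → N0) (Fm : Nm → Nm)
    (hFpadd : ∀ x y, Fp (x + y) = Fp x + Fp y)
    (hFpsmul : ∀ (a : FractionRing (WittVector p k)) (x : Np), Fp (a • x) = σB p k a • Fp x)
    (hFpbij : Function.Bijective Fp)
    (hF0add : ∀ x y, F0 (x + y) = F0 x + F0 y)
    (hF0smul : ∀ (a : FractionRing (WittVector p k)) (x : N0), F0 (a • x) = σB p k a • F0 x)
    (hF0bij : Function.Bijective F0)
    (hFmadd : ∀ x y, Fm (x + y) = Fm x + Fm y)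
    (hFmsmul : ∀ (a : FractionRing (WittVector p k)) (x : Nm), Fm (a • x) = σB p k a • Fm x)
    (hFmbij : Function.Bijective Fm)
    -- `Gm` is the inverse of `Fm`
    (Gm : Nm → Nm) (hGm : ∀ x, Fm (Gm x) = x ∧ Gm (Fm x) = x)
    -- `O₊`, `O₀`, `O₋` are `W(k)`-lattices
    (Op : Submodule (WittVector p k) Np)
    (hOpfree : Module.Free (WittVector p k) Op) (hOpfin : Module.Finite (WittVector p k) Op)
    (hOpspan : Submodule.span (FractionRing (WittVector p k)) (Op : Set Np) = ⊤)
    (O0 : Submodule (WittVector p k) N0)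
    (hO0free : Module.Free (WittVector p k) O0) (hO0fin : Module.Finite (WittVector p k) O0)
    (hO0span : Submodule.span (FractionRing (WittVector p k)) (O0 : Set N0) = ⊤)
    (Om : Submodule (WittVector p k) Nm)
    (hOmfree : Module.Free (WittVector p k) Om) (hOmfin : Module.Finite (WittVector p k) Om)
    (hOmspan : Submodule.span (FractionRing (WittVector p k)) (Om : Set Nm) = ⊤)
    -- `F(O₊) ⊆ O₊` and the iterates of `F` on `O₊` converge to `0` `p`-adically
    (hFOp : ∀ x ∈ Op, Fp x ∈ Op)
    (hOpconv : ∀ x ∈ Op, ∀ s : ℕ, ∃ m : ℕ, ∀ i : ℕ, m ≤ i →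
      ∃ y ∈ Op, Fp^[i] x = (((p : ℕ) : FractionRing (WittVector p k)) ^ s) • y)
    -- `F⁻¹(O₋) ⊆ O₋` and the iterates of `F⁻¹` on `O₋` converge to `0` `p`-adically
    (hFOm : ∀ x ∈ Om, Gm x ∈ Om)
    (hOmconv : ∀ x ∈ Om, ∀ s : ℕ, ∃ m : ℕ, ∀ i : ℕ, m ≤ i →
      ∃ y ∈ Om, Gm^[i] x = (((p : ℕ) : FractionRing (WittVector p k)) ^ s) • y)
    -- `O₀` has a `W(k)`-basis of vectors fixed by `F`
    (hO0basis : ∃ (ι : Type) (bb : ι → N0), (∀ i, bb i ∈ O0) ∧ (∀ i, F0 (bb i) = bb i) ∧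
      LinearIndependent (WittVector p k) bb ∧
      Submodule.span (WittVector p k) (Set.range bb) = O0) :
    -- with `N = N₊ ⊕ N₀ ⊕ N₋`, `F` diagonal, `O = O₊ ⊕ O₀ ⊕ O₋`:
    ∀ x ∈ Op.prod (O0.prod Om),
      (∃ y ∈ Op.prod (O0.prod Om),
        x = (Fp y.1, F0 y.2.1, Fm y.2.2) - y) ∧
      (∀ y ∈ Op.prod (O0.prod Om), ∀ y' ∈ Op.prod (O0.prod Om),
        x = (Fp y.1, F0 y.2.1, Fm y.2.2) - y →
        x = (Fp y'.1, F0 y'.2.1, Fm y'.2.2) - y' →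
        (y' - y ∈ Op.prod (O0.prod Om) ∧
          (Fp (y' - y).1, F0 (y' - y).2.1, Fm (y' - y).2.2) = y' - y)) ∧
      (∀ s : ℕ, (∃ x' ∈ Op.prod (O0.prod Om),
          x = (((p : ℕ) : FractionRing (WittVector p k)) ^ s) • x') →
        ∃ y' ∈ Op.prod (O0.prod Om),
          x = (let y := (((p : ℕ) : FractionRing (WittVector p k)) ^ s) • y';
            (Fp y.1, F0 y.2.1, Fm y.2.2) - y)) := by
  intro x hx
  rw [Submodule.mem_prod, Submodule.mem_prod] at hx
  obtain ⟨hxp, hx0, hxm⟩ := hx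
  have hFpp : ∀ z : Np, Fp ((p : WittVector p k) • z) = (p : WittVector p k) • Fp z :=
    fun z => semilin_p hFpsmul z
  have sol : ∀ z : Np × N0 × Nm, z.1 ∈ Op → z.2.1 ∈ O0 → z.2.2 ∈ Om →
      ∃ y : Np × N0 × Nm, y ∈ Op.prod (O0.prod Om) ∧
        Fp y.1 - y.1 = z.1 ∧ F0 y.2.1 - y.2.1 = z.2.1 ∧ Fm y.2.2 - y.2.2 = z.2.2 := by
    intro z hzp hz0 hzm
    obtain ⟨yp, hyp, heyp⟩ := solve_plus Fp hFpadd hFpp Op hOpfree hOpfin hFOp z.1 hzp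
      (hOpconv z.1 hzp)
    obtain ⟨y0, hy0, hey0⟩ := solve_zero F0 hF0add hF0smul O0 hO0basis z.2.1 hz0
    obtain ⟨ym, hym, heym⟩ := solve_minus Fm Gm hFmadd hFmsmul hFmbij hGm Om hOmfree hOmfin
      hFOm z.2.2 hzm (hOmconv z.2.2 hzm)
    exact ⟨(yp, y0, ym),
      Submodule.mem_prod.mpr ⟨hyp, Submodule.mem_prod.mpr ⟨hy0, hym⟩⟩, heyp, hey0, heym⟩
  refine ⟨?_, ?_, ?_⟩
  · obtain ⟨y, hy, h1, h2, h3⟩ := sol x hxp hx0 hxm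
    refine ⟨y, hy, ?_⟩
    have hcomp : ((Fp y.1, F0 y.2.1, Fm y.2.2) - y : Np × N0 × Nm)
        = (Fp y.1 - y.1, F0 y.2.1 - y.2.1, Fm y.2.2 - y.2.2) := rfl
    rw [hcomp, h1, h2, h3]
  · intro y hy y' hy' hxy hxy'
    refine ⟨Submodule.sub_mem _ hy' hy, ?_⟩
    have e1 : x.1 = Fp y.1 - y.1 := congrArg Prod.fst hxy
    have e2 : x.2.1 = F0 y.2.1 - y.2.1 := congrArg (fun t : Np × N0 × Nm => t.2.1) hxy
    have e3 : x.2.2 = Fm y.2.2 - y.2.2 := congrArg (fun t : Np × N0 × Nm => t.2.2) hxy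
    have e1' : x.1 = Fp y'.1 - y'.1 := congrArg Prod.fst hxy'
    have e2' : x.2.1 = F0 y'.2.1 - y'.2.1 := congrArg (fun t : Np × N0 × Nm => t.2.1) hxy'
    have e3' : x.2.2 = Fm y'.2.2 - y'.2.2 := congrArg (fun t : Np × N0 × Nm => t.2.2) hxy'
    have subp : ∀ a b : Np, Fp (a - b) = Fp a - Fp b := by
      obtain ⟨Fh, hFh⟩ : ∃ Fh : Np →+ Np, ⇑Fh = Fp := ⟨AddMonoidHom.mk' Fp hFpadd, rfl⟩
      intro a b; rw [← hFh, map_sub]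
    have sub0 : ∀ a b : N0, F0 (a - b) = F0 a - F0 b := by
      obtain ⟨Fh, hFh⟩ : ∃ Fh : N0 →+ N0, ⇑Fh = F0 := ⟨AddMonoidHom.mk' F0 hF0add, rfl⟩
      intro a b; rw [← hFh, map_sub]
    have subm : ∀ a b : Nm, Fm (a - b) = Fm a - Fm b := by
      obtain ⟨Fh, hFh⟩ : ∃ Fh : Nm →+ Nm, ⇑Fh = Fm := ⟨AddMonoidHom.mk' Fm hFmadd, rfl⟩
      intro a b; rw [← hFh, map_sub]
    refine Prod.ext ?_ (Prod.ext ?_ ?_)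
    · show Fp (y'.1 - y.1) = y'.1 - y.1
      rw [subp]
      exact sub_eq_sub_iff_sub_eq_sub.mp (e1'.symm.trans e1)
    · show F0 (y'.2.1 - y.2.1) = y'.2.1 - y.2.1
      rw [sub0]
      exact sub_eq_sub_iff_sub_eq_sub.mp (e2'.symm.trans e2)
    · show Fm (y'.2.2 - y.2.2) = y'.2.2 - y.2.2
      rw [subm]
      exact sub_eq_sub_iff_sub_eq_sub.mp (e3'.symm.trans e3)
  · rintro s ⟨x', hx', hxe⟩
    rw [Submodule.mem_prod, Submodule.mem_prod] at hx'
    obtain ⟨hxp', hx0', hxm'⟩ := hx'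
    obtain ⟨y, hy, h1, h2, h3⟩ := sol x' hxp' hx0' hxm'
    refine ⟨y, hy, ?_⟩
    set c : FractionRing (WittVector p k) := ((p : ℕ) : FractionRing (WittVector p k)) ^ s
      with hcdef
    have hσc : σB p k c = c := by rw [hcdef, map_pow, map_natCast]
    show x = (Fp (c • y).1, F0 (c • y).2.1, Fm (c • y).2.2) - c • y
    refine Prod.ext ?_ (Prod.ext ?_ ?_)
    · show x.1 = Fp (c • y.1) - c • y.1
      rw [hFpsmul, hσc, ← smul_sub, h1]
      exact congrArg Prod.fst hxe
    · show x.2.1 = F0 (c • y.2.1) - c • y.2.1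
      rw [hF0smul, hσc, ← smul_sub, h2]
      exact congrArg (fun t : Np × N0 × Nm => t.2.1) hxe
    · show x.2.2 = Fm (c • y.2.2) - c • y.2.2
      rw [hFmsmul, hσc, ← smul_sub, h3]
      exact congrArg (fun t : Np × N0 × Nm => t.2.2) hxe

end DieudonneStmt
end
end

section
/- Let M be a non-zero bi-nilpotent Dieudonné module over k which is generated by an element z ∈ M, with d = dim_k(M/FM) and c = dim_k(M/VM), and suppose that F^c z + V^d z = 0. Then F^{c+d}M = p^d M; indeed F^{c+d}(b) = −p^d·b for every element b of the W-basis of M formed by F^iz (1 ≤ i ≤ c) and V^iz (0 ≤ i ≤ d−1). -/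
noncomputable section

namespace DieudonneStmt

variable (p : ℕ) [Fact p.Prime] (k : Type*) [Field k] [IsAlgClosed k] [CharP k p]
variable (M : Type*) [AddCommGroup M] [Module (WittVector p k) M]

/-- Let `M` be a non-zero bi-nilpotent Dieudonné module over `k` generated by
`z ∈ M`, with `d = dim_k (M/FM)` and `c = dim_k (M/VM)`, and suppose `F^c z + V^d z = 0`.
Then `F^{c+d}M = p^d M`; indeed `F^{c+d}(b) = -p^d·b` for every element `b` of the `W`-basis
of `M` formed by `F^i z` (`1 ≤ i ≤ c`) and `V^i z` (`0 ≤ i ≤ d-1`). -/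
theorem F_pow_h_eq_p_pow_d
    -- `M` is a free `W(k)`-module of finite rank, non-zero
    [Module.Free (WittVector p k) M] [Module.Finite (WittVector p k) M] [Nontrivial M]
    -- `F` is `σ`-semilinear, `V` is `σ⁻¹`-semilinear, and `F ∘ V = V ∘ F = p·id`
    (F V : M → M)
    (hFadd : ∀ x y, F (x + y) = F x + F y)
    (hVadd : ∀ x y, V (x + y) = V x + V y)
    (hFsmul : ∀ (a : WittVector p k) (x : M), F (a • x) = WittVector.frobeniusEquiv p k a • F x)
    (hVsmul : ∀ (a : WittVector p k) (x : M),
      V (a • x) = (WittVector.frobeniusEquiv p k).symm a • V x)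
    (hFV : ∀ x, F (V x) = (p : WittVector p k) • x)
    (hVF : ∀ x, V (F x) = (p : WittVector p k) • x)
    -- `M` is bi-nilpotent: `F` and `V` are nilpotent on `M/pM`
    (hFnil : ∃ n : ℕ, ∀ x : M, ∃ y : M, F^[n] x = (p : WittVector p k) • y)
    (hVnil : ∃ n : ℕ, ∀ x : M, ∃ y : M, V^[n] x = (p : WittVector p k) • y)
    -- `z` generates `M`: the only `W(k)`-submodule containing `z` stable under `F` and `V` is `M`
    (z : M)
    (hz : ∀ P : Submodule (WittVector p k) M,
      z ∈ P → (∀ x ∈ P, F x ∈ P) → (∀ x ∈ P, V x ∈ P) → P = ⊤)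
    -- `d = dim_k (M/FM)`: `d` is the least number of elements generating `M` over `FM`
    (c d : ℕ)
    (hd : IsLeast {n : ℕ | ∃ x : Fin n → M,
      Submodule.span (WittVector p k) (Set.range F) ⊔
        Submodule.span (WittVector p k) (Set.range x) = ⊤} d)
    -- `c = dim_k (M/VM)`
    (hc : IsLeast {n : ℕ | ∃ x : Fin n → M,
      Submodule.span (WittVector p k) (Set.range V) ⊔
        Submodule.span (WittVector p k) (Set.range x) = ⊤} c)
    -- the relation `F^c z + V^d z = 0`
    (hrel : F^[c] z + V^[d] z = 0) :
    Submodule.span (WittVector p k) (Set.range (F^[c + d])) =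
      Submodule.span (WittVector p k) (Set.range (fun x : M => ((p : WittVector p k) ^ d) • x)) ∧
    (∀ i : Fin c, F^[c + d] (F^[(i : ℕ) + 1] z) = -(((p : WittVector p k) ^ d) • F^[(i : ℕ) + 1] z)) ∧
    (∀ i : Fin d, F^[c + d] (V^[(i : ℕ)] z) = -(((p : WittVector p k) ^ d) • V^[(i : ℕ)] z)) := by
  classical
  -- basic additive facts
  have hF0 : F 0 = 0 := by
    have h := hFadd 0 0
    rw [add_zero] at h
    exact (left_eq_add.mp h)
  have hV0 : V 0 = 0 := by
    have h := hVadd 0 0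
    rw [add_zero] at h
    exact (left_eq_add.mp h)
  -- single-step smul facts
  have hFp : ∀ x : M, F ((p : WittVector p k) • x) = (p : WittVector p k) • F x := by
    intro x; rw [hFsmul, map_natCast]
  have hVp : ∀ x : M, V ((p : WittVector p k) • x) = (p : WittVector p k) • V x := by
    intro x; rw [hVsmul, map_natCast]
  have hFpow1 : ∀ (e : ℕ) (x : M),
      F (((p : WittVector p k) ^ e) • x) = ((p : WittVector p k) ^ e) • F x := by
    intro e x; rw [hFsmul, map_pow, map_natCast]
  have hVpow1 : ∀ (e : ℕ) (x : M),
      V (((p : WittVector p k) ^ e) • x) = ((p : WittVector p k) ^ e) • V x := by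
    intro e x; rw [hVsmul, map_pow, map_natCast]
  -- iterate facts for F
  have hFit_add : ∀ (n : ℕ) (x y : M), F^[n] (x + y) = F^[n] x + F^[n] y := by
    intro n
    induction n with
    | zero => intro x y; simp
    | succ n ih =>
      intro x y
      rw [Function.iterate_succ_apply, Function.iterate_succ_apply F n x,
        Function.iterate_succ_apply F n y, hFadd, ih]
  have hFit0 : ∀ n : ℕ, F^[n] (0 : M) = 0 := fun n => Function.iterate_fixed hF0 n
  have hFitneg : ∀ (n : ℕ) (x : M), F^[n] (-x) = -F^[n] x := by
    intro n x
    have h := hFit_add n x (-x)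
    rw [add_neg_cancel, hFit0] at h
    exact (neg_eq_of_add_eq_zero_right h.symm).symm
  have hFit_p : ∀ (n : ℕ) (x : M),
      F^[n] ((p : WittVector p k) • x) = (p : WittVector p k) • F^[n] x := by
    intro n
    induction n with
    | zero => intro x; simp
    | succ n ih => intro x; rw [Function.iterate_succ_apply, hFp, ih,
        Function.iterate_succ_apply]
  have hFit_pow : ∀ (n e : ℕ) (x : M),
      F^[n] (((p : WittVector p k) ^ e) • x) = ((p : WittVector p k) ^ e) • F^[n] x := by
    intro n
    induction n with
    | zero => intro e x; simp
    | succ n ih => intro e x; rw [Function.iterate_succ_apply, hFpow1, ih,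
        Function.iterate_succ_apply]
  have hFit_smul : ∀ (n : ℕ) (a : WittVector p k) (x : M),
      ∃ b : WittVector p k, F^[n] (a • x) = b • F^[n] x := by
    intro n
    induction n with
    | zero => intro a x; exact ⟨a, rfl⟩
    | succ n ih =>
      intro a x
      obtain ⟨b, hb⟩ := ih (WittVector.frobeniusEquiv p k a) (F x)
      refine ⟨b, ?_⟩
      rw [Function.iterate_succ_apply, hFsmul, hb, Function.iterate_succ_apply]
  -- iterate facts for V
  have hVit_add : ∀ (n : ℕ) (x y : M), V^[n] (x + y) = V^[n] x + V^[n] y := by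
    intro n
    induction n with
    | zero => intro x y; simp
    | succ n ih =>
      intro x y
      rw [Function.iterate_succ_apply, Function.iterate_succ_apply V n x,
        Function.iterate_succ_apply V n y, hVadd, ih]
  have hVit0 : ∀ n : ℕ, V^[n] (0 : M) = 0 := fun n => Function.iterate_fixed hV0 n
  have hVit_p : ∀ (n : ℕ) (x : M),
      V^[n] ((p : WittVector p k) • x) = (p : WittVector p k) • V^[n] x := by
    intro n
    induction n with
    | zero => intro x; simp
    | succ n ih => intro x; rw [Function.iterate_succ_apply, hVp, ih,
        Function.iterate_succ_apply]
  have hVit_smul : ∀ (n : ℕ) (a : WittVector p k) (x : M),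
      ∃ b : WittVector p k, V^[n] (a • x) = b • V^[n] x := by
    intro n
    induction n with
    | zero => intro a x; exact ⟨a, rfl⟩
    | succ n ih =>
      intro a x
      obtain ⟨b, hb⟩ := ih ((WittVector.frobeniusEquiv p k).symm a) (V x)
      refine ⟨b, ?_⟩
      rw [Function.iterate_succ_apply, hVsmul, hb, Function.iterate_succ_apply]
  -- F^[n] (V^[n] x) = p^n • x
  have hFitVit : ∀ (n : ℕ) (x : M), F^[n] (V^[n] x) = ((p : WittVector p k) ^ n) • x := by
    intro n
    induction n with
    | zero => intro x; simp
    | succ n ih =>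
      intro x
      rw [Function.iterate_succ_apply' V n x, Function.iterate_succ_apply F n, hFV,
        hFit_p, ih, smul_smul, ← pow_succ']
  -- commuting F with its own iterates
  have hFcomm : ∀ (n : ℕ) (x : M), F (F^[n] x) = F^[n] (F x) := by
    intro n x
    rw [← Function.iterate_succ_apply' F n x, Function.iterate_succ_apply]
  -- the relation
  have hFcz : F^[c] z = -V^[d] z := by
    have h := hrel
    exact eq_neg_of_add_eq_zero_left h
  -- key formula on F-iterates of z
  have keyF : ∀ i : ℕ, F^[c + d] (F^[i] z) = -(((p : WittVector p k) ^ d) • F^[i] z) := by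
    intro i
    have h1 : (c + d) + i = (i + d) + c := by omega
    rw [← Function.iterate_add_apply, h1, Function.iterate_add_apply, hFcz, hFitneg,
      Function.iterate_add_apply, hFitVit, hFit_pow]
  -- key formula on V-iterates of z, for i ≤ d
  have keyV : ∀ i : ℕ, i ≤ d → F^[c + d] (V^[i] z) = -(((p : WittVector p k) ^ d) • V^[i] z) := by
    intro i hi
    obtain ⟨j, hj⟩ : ∃ j, d = j + i := ⟨d - i, by omega⟩
    have h1 : c + d = (c + j) + i := by omega
    rw [h1, Function.iterate_add_apply, hFitVit, hFit_pow]
    have h2 : c + j = j + c := by omega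
    rw [h2, Function.iterate_add_apply, hFcz, hFitneg, hj, Function.iterate_add_apply,
      hFitVit, smul_neg, smul_smul, ← pow_add]
    have h3 : i + j = d := by omega
    have h4 : j + i = d := by omega
    rw [h3, h4]
  -- key formula on V-iterates of z beyond d
  have keyV' : ∀ j : ℕ, F^[c + d] (V^[d + j] z) =
      ((p : WittVector p k) ^ d) • F^[c] (V^[j] z) := by
    intro j
    rw [Function.iterate_add_apply F c d, Function.iterate_add_apply V d j, hFitVit, hFit_pow]
  refine ⟨?_, fun i => keyF ((i : ℕ) + 1), fun i => keyV (i : ℕ) (le_of_lt i.isLt)⟩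
  -- now the submodule equality
  rcases Nat.eq_zero_or_pos (c + d) with hcd | hcd
  · -- degenerate case c = d = 0
    have hc0 : c = 0 := by omega
    have hd0 : d = 0 := by omega
    subst hc0; subst hd0
    simp
  · -- main case
    have hFS1 : ∀ y ∈ Submodule.span (WittVector p k) (Set.range (F^[c + d])),
        F y ∈ Submodule.span (WittVector p k) (Set.range (F^[c + d])) := by
      intro y hy
      induction hy using Submodule.span_induction with
      | mem w hw =>
        obtain ⟨u, rfl⟩ := hw
        exact Submodule.subset_span ⟨F u, (hFcomm (c + d) u).symm⟩
      | zero => rw [hF0]; exact Submodule.zero_mem _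
      | add a b _ _ ha hb => rw [hFadd]; exact Submodule.add_mem _ ha hb
      | smul a x _ hx => rw [hFsmul]; exact Submodule.smul_mem _ _ hx
    have hgen : ∀ u : M, V (F^[c + d] u) = F^[c + d] (V u) := by
      intro u
      obtain ⟨e, he⟩ : ∃ e, c + d = e + 1 := ⟨c + d - 1, by omega⟩
      rw [he, Function.iterate_succ_apply' F e, hVF, Function.iterate_succ_apply F e (V u), hFV, hFit_p]
    have hVS1 : ∀ y ∈ Submodule.span (WittVector p k) (Set.range (F^[c + d])),
        V y ∈ Submodule.span (WittVector p k) (Set.range (F^[c + d])) := by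
      intro y hy
      induction hy using Submodule.span_induction with
      | mem w hw =>
        obtain ⟨u, rfl⟩ := hw
        rw [hgen]
        exact Submodule.subset_span ⟨V u, rfl⟩
      | zero => rw [hV0]; exact Submodule.zero_mem _
      | add a b _ _ ha hb => rw [hVadd]; exact Submodule.add_mem _ ha hb
      | smul a x _ hx => rw [hVsmul]; exact Submodule.smul_mem _ _ hx
    have hFS2 : ∀ y ∈ Submodule.span (WittVector p k)
          (Set.range (fun x : M => ((p : WittVector p k) ^ d) • x)),
        F y ∈ Submodule.span (WittVector p k)
          (Set.range (fun x : M => ((p : WittVector p k) ^ d) • x)) := by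
      intro y hy
      induction hy using Submodule.span_induction with
      | mem w hw =>
        obtain ⟨u, rfl⟩ := hw
        rw [hFpow1]
        exact Submodule.subset_span ⟨F u, rfl⟩
      | zero => rw [hF0]; exact Submodule.zero_mem _
      | add a b _ _ ha hb => rw [hFadd]; exact Submodule.add_mem _ ha hb
      | smul a x _ hx => rw [hFsmul]; exact Submodule.smul_mem _ _ hx
    apply le_antisymm
    · -- span range F^[c+d] ≤ span range (p^d • ·)
      set S2 := Submodule.span (WittVector p k)
        (Set.range (fun x : M => ((p : WittVector p k) ^ d) • x)) with hS2def
      -- the submodule of x with F^[c+d] (V^[n] x) ∈ S2 for all n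
      let N2 : Submodule (WittVector p k) M :=
        { carrier := {x : M | ∀ n : ℕ, F^[c + d] (V^[n] x) ∈ S2}
          zero_mem' := by
            intro n
            rw [hVit0, hFit0]
            exact Submodule.zero_mem _
          add_mem' := by
            intro a b ha hb n
            rw [hVit_add, hFit_add]
            exact Submodule.add_mem _ (ha n) (hb n)
          smul_mem' := by
            intro a x hx n
            obtain ⟨b1, hb1⟩ := hVit_smul n a x
            obtain ⟨b2, hb2⟩ := hFit_smul (c + d) b1 (V^[n] x)
            rw [hb1, hb2]
            exact Submodule.smul_mem _ _ (hx n) }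
      have hN2top : N2 = ⊤ := by
        apply hz
        · -- z ∈ N2
          intro n
          rcases le_or_gt n d with h | h
          · rw [keyV n h]
            exact Submodule.neg_mem _ (Submodule.subset_span ⟨V^[n] z, rfl⟩)
          · obtain ⟨j, rfl⟩ : ∃ j, n = d + j := ⟨n - d, by omega⟩
            rw [keyV' j]
            exact Submodule.subset_span ⟨F^[c] (V^[j] z), rfl⟩
        · -- F-stability
          intro x hx n
          cases n with
          | zero =>
            show F^[c + d] (V^[0] (F x)) ∈ S2
            rw [Function.iterate_zero_apply, ← hFcomm]
            refine hFS2 _ ?_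
            have h0 := hx 0
            rwa [Function.iterate_zero_apply] at h0
          | succ m =>
            show F^[c + d] (V^[m + 1] (F x)) ∈ S2
            rw [Function.iterate_succ_apply, hVF, hVit_p, hFit_p]
            exact Submodule.smul_mem _ _ (hx m)
        · -- V-stability
          intro x hx n
          show F^[c + d] (V^[n] (V x)) ∈ S2
          rw [← Function.iterate_succ_apply]
          exact hx (n + 1)
      apply Submodule.span_le.mpr
      rintro _ ⟨x, rfl⟩
      have hxN2 : x ∈ N2 := hN2top ▸ Submodule.mem_top
      have h0 : ∀ n : ℕ, F^[c + d] (V^[n] x) ∈ S2 := hxN2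
      have h1 := h0 0
      rwa [Function.iterate_zero_apply] at h1
    · -- span range (p^d • ·) ≤ span range F^[c+d]
      set S1 := Submodule.span (WittVector p k) (Set.range (F^[c + d])) with hS1def
      let N : Submodule (WittVector p k) M :=
        Submodule.comap (((p : WittVector p k) ^ d) • (LinearMap.id : M →ₗ[WittVector p k] M)) S1
      have hNmem : ∀ x : M, x ∈ N ↔ ((p : WittVector p k) ^ d) • x ∈ S1 := by
        intro x
        simp [N, Submodule.mem_comap]
      have hNtop : N = ⊤ := by
        apply hz
        · -- z ∈ N
          rw [hNmem]
          have h0 : F^[c + d] z = -(((p : WittVector p k) ^ d) • z) := by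
            have h := keyV 0 (Nat.zero_le d)
            rwa [Function.iterate_zero_apply] at h
          have h1 : ((p : WittVector p k) ^ d) • z = -(F^[c + d] z) := by
            rw [h0, neg_neg]
          rw [h1]
          exact Submodule.neg_mem _ (Submodule.subset_span ⟨z, rfl⟩)
        · intro x hx
          rw [hNmem] at hx ⊢
          rw [← hFpow1]
          exact hFS1 _ hx
        · intro x hx
          rw [hNmem] at hx ⊢
          rw [← hVpow1]
          exact hVS1 _ hx
      apply Submodule.span_le.mpr
      rintro _ ⟨x, rfl⟩
      have hxN : x ∈ N := hNtop ▸ Submodule.mem_top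
      exact (hNmem x).mp hxN

end DieudonneStmt
end
end
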